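/- arXiv:2007.07548 — 7 statements merged into one kernel-verified Lean document; each statement's English description precedes it below -/
import Mathlib

section
/- Let 0 < α < 2. Then the Cesàro operator is bounded from the Dirichlet-type space D_α into itself; more precisely, for every sequence (a_n)_{n≥0} of complex numbers with ∑_{n≥0} (n+1)^{1-α} |a_n|² < ∞, one has (∑_{n≥0} (n+1)^{1-α} |(1/(n+1)) ∑_{k=0}^{n} a_k|²)^{1/2} ≤ (√(2(2+α))/α) · (∑_{n≥0} (n+1)^{1-α} |a_n|²)^{1/2}. -/
/-- Bernoulli step for the row sums: for `0 < p ≤ 1` and `0 < N`,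
`N^p + p*(N+1)^(p-1) ≤ (N+1)^p`. -/
lemma cesaro_aux_row_step {p N : ℝ} (hp0 : 0 < p) (hp1 : p ≤ 1) (hN : 0 < N) :
    N ^ p + p * (N + 1) ^ (p - 1) ≤ (N + 1) ^ p := by
  have hN1 : (0 : ℝ) < N + 1 := by linarith
  have hs : (-1 : ℝ) ≤ -(1 / (N + 1)) := by
    rw [neg_le_neg_iff]
    rw [div_le_one hN1]; linarith
  have h := rpow_one_add_le_one_add_mul_self hs hp0.le hp1
  have e1 : (1 : ℝ) + -(1 / (N + 1)) = N / (N + 1) := by field_simp; ring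
  rw [e1] at h
  have e2 : (N / (N + 1)) ^ p = N ^ p / (N + 1) ^ p := Real.div_rpow hN.le hN1.le p
  rw [e2] at h
  have hY : (0 : ℝ) < (N + 1) ^ p := Real.rpow_pos_of_pos hN1 p
  have h2 := mul_le_mul_of_nonneg_right h hY.le
  rw [div_mul_cancel₀ _ hY.ne'] at h2
  have e3 : (N + 1) ^ (p - 1) = (N + 1) ^ p / (N + 1) := by
    rw [Real.rpow_sub hN1, Real.rpow_one]
  rw [e3]
  have : (1 + p * -(1 / (N + 1))) * (N + 1) ^ p
      = (N + 1) ^ p - p * ((N + 1) ^ p / (N + 1)) := by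
    field_simp
    ring
  rw [this] at h2
  linarith

/-- Row sum estimate: for `0 < p ≤ 1`, `∑_{k=0}^{n} (k+1)^(p-1) ≤ (n+1)^p / p`. -/
lemma cesaro_aux_row_sum {p : ℝ} (hp0 : 0 < p) (hp1 : p ≤ 1) (n : ℕ) :
    ∑ k ∈ Finset.range (n + 1), ((k : ℝ) + 1) ^ (p - 1) ≤ ((n : ℝ) + 1) ^ p / p := by
  induction n with
  | zero =>
    simp only [Finset.sum_range_one, Nat.cast_zero, zero_add, Real.one_rpow]
    rw [le_div_iff₀ hp0, one_mul]; exact hp1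
  | succ n ih =>
    rw [Finset.sum_range_succ]
    have hN : (0 : ℝ) < (n : ℝ) + 1 := by positivity
    have key := cesaro_aux_row_step hp0 hp1 hN
    have e : ((n + 1 : ℕ) : ℝ) + 1 = ((n : ℝ) + 1) + 1 := by push_cast; ring
    rw [e]
    have h1 : (∑ k ∈ Finset.range (n + 1), ((k : ℝ) + 1) ^ (p - 1)) * p ≤ ((n : ℝ) + 1) ^ p := by
      rw [← le_div_iff₀ hp0]; exact ih
    rw [le_div_iff₀ hp0]
    nlinarith [key, h1]

/-- Bernoulli step for the column sums: for `1 ≤ t` and `0 < b`,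
`(b+t) * b^t ≤ b * (b+1)^t`. -/
lemma cesaro_aux_col_key {t b : ℝ} (ht : 1 ≤ t) (hb : 0 < b) :
    (b + t) * b ^ t ≤ b * (b + 1) ^ t := by
  have hs : (-1 : ℝ) ≤ 1 / b := by
    have : (0 : ℝ) ≤ 1 / b := by positivity
    linarith
  have h := one_add_mul_self_le_rpow_one_add hs ht
  have e1 : (1 : ℝ) + 1 / b = (b + 1) / b := by field_simp
  rw [e1] at h
  have hb1 : (0 : ℝ) < b + 1 := by linarith
  rw [Real.div_rpow hb1.le hb.le] at h
  have hX : (0 : ℝ) < b ^ t := Real.rpow_pos_of_pos hb t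
  have h2 := mul_le_mul_of_nonneg_right h (mul_nonneg hX.le hb.le)
  have e2 : (b + 1) ^ t / b ^ t * (b ^ t * b) = b * (b + 1) ^ t := by
    field_simp
  have e3 : (1 + t * (1 / b)) * (b ^ t * b) = (b + t) * b ^ t := by
    field_simp
  rw [e2, e3] at h2
  exact h2

/-- Column telescoping step: for `1 < t` and `1 ≤ b`,
`(t-1) * (b+1)^(-t) ≤ b^(1-t) - (b+1)^(1-t)`. -/
lemma cesaro_aux_col_step {t b : ℝ} (ht : 1 < t) (hb : 1 ≤ b) :
    (t - 1) * (b + 1) ^ (-t) ≤ b ^ (1 - t) - (b + 1) ^ (1 - t) := by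
  have hb0 : (0 : ℝ) < b := by linarith
  have hb1 : (0 : ℝ) < b + 1 := by linarith
  have hX : (0 : ℝ) < b ^ t := Real.rpow_pos_of_pos hb0 t
  have hY : (0 : ℝ) < (b + 1) ^ t := Real.rpow_pos_of_pos hb1 t
  have key := cesaro_aux_col_key ht.le hb0
  have e1 : b ^ (1 - t) = b / b ^ t := by
    rw [Real.rpow_sub hb0, Real.rpow_one]
  have e2 : (b + 1) ^ (1 - t) = (b + 1) / (b + 1) ^ t := by
    rw [Real.rpow_sub hb1, Real.rpow_one]
  have e3 : (b + 1) ^ (-t) = 1 / (b + 1) ^ t := by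
    rw [Real.rpow_neg hb1.le, one_div]
  rw [e1, e2, e3]
  have h2 : (b + t) / (b + 1) ^ t ≤ b / b ^ t := by
    rw [div_le_div_iff₀ hY hX]
    nlinarith [key]
  have h3 : (t - 1) * (1 / (b + 1) ^ t) = (b + t) / (b + 1) ^ t - (b + 1) / (b + 1) ^ t := by
    ring
  linarith

/-- Column tail estimate with telescoping. -/
lemma cesaro_aux_col_tail {t : ℝ} (ht : 1 < t) (k : ℕ) (j : ℕ) :
    ∑ n ∈ Finset.Ico (k + 1) (k + 1 + j), ((n : ℝ) + 1) ^ (-t)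
      ≤ (((k : ℝ) + 1) ^ (1 - t) - ((k : ℝ) + 1 + (j : ℝ)) ^ (1 - t)) / (t - 1) := by
  have ht0 : (0 : ℝ) < t - 1 := by linarith
  induction j with
  | zero => simp
  | succ j ih =>
    have hstep : k + 1 + (j + 1) = (k + 1 + j) + 1 := by omega
    rw [hstep, Finset.sum_Ico_succ_top (Nat.le_add_right (k + 1) j)]
    have hb : (1 : ℝ) ≤ (k : ℝ) + 1 + (j : ℝ) := by
      have : (0:ℝ) ≤ (k:ℝ) := Nat.cast_nonneg k
      have : (0:ℝ) ≤ (j:ℝ) := Nat.cast_nonneg j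
      linarith
    have key := cesaro_aux_col_step ht hb
    have ecast : ((k + 1 + j : ℕ) : ℝ) + 1 = ((k : ℝ) + 1 + (j : ℝ)) + 1 := by
      push_cast; ring
    rw [ecast]
    have hterm : (((k : ℝ) + 1 + (j : ℝ)) + 1) ^ (-t)
        ≤ (((k : ℝ) + 1 + (j : ℝ)) ^ (1 - t) - (((k : ℝ) + 1 + (j : ℝ)) + 1) ^ (1 - t)) / (t - 1) := by
      rw [le_div_iff₀ ht0]
      calc (((k : ℝ) + 1 + (j : ℝ)) + 1) ^ (-t) * (t - 1)
          = (t - 1) * (((k : ℝ) + 1 + (j : ℝ)) + 1) ^ (-t) := by ring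
        _ ≤ _ := key
    have ecast2 : ((k : ℝ) + 1 + ((j : ℕ) + 1 : ℕ)) = ((k : ℝ) + 1 + (j : ℝ)) + 1 := by
      push_cast; ring
    calc ∑ n ∈ Finset.Ico (k + 1) (k + 1 + j), ((n : ℝ) + 1) ^ (-t)
          + (((k : ℝ) + 1 + (j : ℝ)) + 1) ^ (-t)
        ≤ (((k : ℝ) + 1) ^ (1 - t) - ((k : ℝ) + 1 + (j : ℝ)) ^ (1 - t)) / (t - 1)
          + (((k : ℝ) + 1 + (j : ℝ)) ^ (1 - t) - (((k : ℝ) + 1 + (j : ℝ)) + 1) ^ (1 - t)) / (t - 1) := by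
          exact add_le_add ih hterm
      _ = (((k : ℝ) + 1) ^ (1 - t) - (((k : ℝ) + 1 + (j : ℝ)) + 1) ^ (1 - t)) / (t - 1) := by
          ring
      _ = (((k : ℝ) + 1) ^ (1 - t) - ((k : ℝ) + 1 + ((j + 1 : ℕ) : ℝ)) ^ (1 - t)) / (t - 1) := by
          rw [ecast2]
  -- end

/-- Column sum estimate: for `1 < t`,
`∑_{n=k}^{N-1} (n+1)^(-t) ≤ (t/(t-1)) * (k+1)^(1-t)`. -/
lemma cesaro_aux_col_sum {t : ℝ} (ht : 1 < t) (k N : ℕ) :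
    ∑ n ∈ Finset.Ico k N, ((n : ℝ) + 1) ^ (-t)
      ≤ (t / (t - 1)) * ((k : ℝ) + 1) ^ (1 - t) := by
  have ht0 : (0 : ℝ) < t - 1 := by linarith
  have hk1 : (1 : ℝ) ≤ (k : ℝ) + 1 := by
    have : (0:ℝ) ≤ (k:ℝ) := Nat.cast_nonneg k
    linarith
  have hk0 : (0 : ℝ) < (k : ℝ) + 1 := by linarith
  rcases le_or_gt N k with hNk | hkN
  · rw [Finset.Ico_eq_empty (by omega)]
    simp only [Finset.sum_empty]
    positivity
  · rw [Finset.sum_eq_sum_Ico_succ_bot hkN]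
    have htail : ∑ n ∈ Finset.Ico (k + 1) N, ((n : ℝ) + 1) ^ (-t)
        ≤ ((k : ℝ) + 1) ^ (1 - t) / (t - 1) := by
      have hsub : Finset.Ico (k + 1) N ⊆ Finset.Ico (k + 1) (k + 1 + N) := by
        apply Finset.Ico_subset_Ico le_rfl; omega
      have h1 : ∑ n ∈ Finset.Ico (k + 1) N, ((n : ℝ) + 1) ^ (-t)
          ≤ ∑ n ∈ Finset.Ico (k + 1) (k + 1 + N), ((n : ℝ) + 1) ^ (-t) := by
        apply Finset.sum_le_sum_of_subset_of_nonneg hsub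
        intro i _ _; positivity
      have h2 := cesaro_aux_col_tail ht k N
      have hBnn : (0:ℝ) ≤ ((k : ℝ) + 1 + (N : ℝ)) ^ (1 - t) := by positivity
      have h3 : (((k : ℝ) + 1) ^ (1 - t) - ((k : ℝ) + 1 + (N : ℝ)) ^ (1 - t)) / (t - 1)
          ≤ ((k : ℝ) + 1) ^ (1 - t) / (t - 1) := by
        gcongr
        linarith
      linarith
    have hhead : ((k : ℝ) + 1) ^ (-t) ≤ ((k : ℝ) + 1) ^ (1 - t) :=
      Real.rpow_le_rpow_of_exponent_le hk1 (by linarith)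
    have hfinal : ((k : ℝ) + 1) ^ (1 - t) + ((k : ℝ) + 1) ^ (1 - t) / (t - 1)
        = (t / (t - 1)) * ((k : ℝ) + 1) ^ (1 - t) := by
      field_simp; ring
    linarith

/-- For `0 < α < 2`, the Cesàro operator is bounded from the Dirichlet-type space
`D_α` into itself, with norm at most `√(2(2+α))/α`. -/
theorem cesaro_bounded_on_dirichlet_type (α : ℝ) (hα0 : 0 < α) (hα2 : α < 2)
    (a : ℕ → ℂ)
    (ha : Summable fun n : ℕ => ((n : ℝ) + 1) ^ (1 - α) * ‖a n‖ ^ 2) :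
    Summable (fun n : ℕ => ((n : ℝ) + 1) ^ (1 - α) *
      ‖(1 / ((n : ℂ) + 1)) * ∑ k ∈ Finset.range (n + 1), a k‖ ^ 2) ∧
    (∑' n : ℕ, ((n : ℝ) + 1) ^ (1 - α) *
        ‖(1 / ((n : ℂ) + 1)) * ∑ k ∈ Finset.range (n + 1), a k‖ ^ 2) ^ ((1 : ℝ) / 2) ≤
      (Real.sqrt (2 * (2 + α)) / α) *
        (∑' n : ℕ, ((n : ℝ) + 1) ^ (1 - α) * ‖a n‖ ^ 2) ^ ((1 : ℝ) / 2) := by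
  set p : ℝ := α / 2 with hp_def
  have hp0 : 0 < p := by positivity
  have hp1 : p ≤ 1 := by rw [hp_def]; linarith
  set c : ℕ → ℝ := fun n => ((n : ℝ) + 1) ^ (1 - α) *
      ‖(1 / ((n : ℂ) + 1)) * ∑ k ∈ Finset.range (n + 1), a k‖ ^ 2 with hc_def
  have hc_nonneg : ∀ n, 0 ≤ c n := by
    intro n; rw [hc_def]; positivity
  set T : ℝ := ∑' n : ℕ, ((n : ℝ) + 1) ^ (1 - α) * ‖a n‖ ^ 2 with hT_def
  have hT_nonneg : 0 ≤ T := tsum_nonneg (fun n => by positivity)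
  set C : ℝ := 2 * (2 + α) / α ^ 2 with hC_def
  have hC_nonneg : 0 ≤ C := by positivity
  -- Pointwise bound for each n
  have hpoint : ∀ n : ℕ, c n ≤ (1 / p) * ((n : ℝ) + 1) ^ (-(1 + p)) *
      ∑ k ∈ Finset.range (n + 1), ((k : ℝ) + 1) ^ (1 - p) * ‖a k‖ ^ 2 := by
    intro n
    have hx : (0 : ℝ) < (n : ℝ) + 1 := by positivity
    -- compute the norm of the Cesàro coefficient
    have hnorm : ‖(1 / ((n : ℂ) + 1)) * ∑ k ∈ Finset.range (n + 1), a k‖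
        = ‖∑ k ∈ Finset.range (n + 1), a k‖ / ((n : ℝ) + 1) := by
      rw [norm_mul, norm_div, norm_one]
      have : ((n : ℂ) + 1) = ((n + 1 : ℕ) : ℂ) := by push_cast; ring
      rw [this, Complex.norm_natCast]
      push_cast
      ring
    set s : ℝ := ‖∑ k ∈ Finset.range (n + 1), a k‖ with hs_def
    have hs_nonneg : 0 ≤ s := norm_nonneg _
    -- triangle inequality
    have htri : s ≤ ∑ k ∈ Finset.range (n + 1), ‖a k‖ := norm_sum_le _ _
    -- Cauchy-Schwarz
    have hcs : (∑ k ∈ Finset.range (n + 1), ‖a k‖) ^ 2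
        ≤ (∑ k ∈ Finset.range (n + 1), ((k : ℝ) + 1) ^ (p - 1)) *
          ∑ k ∈ Finset.range (n + 1), ((k : ℝ) + 1) ^ (1 - p) * ‖a k‖ ^ 2 := by
      have := Finset.sum_mul_sq_le_sq_mul_sq (Finset.range (n + 1))
        (fun k => ((k : ℝ) + 1) ^ ((p - 1) / 2))
        (fun k => ((k : ℝ) + 1) ^ ((1 - p) / 2) * ‖a k‖)
      have e1 : ∀ k ∈ Finset.range (n + 1),
          ((k : ℝ) + 1) ^ ((p - 1) / 2) * (((k : ℝ) + 1) ^ ((1 - p) / 2) * ‖a k‖) = ‖a k‖ := by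
        intro k _
        have hk : (0 : ℝ) < (k : ℝ) + 1 := by positivity
        rw [← mul_assoc, ← Real.rpow_add hk,
          show (p - 1) / 2 + (1 - p) / 2 = 0 by ring, Real.rpow_zero, one_mul]
      have e2 : ∀ k ∈ Finset.range (n + 1),
          (((k : ℝ) + 1) ^ ((p - 1) / 2)) ^ 2 = ((k : ℝ) + 1) ^ (p - 1) := by
        intro k _
        have hk : (0 : ℝ) < (k : ℝ) + 1 := by positivity
        rw [sq, ← Real.rpow_add hk]; ring_nf
      have e3 : ∀ k ∈ Finset.range (n + 1),
          (((k : ℝ) + 1) ^ ((1 - p) / 2) * ‖a k‖) ^ 2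
            = ((k : ℝ) + 1) ^ (1 - p) * ‖a k‖ ^ 2 := by
        intro k _
        have hk : (0 : ℝ) < (k : ℝ) + 1 := by positivity
        rw [mul_pow, sq (((k : ℝ) + 1) ^ ((1 - p) / 2)), ← Real.rpow_add hk]
        ring_nf
      rw [Finset.sum_congr rfl e1, Finset.sum_congr rfl e2, Finset.sum_congr rfl e3] at this
      exact this
    -- row bound
    have hrow := cesaro_aux_row_sum hp0 hp1 n
    -- assemble
    have hQ_nonneg : 0 ≤ ∑ k ∈ Finset.range (n + 1), ((k : ℝ) + 1) ^ (1 - p) * ‖a k‖ ^ 2 := by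
      apply Finset.sum_nonneg; intro k _; positivity
    have hs2 : s ^ 2 ≤ (((n : ℝ) + 1) ^ p / p) *
        ∑ k ∈ Finset.range (n + 1), ((k : ℝ) + 1) ^ (1 - p) * ‖a k‖ ^ 2 := by
      calc s ^ 2 ≤ (∑ k ∈ Finset.range (n + 1), ‖a k‖) ^ 2 := by
            apply pow_le_pow_left₀ hs_nonneg htri
        _ ≤ _ := by
            refine hcs.trans ?_
            exact mul_le_mul_of_nonneg_right hrow hQ_nonneg
    have hc_eq : c n = ((n : ℝ) + 1) ^ (1 - α) / ((n : ℝ) + 1) ^ 2 * s ^ 2 := by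
      have : c n = ((n : ℝ) + 1) ^ (1 - α) *
          ‖(1 / ((n : ℂ) + 1)) * ∑ k ∈ Finset.range (n + 1), a k‖ ^ 2 := rfl
      rw [this, hnorm, div_pow]
      ring
    rw [hc_eq]
    have hcoef : ((n : ℝ) + 1) ^ (1 - α) / ((n : ℝ) + 1) ^ 2 * (((n : ℝ) + 1) ^ p / p)
        = (1 / p) * ((n : ℝ) + 1) ^ (-(1 + p)) := by
      have hmul : ((n : ℝ) + 1) ^ (1 - α) * ((n : ℝ) + 1) ^ p
          = ((n : ℝ) + 1) ^ (-(1 + p)) * ((n : ℝ) + 1) ^ (2 : ℕ) := by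
        rw [← Real.rpow_natCast ((n : ℝ) + 1) 2, ← Real.rpow_add hx, ← Real.rpow_add hx]
        congr 1
        rw [hp_def]; norm_num
        ring
      have hpow2 : ((n : ℝ) + 1) ^ (2 : ℕ) ≠ 0 := by positivity
      rw [div_mul_div_comm, hmul,
        mul_comm (((n : ℝ) + 1) ^ (-(1 + p))) (((n : ℝ) + 1) ^ (2 : ℕ)),
        mul_div_mul_left _ _ hpow2]
      ring
    calc ((n : ℝ) + 1) ^ (1 - α) / ((n : ℝ) + 1) ^ 2 * s ^ 2
        ≤ ((n : ℝ) + 1) ^ (1 - α) / ((n : ℝ) + 1) ^ 2 *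
          ((((n : ℝ) + 1) ^ p / p) *
            ∑ k ∈ Finset.range (n + 1), ((k : ℝ) + 1) ^ (1 - p) * ‖a k‖ ^ 2) := by
          apply mul_le_mul_of_nonneg_left hs2 (by positivity)
      _ = (1 / p) * ((n : ℝ) + 1) ^ (-(1 + p)) *
            ∑ k ∈ Finset.range (n + 1), ((k : ℝ) + 1) ^ (1 - p) * ‖a k‖ ^ 2 := by
          rw [← mul_assoc, hcoef]
  -- Partial-sum bound
  have hpartial : ∀ N : ℕ, ∑ n ∈ Finset.range N, c n ≤ C * T := by
    intro N
    have step1 : ∑ n ∈ Finset.range N, c n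
        ≤ ∑ n ∈ Finset.range N, (1 / p) * ((n : ℝ) + 1) ^ (-(1 + p)) *
            ∑ k ∈ Finset.range (n + 1), ((k : ℝ) + 1) ^ (1 - p) * ‖a k‖ ^ 2 :=
      Finset.sum_le_sum (fun n _ => hpoint n)
    -- distribute and swap
    have step2 : ∑ n ∈ Finset.range N, (1 / p) * ((n : ℝ) + 1) ^ (-(1 + p)) *
            ∑ k ∈ Finset.range (n + 1), ((k : ℝ) + 1) ^ (1 - p) * ‖a k‖ ^ 2
        = (1 / p) * ∑ k ∈ Finset.range N, (((k : ℝ) + 1) ^ (1 - p) * ‖a k‖ ^ 2 *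
            ∑ n ∈ Finset.Ico k N, ((n : ℝ) + 1) ^ (-(1 + p))) := by
      rw [Finset.mul_sum]
      have swap : ∑ n ∈ Finset.Ico 0 N, ∑ k ∈ Finset.Ico 0 (n + 1),
            (1 / p) * ((n : ℝ) + 1) ^ (-(1 + p)) * (((k : ℝ) + 1) ^ (1 - p) * ‖a k‖ ^ 2)
          = ∑ k ∈ Finset.Ico 0 N, ∑ n ∈ Finset.Ico k N,
            (1 / p) * ((n : ℝ) + 1) ^ (-(1 + p)) * (((k : ℝ) + 1) ^ (1 - p) * ‖a k‖ ^ 2) :=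
        (Finset.sum_Ico_Ico_comm 0 N
          (fun k n => (1 / p) * ((n : ℝ) + 1) ^ (-(1 + p)) *
            (((k : ℝ) + 1) ^ (1 - p) * ‖a k‖ ^ 2))).symm
      simp only [← Finset.range_eq_Ico] at swap
      calc ∑ n ∈ Finset.range N, (1 / p) * ((n : ℝ) + 1) ^ (-(1 + p)) *
            ∑ k ∈ Finset.range (n + 1), ((k : ℝ) + 1) ^ (1 - p) * ‖a k‖ ^ 2
          = ∑ n ∈ Finset.range N, ∑ k ∈ Finset.range (n + 1),
              (1 / p) * ((n : ℝ) + 1) ^ (-(1 + p)) * (((k : ℝ) + 1) ^ (1 - p) * ‖a k‖ ^ 2) := by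
            apply Finset.sum_congr rfl; intro n _
            rw [Finset.mul_sum]
        _ = ∑ k ∈ Finset.range N, ∑ n ∈ Finset.Ico k N,
              (1 / p) * ((n : ℝ) + 1) ^ (-(1 + p)) * (((k : ℝ) + 1) ^ (1 - p) * ‖a k‖ ^ 2) := by
            exact swap
        _ = ∑ k ∈ Finset.range N, (1 / p) * (((k : ℝ) + 1) ^ (1 - p) * ‖a k‖ ^ 2 *
              ∑ n ∈ Finset.Ico k N, ((n : ℝ) + 1) ^ (-(1 + p))) := by
            apply Finset.sum_congr rfl; intro k _
            rw [Finset.mul_sum, Finset.mul_sum]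
            apply Finset.sum_congr rfl; intro n _
            ring
    -- column bound
    have step3 : ∑ k ∈ Finset.range N, (((k : ℝ) + 1) ^ (1 - p) * ‖a k‖ ^ 2 *
            ∑ n ∈ Finset.Ico k N, ((n : ℝ) + 1) ^ (-(1 + p)))
        ≤ ∑ k ∈ Finset.range N, ((1 + p) / p) * (((k : ℝ) + 1) ^ (1 - α) * ‖a k‖ ^ 2) := by
      apply Finset.sum_le_sum
      intro k _
      have hk : (0 : ℝ) < (k : ℝ) + 1 := by positivity
      have ht : (1 : ℝ) < 1 + p := by linarith
      have hcol := cesaro_aux_col_sum ht k N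
      have e : (1 : ℝ) - (1 + p) = -p := by ring
      rw [e] at hcol
      have e2 : (1 + p) / (1 + p - 1) = (1 + p) / p := by ring_nf
      rw [e2] at hcol
      have hw : (0 : ℝ) ≤ ((k : ℝ) + 1) ^ (1 - p) * ‖a k‖ ^ 2 := by positivity
      calc ((k : ℝ) + 1) ^ (1 - p) * ‖a k‖ ^ 2 *
            ∑ n ∈ Finset.Ico k N, ((n : ℝ) + 1) ^ (-(1 + p))
          ≤ ((k : ℝ) + 1) ^ (1 - p) * ‖a k‖ ^ 2 * ((1 + p) / p * ((k : ℝ) + 1) ^ (-p)) :=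
            mul_le_mul_of_nonneg_left hcol hw
        _ = ((1 + p) / p) * (((k : ℝ) + 1) ^ (1 - p) * ((k : ℝ) + 1) ^ (-p) * ‖a k‖ ^ 2) := by
            ring
        _ = ((1 + p) / p) * (((k : ℝ) + 1) ^ (1 - α) * ‖a k‖ ^ 2) := by
            rw [← Real.rpow_add hk]
            rw [show (1 : ℝ) - p + -p = 1 - α by rw [hp_def]; ring]
    -- partial sums of the weighted series are at most T
    have step4 : ∑ k ∈ Finset.range N, (((k : ℝ) + 1) ^ (1 - α) * ‖a k‖ ^ 2) ≤ T := by
      rw [hT_def]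
      exact Summable.sum_le_tsum (Finset.range N) (fun k _ => by positivity) ha
    have hfactor : (1 / p) * ((1 + p) / p) = C := by
      rw [hC_def, hp_def]
      field_simp
    calc ∑ n ∈ Finset.range N, c n
        ≤ (1 / p) * ∑ k ∈ Finset.range N, (((k : ℝ) + 1) ^ (1 - p) * ‖a k‖ ^ 2 *
            ∑ n ∈ Finset.Ico k N, ((n : ℝ) + 1) ^ (-(1 + p))) := by
          rw [← step2]; exact step1
      _ ≤ (1 / p) * ∑ k ∈ Finset.range N, ((1 + p) / p) *
            (((k : ℝ) + 1) ^ (1 - α) * ‖a k‖ ^ 2) := by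
          apply mul_le_mul_of_nonneg_left step3 (by positivity)
      _ = (1 / p) * ((1 + p) / p) *
            ∑ k ∈ Finset.range N, (((k : ℝ) + 1) ^ (1 - α) * ‖a k‖ ^ 2) := by
          rw [← Finset.mul_sum]; ring
      _ ≤ (1 / p) * ((1 + p) / p) * T := by
          apply mul_le_mul_of_nonneg_left step4 (by positivity)
      _ = C * T := by rw [hfactor]
  -- summability and tsum bound
  have hsummable : Summable c := summable_of_sum_range_le hc_nonneg hpartial
  have htsum : ∑' n, c n ≤ C * T :=
    Real.tsum_le_of_sum_range_le hc_nonneg hpartial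
  refine ⟨hsummable, ?_⟩
  have h1 : (∑' n, c n) ^ ((1 : ℝ) / 2) ≤ (C * T) ^ ((1 : ℝ) / 2) :=
    Real.rpow_le_rpow (tsum_nonneg hc_nonneg) htsum (by norm_num)
  have h2 : (C * T) ^ ((1 : ℝ) / 2) = (Real.sqrt (2 * (2 + α)) / α) * T ^ ((1 : ℝ) / 2) := by
    rw [Real.mul_rpow hC_nonneg hT_nonneg]
    congr 1
    rw [← Real.sqrt_eq_rpow, hC_def, Real.sqrt_div (by positivity) (α ^ 2),
      Real.sqrt_sq hα0.le]
  exact h1.trans_eq h2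
end

section
/- Let 0 < α < 2 and let β be a real number with β < α. Then the Cesàro operator is not bounded from D_α into D_β: there is no constant C > 0 such that ∑_{n≥0} (n+1)^{1-β} |(1/(n+1)) ∑_{k=0}^{n} a_k|² ≤ C ∑_{n≥0} (n+1)^{1-α} |a_n|² holds for every complex sequence (a_n)_{n≥0} with ∑_{n≥0} (n+1)^{1-α} |a_n|² < ∞. -/
/-- For `0 < α < 2` and `β < α`, the Cesàro operator is not bounded from `D_α` into `D_β`:
no constant `C > 0` satisfies
`∑ (n+1)^{1-β} |(1/(n+1)) ∑_{k=0}^n a_k|² ≤ C ∑ (n+1)^{1-α} |a_n|²`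
for every coefficient sequence `a` in `D_α`. -/
theorem cesaro_not_bounded (α β : ℝ) (hα0 : 0 < α) (hα2 : α < 2) (hβα : β < α) :
    ¬ ∃ C > (0 : ℝ), ∀ a : ℕ → ℂ,
        Summable (fun n : ℕ => ((n : ℝ) + 1) ^ (1 - α) * ‖a n‖ ^ 2) →
        Summable (fun n : ℕ => ((n : ℝ) + 1) ^ (1 - β) *
          ‖(1 / ((n : ℂ) + 1)) * ∑ k ∈ Finset.range (n + 1), a k‖ ^ 2) ∧
        ∑' n : ℕ, ((n : ℝ) + 1) ^ (1 - β) *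
            ‖(1 / ((n : ℂ) + 1)) * ∑ k ∈ Finset.range (n + 1), a k‖ ^ 2 ≤
          C * ∑' n : ℕ, ((n : ℝ) + 1) ^ (1 - α) * ‖a n‖ ^ 2 := by
  rintro ⟨C, hC, h⟩
  by_cases hβ : β ≤ 0
  · -- test function e₀
    set a : ℕ → ℂ := fun k => if k = 0 then 1 else 0 with ha
    have hsum : Summable (fun n : ℕ => ((n : ℝ) + 1) ^ (1 - α) * ‖a n‖ ^ 2) := by
      apply summable_of_ne_finset_zero (s := Finset.range 1)
      intro n hn
      have : n ≠ 0 := by simpa using hn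
      simp [ha, this]
    obtain ⟨h1, -⟩ := h a hsum
    have hps : ∀ n, ∑ k ∈ Finset.range (n+1), a k = 1 := by
      intro n
      rw [Finset.sum_eq_single 0] <;> simp [ha]
    have hterm : ∀ n : ℕ, ((n : ℝ) + 1) ^ (-1-β) ≤
        ((n : ℝ) + 1) ^ (1 - β) *
          ‖(1 / ((n : ℂ) + 1)) * ∑ k ∈ Finset.range (n + 1), a k‖ ^ 2 := by
      intro n
      rw [hps n, mul_one]
      have hn1 : (0:ℝ) < (n:ℝ) + 1 := by positivity
      have hnorm : ‖(1 / ((n : ℂ) + 1))‖ = 1 / ((n:ℝ)+1) := by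
        rw [norm_div, norm_one]
        congr 1
        have : ((n : ℂ) + 1) = ((n+1 : ℕ) : ℂ) := by push_cast; ring
        rw [this, Complex.norm_natCast]; push_cast; ring
      rw [hnorm, div_pow, one_pow, mul_one_div,
        ← Real.rpow_natCast ((n:ℝ)+1) 2, ← Real.rpow_sub hn1]
      apply Real.rpow_le_rpow_of_exponent_le (by linarith)
      push_cast; linarith
    have h2 : Summable (fun n : ℕ => ((n:ℝ)+1) ^ (-1-β)) :=
      h1.of_nonneg_of_le (fun n => by positivity) hterm
    have h3 : Summable (fun n : ℕ => ((n+1 : ℕ):ℝ) ^ (-1-β)) := by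
      apply h2.congr; intro n; push_cast; ring_nf
    have h4 : Summable (fun n : ℕ => ((n : ℕ):ℝ) ^ (-1-β)) :=
      (summable_nat_add_iff 1).mp h3
    rw [Real.summable_nat_rpow] at h4
    linarith
  · push_neg at hβ
    -- choose N large
    obtain ⟨N, hN⟩ := exists_nat_gt (max 1 ((2*C*3^(1+β)) ^ (1/(α-β))))
    have hN1 : 1 ≤ N := by
      by_contra hcon
      push_neg at hcon
      interval_cases N
      · simp at hN; linarith [hN.1]
    have hNR : (0:ℝ) < N := by exact_mod_cast hN1
    set a : ℕ → ℂ := fun k => if k ∈ Finset.Ico N (2*N) then 1 else 0 with ha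
    have hsum : Summable (fun n : ℕ => ((n : ℝ) + 1) ^ (1 - α) * ‖a n‖ ^ 2) := by
      apply summable_of_ne_finset_zero (s := Finset.Ico N (2*N))
      intro n hn
      simp only [ha, if_neg hn, norm_zero]
      ring
    obtain ⟨h1, h2⟩ := h a hsum
    -- partial sums for n ≥ 2N-1
    have hps : ∀ n, 2*N - 1 ≤ n → ∑ k ∈ Finset.range (n+1), a k = (N : ℂ) := by
      intro n hn
      rw [ha]
      rw [Finset.sum_ite_mem]
      rw [Finset.inter_eq_right.mpr]
      · rw [Finset.sum_const, Nat.card_Ico, nsmul_eq_mul, mul_one]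
        norm_cast
        omega
      · intro k hk
        simp only [Finset.mem_Ico] at hk
        simp only [Finset.mem_range]
        omega
    -- lower bound for the left tsum
    have hlow : ∀ n ∈ Finset.Ico (2*N-1) (3*N-1),
        ((N:ℝ))^(2:ℝ) * ((3*(N:ℝ)))^(-1-β) ≤
        ((n : ℝ) + 1) ^ (1 - β) *
          ‖(1 / ((n : ℂ) + 1)) * ∑ k ∈ Finset.range (n + 1), a k‖ ^ 2 := by
      intro n hn
      simp only [Finset.mem_Ico] at hn
      rw [hps n hn.1]
      have hn1 : (0:ℝ) < (n:ℝ) + 1 := by positivity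
      have hnorm : ‖(1 / ((n : ℂ) + 1)) * (N:ℂ)‖ = (N:ℝ) / ((n:ℝ)+1) := by
        rw [norm_mul, norm_div, norm_one, Complex.norm_natCast]
        have : ((n : ℂ) + 1) = ((n+1 : ℕ) : ℂ) := by push_cast; ring
        rw [this, Complex.norm_natCast]; push_cast; ring
      rw [hnorm, div_pow]
      rw [div_eq_mul_inv, ← mul_assoc, mul_comm (((n:ℝ)+1)^(1-β)), mul_assoc]
      rw [← Real.rpow_natCast ((n:ℝ)+1) 2, ← Real.rpow_neg hn1.le,
        ← Real.rpow_add hn1, ← Real.rpow_natCast (N:ℝ) 2]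
      apply mul_le_mul_of_nonneg_left _ (Real.rpow_nonneg hNR.le _)
      have he : (1 - β) + -(2:ℕ) = -1-β := by push_cast; ring
      rw [he]
      apply Real.rpow_le_rpow_of_nonpos hn1 _ (by linarith)
      have : (n:ℝ) ≤ 3*(N:ℝ) - 1 := by
        have : n ≤ 3*N - 2 := by omega
        have h3 : (n:ℝ) ≤ ((3*N - 2 : ℕ):ℝ) := by exact_mod_cast this
        have : ((3*N-2 : ℕ):ℝ) = 3*(N:ℝ) - 2 := by
          have : 2 ≤ 3*N := by omega
          push_cast [this]; ring
        linarith [h3, this.le]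
      linarith
    have hcard : (Finset.Ico (2*N-1) (3*N-1)).card = N := by
      rw [Nat.card_Ico]; omega
    have sA : (N:ℝ) * ((N:ℝ)^(2:ℝ) * ((3*(N:ℝ)))^(-1-β)) ≤
        ∑' n : ℕ, ((n : ℝ) + 1) ^ (1 - β) *
          ‖(1 / ((n : ℂ) + 1)) * ∑ k ∈ Finset.range (n + 1), a k‖ ^ 2 := by
      calc (N:ℝ) * ((N:ℝ)^(2:ℝ) * ((3*(N:ℝ)))^(-1-β))
          ≤ ∑ n ∈ Finset.Ico (2*N-1) (3*N-1), ((n : ℝ) + 1) ^ (1 - β) *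
            ‖(1 / ((n : ℂ) + 1)) * ∑ k ∈ Finset.range (n + 1), a k‖ ^ 2 := by
            have := Finset.card_nsmul_le_sum _ _ _ hlow
            rwa [hcard, nsmul_eq_mul] at this
        _ ≤ _ := Summable.sum_le_tsum _ (fun n _ => by positivity) h1
    -- upper bound for the right tsum
    have hT2 : ∑' n : ℕ, ((n : ℝ) + 1) ^ (1 - α) * ‖a n‖ ^ 2 =
        ∑ n ∈ Finset.Ico N (2*N), ((n : ℝ) + 1) ^ (1 - α) * ‖a n‖ ^ 2 := by
      apply tsum_eq_sum
      intro n hn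
      simp only [ha, if_neg hn, norm_zero]
      ring
    have hNpos' : (0:ℝ) ≤ (N:ℝ)^(1-α) := Real.rpow_nonneg hNR.le _
    have hub : ∀ n ∈ Finset.Ico N (2*N),
        ((n : ℝ) + 1) ^ (1 - α) * ‖a n‖ ^ 2 ≤ 2 * (N:ℝ)^(1-α) := by
      intro n hn
      simp only [Finset.mem_Ico] at hn
      rw [ha]
      simp only [if_pos (Finset.mem_Ico.mpr hn), norm_one, one_pow, mul_one]
      have hle : (n:ℝ) + 1 ≤ 2*(N:ℝ) := by
        have : n + 1 ≤ 2*N := hn.2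
        exact_mod_cast this
      have hge : (N:ℝ) ≤ (n:ℝ) + 1 := by
        have : N ≤ n + 1 := by omega
        exact_mod_cast this
      rcases le_or_gt α 1 with hα1 | hα1
      · calc ((n:ℝ)+1)^(1-α) ≤ (2*(N:ℝ))^(1-α) :=
              Real.rpow_le_rpow (by positivity) hle (by linarith)
          _ = 2^(1-α) * (N:ℝ)^(1-α) := Real.mul_rpow (by norm_num) hNR.le
          _ ≤ 2^(1:ℝ) * (N:ℝ)^(1-α) := by
              apply mul_le_mul_of_nonneg_right _ hNpos'
              exact Real.rpow_le_rpow_of_exponent_le (by norm_num) (by linarith)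
          _ = 2 * (N:ℝ)^(1-α) := by rw [Real.rpow_one]
      · calc ((n:ℝ)+1)^(1-α) ≤ (N:ℝ)^(1-α) :=
              Real.rpow_le_rpow_of_nonpos hNR hge (by linarith)
          _ ≤ 2 * (N:ℝ)^(1-α) := by linarith
    have sB : ∑' n : ℕ, ((n : ℝ) + 1) ^ (1 - α) * ‖a n‖ ^ 2 ≤
        (N:ℝ) * (2 * (N:ℝ)^(1-α)) := by
      rw [hT2]
      calc ∑ n ∈ Finset.Ico N (2*N), ((n : ℝ) + 1) ^ (1 - α) * ‖a n‖ ^ 2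
          ≤ (Finset.Ico N (2*N)).card • (2 * (N:ℝ)^(1-α)) :=
            Finset.sum_le_card_nsmul _ _ _ hub
        _ = (N:ℝ) * (2 * (N:ℝ)^(1-α)) := by
            rw [Nat.card_Ico, nsmul_eq_mul]
            congr 1
            norm_cast
            omega
    -- combine
    have key : (N:ℝ) * ((N:ℝ)^(2:ℝ) * ((3*(N:ℝ)))^(-1-β)) ≤
        C * ((N:ℝ) * (2 * (N:ℝ)^(1-α))) := by
      calc (N:ℝ) * ((N:ℝ)^(2:ℝ) * ((3*(N:ℝ)))^(-1-β)) ≤ _ := sA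
        _ ≤ C * ∑' n : ℕ, ((n : ℝ) + 1) ^ (1 - α) * ‖a n‖ ^ 2 := h2
        _ ≤ C * ((N:ℝ) * (2 * (N:ℝ)^(1-α))) := by
            exact mul_le_mul_of_nonneg_left sB hC.le
    -- simplify key to N^(α-β) ≤ 2*C*3^(1+β)
    have key2 : (N:ℝ)^(α-β) ≤ 2*C*3^(1+β) := by
      have h3pos : (0:ℝ) < 3^(1+β) := Real.rpow_pos_of_pos (by norm_num) _
      have expand : ((3*(N:ℝ)))^(-1-β) = 3^(-1-β) * (N:ℝ)^(-1-β) :=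
        Real.mul_rpow (by norm_num) hNR.le
      rw [expand] at key
      -- key : N * (N^2 * (3^(-1-β) * N^(-1-β))) ≤ C * (N * (2 * N^(1-α)))
      have hcancel : (N:ℝ)^(2:ℝ) * (N:ℝ)^(-1-β) = (N:ℝ)^(1-β) := by
        rw [← Real.rpow_add hNR]; congr 1; ring
      have key' : 3^(-1-β) * (N:ℝ)^(1-β) ≤ 2*C*(N:ℝ)^(1-α) := by
        have e : (N:ℝ) * (3^(-1-β) * (N:ℝ)^(1-β)) ≤ (N:ℝ) * (2*C*(N:ℝ)^(1-α)) := by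
          calc (N:ℝ) * (3^(-1-β) * (N:ℝ)^(1-β))
              = (N:ℝ) * ((N:ℝ)^(2:ℝ) * (3^(-1-β) * (N:ℝ)^(-1-β))) := by
                rw [← hcancel]; ring
            _ ≤ C * ((N:ℝ) * (2 * (N:ℝ)^(1-α))) := key
            _ = (N:ℝ) * (2*C*(N:ℝ)^(1-α)) := by ring
        exact le_of_mul_le_mul_left e hNR
      -- multiply by N^(α-1)
      have hpow : (0:ℝ) < (N:ℝ)^(α-1) := Real.rpow_pos_of_pos hNR _
      have key'' : 3^(-1-β) * (N:ℝ)^(α-β) ≤ 2*C := by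
        have := mul_le_mul_of_nonneg_right key' hpow.le
        rw [mul_assoc, mul_assoc, ← Real.rpow_add hNR, ← Real.rpow_add hNR] at this
        have e1 : (1-β) + (α-1) = α - β := by ring
        have e2 : (1-α) + (α-1) = 0 := by ring
        rw [e1, e2, Real.rpow_zero, mul_one] at this
        exact this
      have h3inv : (3:ℝ)^(1+β) * 3^(-1-β) = 1 := by
        rw [← Real.rpow_add (by norm_num)]; norm_num
      have := mul_le_mul_of_nonneg_left key'' h3pos.le
      calc (N:ℝ)^(α-β) = 3^(1+β) * 3^(-1-β) * (N:ℝ)^(α-β) := by rw [h3inv, one_mul]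
        _ = 3^(1+β) * (3^(-1-β) * (N:ℝ)^(α-β)) := by ring
        _ ≤ 3^(1+β) * (2*C) := this
        _ = 2*C*3^(1+β) := by ring
    -- contradiction with hN
    have hM : (0:ℝ) ≤ 2*C*3^(1+β) := by positivity
    have hlt : (2*C*3^(1+β)) ^ (1/(α-β)) < (N:ℝ) := lt_of_le_of_lt (le_max_right _ _) hN
    have habne : α - β ≠ 0 := by linarith
    have key3 : 2*C*3^(1+β) < (N:ℝ)^(α-β) := by
      have := Real.rpow_lt_rpow (Real.rpow_nonneg hM _) hlt (by linarith : (0:ℝ) < α - β)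
      rwa [one_div, Real.rpow_inv_rpow hM habne] at this
    linarith
end

section
/- Let 0 < α < 2, 0 < β < 2, and let μ be a positive (finite) Borel measure on [0,1). The following three statements are equivalent: (1) there exists a constant C > 0 such that ∑_{n≥0} (n+1)^{1-β} (μ[n])² |∑_{k=0}^{n} a_k|² ≤ C ∑_{n≥0} (n+1)^{1-α} |a_n|² for every complex sequence (a_n)_{n≥0} with ∑_{n≥0} (n+1)^{1-α} |a_n|² < ∞ (i.e., the generalized Cesàro operator C_μ is bounded from D_α into D_β); (2) μ is a [1 + (α-β)/2]-Carleson measure on [0,1); (3) there exists a constant C > 0 such that μ[n] ≤ C (n+1)^{-1-(α-β)/2} for all integers n ≥ 0. -/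
open MeasureTheory

section CesaroAux
set_option maxHeartbeats 1000000
open Finset Set

set_option linter.unusedVariables false
set_option linter.unusedSectionVars false

private lemma amgm {γ x : ℝ} (hγ0 : 0 ≤ γ) (hγ1 : γ ≤ 1) (hx : 0 ≤ x) :
    x ^ γ ≤ 1 - γ + γ * x := by
  have h := Real.geom_mean_le_arith_mean2_weighted (w₁ := 1 - γ) (w₂ := γ) (p₁ := 1) (p₂ := x)
    (by linarith) hγ0 zero_le_one hx (by ring)
  simpa using h

-- step for L1
private lemma step1 {γ : ℝ} (hγ0 : 0 < γ) (hγ1 : γ ≤ 1) (k : ℕ) :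
    γ * ((k : ℝ) + 1) ^ (γ - 1) ≤ ((k : ℝ) + 1) ^ γ - (k : ℝ) ^ γ := by
  have hk1 : (0:ℝ) < (k : ℝ) + 1 := by positivity
  have hx : (0:ℝ) ≤ (k : ℝ) / ((k : ℝ) + 1) := by positivity
  have h := amgm hγ0.le hγ1 hx
  have hmul : ((k : ℝ) / ((k : ℝ) + 1)) ^ γ * ((k : ℝ) + 1) ^ γ = (k : ℝ) ^ γ := by
    rw [← Real.mul_rpow hx hk1.le]
    field_simp
  have h2 : (k : ℝ) ^ γ ≤ (1 - γ + γ * ((k : ℝ) / ((k : ℝ) + 1))) * ((k : ℝ) + 1) ^ γ := by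
    rw [← hmul]
    exact mul_le_mul_of_nonneg_right h (Real.rpow_nonneg hk1.le γ)
  have h3 : (1 - γ + γ * ((k : ℝ) / ((k : ℝ) + 1))) * ((k : ℝ) + 1) ^ γ
      = ((k : ℝ) + 1) ^ γ - γ * (((k : ℝ) + 1) ^ γ / ((k : ℝ) + 1)) := by
    field_simp
    ring
  rw [Real.rpow_sub_one hk1.ne']
  linarith [h2, h3.symm ▸ h2]

private lemma sum_rpow_le {γ : ℝ} (hγ0 : 0 < γ) (hγ1 : γ ≤ 1) (n : ℕ) :
    ∑ k ∈ range n, ((k : ℝ) + 1) ^ (γ - 1) ≤ (n : ℝ) ^ γ / γ := by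
  rw [le_div_iff₀ hγ0, Finset.sum_mul]
  have h : ∀ k ∈ range n, ((k : ℝ) + 1) ^ (γ - 1) * γ ≤ ((k : ℝ) + 1) ^ γ - (k : ℝ) ^ γ := by
    intro k _
    linarith [step1 hγ0 hγ1 k]
  have h2 := Finset.sum_range_sub (fun k : ℕ => (k : ℝ) ^ γ) n
  push_cast at h2
  calc ∑ k ∈ range n, ((k : ℝ) + 1) ^ (γ - 1) * γ
      ≤ ∑ k ∈ range n, (((k : ℝ) + 1) ^ γ - (k : ℝ) ^ γ) := Finset.sum_le_sum h
    _ = (n : ℝ) ^ γ - (0 : ℝ) ^ γ := h2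
    _ ≤ (n : ℝ) ^ γ := by
        have : (0:ℝ) ^ γ = 0 := Real.zero_rpow hγ0.ne'
        simp [this]

private lemma step4 {ε : ℝ} (hε0 : 0 < ε) (hε1 : ε ≤ 1) (n : ℕ) :
    ((n : ℝ) + 1) ^ (-1 - ε) ≤ (2 / ε) * (((n : ℝ) + 1) ^ (-ε) - ((n : ℝ) + 2) ^ (-ε)) := by
  set b : ℝ := (n : ℝ) + 1 with hb
  have hb1 : (1:ℝ) ≤ b := by simp [hb]
  have hb0 : (0:ℝ) < b := by linarith
  have hb10 : (0:ℝ) < b + 1 := by linarith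
  have hx : (0:ℝ) ≤ b / (b + 1) := by positivity
  have h := amgm hε0.le hε1 hx
  have key : (b + 1) ^ (-ε) ≤ b ^ (-ε) * (1 - ε / (b + 1)) := by
    have hmul : (b + 1) ^ (-ε) = b ^ (-ε) * (b / (b + 1)) ^ ε := by
      rw [Real.div_rpow hb0.le hb10.le, Real.rpow_neg hb0.le, Real.rpow_neg hb10.le]
      field_simp
    rw [hmul]
    have h2 : 1 - ε + ε * (b / (b + 1)) = 1 - ε / (b + 1) := by field_simp; ring
    exact mul_le_mul_of_nonneg_left (h.trans_eq h2) (Real.rpow_nonneg hb0.le (-ε))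
  have hdiff : ε / 2 * b ^ (-1 - ε) ≤ b ^ (-ε) - (b + 1) ^ (-ε) := by
    have hpos : (0:ℝ) ≤ b ^ (-ε) := Real.rpow_nonneg hb0.le (-ε)
    have h1 : b ^ (-ε) * (ε / (b + 1)) ≤ b ^ (-ε) - (b + 1) ^ (-ε) := by nlinarith [key]
    have h2 : b ^ (-ε) * (ε / (2 * b)) ≤ b ^ (-ε) * (ε / (b + 1)) := by
      apply mul_le_mul_of_nonneg_left _ hpos
      apply div_le_div_of_nonneg_left hε0.le (by linarith) (by linarith)
    have h3 : b ^ (-ε) * (ε / (2 * b)) = ε / 2 * b ^ (-1 - ε) := by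
      rw [show (-1 : ℝ) - ε = -ε - 1 by ring, Real.rpow_sub_one hb0.ne']
      field_simp
    linarith
  have h2 : ((n:ℝ) + 2) = b + 1 := by rw [hb]; ring
  rw [h2]
  calc b ^ (-1 - ε) = 2 / ε * (ε / 2 * b ^ (-1 - ε)) := by field_simp
    _ ≤ 2 / ε * (b ^ (-ε) - (b + 1) ^ (-ε)) :=
        mul_le_mul_of_nonneg_left hdiff (by positivity)

private lemma tail_sum_le {ε : ℝ} (hε0 : 0 < ε) (hε1 : ε ≤ 1) (k M : ℕ) :
    ∑ n ∈ Finset.Ico k M, ((n : ℝ) + 1) ^ (-1 - ε) ≤ (2 / ε) * ((k : ℝ) + 1) ^ (-ε) := by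
  rcases le_or_gt M k with h | h
  · rw [Finset.Ico_eq_empty (by omega)]
    simp
    positivity
  · have g : ∀ n : ℕ, ((n:ℝ)+1) ^ (-1-ε) ≤ (2/ε) * ((((n:ℕ):ℝ)+1) ^ (-ε) - (((n+1:ℕ):ℝ)+1) ^ (-ε)) := by
      intro n
      have h4 := step4 hε0 hε1 n
      have : (((n+1:ℕ):ℝ)+1) = (n:ℝ) + 2 := by push_cast; ring
      rw [this]
      exact h4
    calc ∑ n ∈ Finset.Ico k M, ((n : ℝ) + 1) ^ (-1 - ε)
        ≤ ∑ n ∈ Finset.Ico k M, (2/ε) * ((((n:ℕ):ℝ)+1) ^ (-ε) - (((n+1:ℕ):ℝ)+1) ^ (-ε)) :=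
          Finset.sum_le_sum (fun n _ => g n)
      _ = (2/ε) * ∑ n ∈ Finset.Ico k M, ((((n:ℕ):ℝ)+1) ^ (-ε) - (((n+1:ℕ):ℝ)+1) ^ (-ε)) := by
          rw [Finset.mul_sum]
      _ = (2/ε) * (((k:ℝ)+1) ^ (-ε) - ((M:ℝ)+1) ^ (-ε)) := by
          congr 1
          rw [Finset.sum_Ico_eq_sum_range]
          have h2 := Finset.sum_range_sub' (fun i : ℕ => (((k+i:ℕ):ℝ)+1) ^ (-ε)) (M - k)
          simp only [← Nat.add_assoc] at h2
          rw [h2, Nat.add_zero, Nat.add_sub_cancel' h.le]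
      _ ≤ (2/ε) * ((k:ℝ)+1) ^ (-ε) := by
          have h1 : (0:ℝ) ≤ ((M:ℝ)+1) ^ (-ε) := Real.rpow_nonneg (by positivity) _
          have h2 : (0:ℝ) ≤ 2/ε := by positivity
          nlinarith

private lemma sum_pow5 (n : ℕ) : (n : ℝ) ^ (6:ℕ) / 6 ≤ ∑ k ∈ range n, ((k : ℝ) + 1) ^ (5:ℕ) := by
  induction n with
  | zero => simp
  | succ n ih =>
    rw [Finset.sum_range_succ]
    push_cast
    have hn : (0:ℝ) ≤ (n:ℝ) := Nat.cast_nonneg n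
    nlinarith [ih, pow_nonneg hn 5, pow_nonneg hn 4, pow_nonneg hn 3, pow_nonneg hn 2, hn]

private lemma sum_rpow_ge {c : ℝ} (hc : c ≤ 5) (N : ℕ) :
    ((N : ℝ) + 1) ^ (c + 1) / 6 ≤ ∑ k ∈ range (N + 1), ((k : ℝ) + 1) ^ c := by
  have hN : (0:ℝ) < (N:ℝ) + 1 := by positivity
  have key : ∀ k ∈ range (N+1), ((N:ℝ)+1) ^ (c-5) * ((k:ℝ)+1) ^ (5:ℕ) ≤ ((k : ℝ) + 1) ^ c := by
    intro k hk
    have hk' : (k:ℝ) + 1 ≤ (N:ℝ) + 1 := by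
      have : k ≤ N := by simpa using Nat.lt_succ_iff.mp (Finset.mem_range.mp hk)
      have h2 : ((k:ℕ):ℝ) ≤ ((N:ℕ):ℝ) := Nat.cast_le.mpr this
      linarith
    have hkpos : (0:ℝ) < (k:ℝ) + 1 := by positivity
    have h1 : ((N:ℝ)+1) ^ (c-5) ≤ ((k:ℝ)+1) ^ (c-5) := by
      apply Real.rpow_le_rpow_of_nonpos hkpos hk' (by linarith)
    calc ((N:ℝ)+1) ^ (c-5) * ((k:ℝ)+1) ^ (5:ℕ)
        ≤ ((k:ℝ)+1) ^ (c-5) * ((k:ℝ)+1) ^ (5:ℕ) := by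
          apply mul_le_mul_of_nonneg_right h1 (by positivity)
      _ = ((k:ℝ)+1) ^ c := by
          rw [← Real.rpow_natCast ((k:ℝ)+1) 5, ← Real.rpow_add hkpos]
          norm_num
  calc ((N : ℝ) + 1) ^ (c + 1) / 6
      = ((N:ℝ)+1) ^ (c-5) * (((N:ℝ)+1) ^ (6:ℕ) / 6) := by
        have he : ((N:ℝ)+1) ^ (c+1) = ((N:ℝ)+1) ^ (c-5) * ((N:ℝ)+1) ^ (6:ℕ) := by
          rw [← Real.rpow_natCast ((N:ℝ)+1) 6, ← Real.rpow_add hN]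
          norm_num
          congr 1
          ring
        rw [he]
        ring
    _ ≤ ((N:ℝ)+1) ^ (c-5) * ∑ k ∈ range (N+1), ((k : ℝ) + 1) ^ (5:ℕ) := by
        apply mul_le_mul_of_nonneg_left _ (by positivity)
        have := sum_pow5 (N+1)
        push_cast at this
        exact this
    _ = ∑ k ∈ range (N+1), ((N:ℝ)+1) ^ (c-5) * ((k : ℝ) + 1) ^ (5:ℕ) := by
        rw [Finset.mul_sum]
    _ ≤ ∑ k ∈ range (N + 1), ((k : ℝ) + 1) ^ c := Finset.sum_le_sum key

private lemma geo_sum_bound (n : ℕ) : ∑ j ∈ Finset.Icc 1 n, Real.exp (-(j:ℝ)) * (j:ℝ)^(2:ℕ) ≤ 8 := by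
  have sq_le : ∀ j : ℕ, ((j:ℝ))^(2:ℕ) ≤ 2 * 2 ^ j := by
    intro j
    induction j with
    | zero => norm_num
    | succ j ih =>
      have hj : (j:ℝ) + 1 ≤ 2 ^ j := by exact_mod_cast (Nat.lt_two_pow_self (n := j))
      push_cast
      have h2 : (2:ℝ)^(j+1) = 2*2^j := by ring
      rw [h2]
      nlinarith [hj, ih]
  have he : (2:ℝ) / Real.exp 1 ≤ 3/4 := by
    have := Real.exp_one_gt_d9
    rw [div_le_iff₀ (Real.exp_pos 1)]
    nlinarith [this]
  have term : ∀ j : ℕ, Real.exp (-(j:ℝ)) * (j:ℝ)^(2:ℕ) ≤ 2 * (3/4 : ℝ)^j := by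
    intro j
    have h1 : Real.exp (-(j:ℝ)) = (Real.exp 1)⁻¹ ^ j := by
      rw [← Real.exp_neg, ← Real.exp_nat_mul]
      congr 1
      ring
    have h2 : Real.exp (-(j:ℝ)) * (j:ℝ)^(2:ℕ) ≤ (Real.exp 1)⁻¹ ^ j * (2 * 2 ^ j) := by
      rw [h1]
      exact mul_le_mul_of_nonneg_left (sq_le j) (by positivity)
    have h3 : (Real.exp 1)⁻¹ ^ j * (2 * 2 ^ j) = 2 * (2 / Real.exp 1) ^ j := by
      rw [div_eq_mul_inv, mul_pow]
      ring
    have h4 : (2 / Real.exp 1 : ℝ) ^ j ≤ (3/4 : ℝ) ^ j :=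
      pow_le_pow_left₀ (by positivity) he j
    calc Real.exp (-(j:ℝ)) * (j:ℝ)^(2:ℕ) ≤ 2 * (2 / Real.exp 1) ^ j := by linarith [h2, h3 ▸ h2]
      _ ≤ 2 * (3/4:ℝ) ^ j := by linarith [h4]
  calc ∑ j ∈ Finset.Icc 1 n, Real.exp (-(j:ℝ)) * (j:ℝ)^(2:ℕ)
      ≤ ∑ j ∈ Finset.Icc 1 n, 2 * (3/4:ℝ)^j := Finset.sum_le_sum (fun j _ => term j)
    _ ≤ ∑ j ∈ Finset.range (n+1), 2 * (3/4:ℝ)^j := by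
        apply Finset.sum_le_sum_of_subset_of_nonneg
        · intro j hj
          simp only [Finset.mem_Icc] at hj
          simp only [Finset.mem_range]
          omega
        · intro j _ _
          positivity
    _ = 2 * ∑ j ∈ Finset.range (n+1), (3/4:ℝ)^j := by rw [Finset.mul_sum]
    _ ≤ 2 * (1 / (1 - 3/4)) := by
        have hg := geom_sum_eq (by norm_num : (3/4:ℝ) ≠ 1) (n+1)
        have hr : (((3/4:ℝ))^(n+1) - 1)/((3/4:ℝ) - 1) = 4*(1 - (3/4:ℝ)^(n+1)) := by ring
        have hp : (0:ℝ) ≤ (3/4:ℝ)^(n+1) := by positivity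
        rw [hg, hr]
        nlinarith [hp]
    _ ≤ 8 := by norm_num

private lemma swap_sum (c w : ℕ → ℝ) (M : ℕ) :
    ∑ n ∈ range M, (c n * ∑ k ∈ range (n+1), w k)
      = ∑ k ∈ range M, (w k * ∑ n ∈ Finset.Ico k M, c n) := by
  have h1 : ∀ n ∈ range M, c n * ∑ k ∈ range (n+1), w k
      = ∑ k ∈ range M, (if k ≤ n then c n * w k else 0) := by
    intro n hn
    rw [Finset.mul_sum]
    have hf : (range M).filter (fun k => k ≤ n) = range (n+1) := by
      ext k
      simp only [Finset.mem_filter, Finset.mem_range] at *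
      constructor
      · rintro ⟨_, h2⟩; omega
      · intro h2
        omega
    rw [← hf, Finset.sum_filter]
  have h2 : ∀ k ∈ range M, (∑ n ∈ range M, if k ≤ n then c n * w k else 0)
      = w k * ∑ n ∈ Finset.Ico k M, c n := by
    intro k _
    have hf : (range M).filter (fun n => k ≤ n) = Finset.Ico k M := by
      ext n
      simp only [Finset.mem_filter, Finset.mem_range, Finset.mem_Ico]
      omega
    rw [← Finset.sum_filter, hf, Finset.mul_sum]
    apply Finset.sum_congr rfl
    intro n _
    ring
  rw [Finset.sum_congr rfl h1, Finset.sum_comm, Finset.sum_congr rfl h2]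

variable (μ : Measure ℝ) [IsFiniteMeasure μ]

private lemma mInt (n : ℕ) : IntegrableOn (fun t : ℝ => t ^ n) (Set.Ico (0:ℝ) 1) μ := by
  have hmeas : MeasurableSet (Set.Ico (0:ℝ) 1) := measurableSet_Ico
  apply Integrable.mono' (integrable_const (1:ℝ))
  · exact (continuous_pow n).aestronglyMeasurable
  · filter_upwards [ae_restrict_mem hmeas] with t ht
    rw [Real.norm_eq_abs, abs_pow, abs_of_nonneg ht.1]
    exact pow_le_one₀ ht.1 ht.2.le

private lemma mNonneg (n : ℕ) : 0 ≤ ∫ t in Set.Ico (0:ℝ) 1, t ^ n ∂μ :=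
  setIntegral_nonneg measurableSet_Ico (fun t ht => pow_nonneg ht.1 n)

private lemma mAnti {n N : ℕ} (h : n ≤ N) :
    ∫ t in Set.Ico (0:ℝ) 1, t ^ N ∂μ ≤ ∫ t in Set.Ico (0:ℝ) 1, t ^ n ∂μ := by
  apply setIntegral_mono_on (mInt μ N) (mInt μ n) measurableSet_Ico
  intro t ht
  exact pow_le_pow_of_le_one ht.1 ht.2.le h

private lemma CtoB {s C : ℝ} (hs0 : 0 < s) (hs2 : s ≤ 2) (hC : 0 < C)
    (h : ∀ n : ℕ, (∫ t in Set.Ico (0:ℝ) 1, t ^ n ∂μ) ≤ C * ((n:ℝ)+1) ^ (-s)) :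
    ∃ C' > (0:ℝ), ∀ t ∈ Set.Ico (0:ℝ) 1, (μ (Set.Ico t 1)).toReal ≤ C' * (1-t) ^ s := by
  set T : ℝ := (μ Set.univ).toReal with hT
  have hT0 : 0 ≤ T := ENNReal.toReal_nonneg
  refine ⟨Real.exp 2 * C + 4 * (T + 1), by positivity, ?_⟩
  rintro t ⟨ht0, ht1⟩
  have h1t : 0 < 1 - t := by linarith
  have hrs : (0:ℝ) ≤ (1-t) ^ s := Real.rpow_nonneg h1t.le s
  rcases lt_or_ge t (1/2) with hhalf | hhalf
  · -- easy case
    have hq : (1/4 : ℝ) ≤ (1-t) ^ s := by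
      have h2 : ((1:ℝ)/2) ^ s ≤ (1-t) ^ s :=
        Real.rpow_le_rpow (by norm_num) (by linarith) hs0.le
      have h3 : ((1:ℝ)/2) ^ (2:ℝ) ≤ ((1:ℝ)/2) ^ s :=
        Real.rpow_le_rpow_of_exponent_ge (by norm_num) (by norm_num) hs2
      have h4 : ((1:ℝ)/2) ^ (2:ℝ) = 1/4 := by
        rw [show (2:ℝ) = ((2:ℕ):ℝ) by norm_num, Real.rpow_natCast]
        norm_num
      linarith
    have hμ : (μ (Set.Ico t 1)).toReal ≤ T := by
      rw [hT]
      exact ENNReal.toReal_mono (measure_ne_top μ _) (measure_mono (Set.subset_univ _))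
    have : 4 * (T+1) * (1/4) ≤ 4 * (T+1) * ((1-t) ^ s) := by
      apply mul_le_mul_of_nonneg_left hq (by positivity)
    nlinarith [Real.rpow_nonneg h1t.le s, Real.exp_pos (2:ℝ), hC.le,
      mul_nonneg (mul_nonneg (Real.exp_pos (2:ℝ)).le hC.le) hrs]
  · -- main case
    set x : ℝ := 1 / (1 - t) with hx
    have hx2 : (2:ℝ) ≤ x := by
      rw [hx, le_div_iff₀ h1t]
      linarith
    set n : ℕ := ⌊x⌋₊ with hn
    have hn2 : 2 ≤ n := Nat.le_floor (by exact_mod_cast hx2)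
    have hnx : (n:ℝ) ≤ x := Nat.floor_le (by linarith)
    have hxn1 : x < (n:ℝ) + 1 := Nat.lt_floor_add_one x
    have hnpos : (0:ℝ) < n := by exact_mod_cast (by omega : 0 < n)
    have hn1 : (1:ℝ) ≤ (n:ℝ) - 1 := by
      have : (2:ℝ) ≤ (n:ℝ) := by exact_mod_cast hn2
      linarith
    -- t ≥ 1 - 1/n
    have htn : 1 - 1/(n:ℝ) ≤ t := by
      have h2 : (n:ℝ) * (1-t) ≤ 1 := by
        rw [hx] at hnx
        rw [← le_div_iff₀ h1t]
        exact hnx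
      have h3 : 1 - t ≤ 1/(n:ℝ) := by
        rw [le_div_iff₀ hnpos]
        linarith [h2]
      linarith
    -- exp(-2) ≤ t^n
    have htexp : Real.exp (-2) ≤ t ^ n := by
      set c : ℝ := 1 / ((n:ℝ) - 1) with hc
      have hc0 : 0 < c := by rw [hc]; positivity
      have e1 : Real.exp (-c) ≤ 1 - 1/(n:ℝ) := by
        have e2 : 1 + c ≤ Real.exp c := by linarith [Real.add_one_le_exp c]
        have e3 : (n:ℝ)/((n:ℝ)-1) = 1 + c := by rw [hc]; field_simp; ring
        have e4 : (0:ℝ) < (n:ℝ)/((n:ℝ)-1) := by positivity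
        have e5 : Real.exp (-c) ≤ ((n:ℝ)-1)/(n:ℝ) := by
          rw [Real.exp_neg]
          rw [show ((n:ℝ)-1)/(n:ℝ) = ((n:ℝ)/((n:ℝ)-1))⁻¹ by field_simp]
          exact inv_anti₀ e4 (e3 ▸ e2)
        have e6 : ((n:ℝ)-1)/(n:ℝ) = 1 - 1/(n:ℝ) := by field_simp
        linarith
      have e7 : Real.exp (-c) ≤ t := le_trans e1 htn
      have e8 : Real.exp (-c) ^ n = Real.exp (-c * n) := by
        rw [mul_comm, ← Real.exp_nat_mul]
      have e9 : Real.exp (-2) ≤ Real.exp (-c * n) := by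
        apply Real.exp_le_exp.mpr
        have : -c * (n:ℝ) = -((n:ℝ)/((n:ℝ)-1)) := by rw [hc]; field_simp
        rw [this, neg_le_neg_iff, div_le_iff₀ (by linarith : (0:ℝ) < (n:ℝ)-1)]
        nlinarith [hn1]
      calc Real.exp (-2) ≤ Real.exp (-c * n) := e9
        _ = Real.exp (-c) ^ n := e8.symm
        _ ≤ t ^ n := pow_le_pow_left₀ (Real.exp_pos _).le e7 n
    -- measure chain
    have hint : IntegrableOn (fun u : ℝ => u ^ n) (Set.Ico t 1) μ :=
      (mInt μ n).mono_set (Set.Ico_subset_Ico ht0 le_rfl)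
    have key : Real.exp (-2) * (μ (Set.Ico t 1)).toReal ≤ ∫ u in Set.Ico t 1, u ^ n ∂μ := by
      have c1 : ∫ _ in Set.Ico t 1, Real.exp (-2) ∂μ = (μ (Set.Ico t 1)).toReal * Real.exp (-2) := by
        rw [setIntegral_const]
        simp [smul_eq_mul, Measure.real]
      rw [mul_comm, ← c1]
      apply setIntegral_mono_on (integrableOn_const (measure_ne_top μ _)) hint
        measurableSet_Ico
      intro u hu
      exact htexp.trans (pow_le_pow_left₀ ht0 hu.1 n)
    have key2 : (∫ u in Set.Ico t 1, u ^ n ∂μ) ≤ ∫ u in Set.Ico (0:ℝ) 1, u ^ n ∂μ := by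
      apply setIntegral_mono_set (mInt μ n)
      · filter_upwards [ae_restrict_mem measurableSet_Ico] with u hu using pow_nonneg hu.1 n
      · exact HasSubset.Subset.eventuallyLE (Set.Ico_subset_Ico ht0 le_rfl)
    have hrpow : ((n:ℝ)+1) ^ (-s) ≤ (1-t) ^ s := by
      have r1 : (0:ℝ) < x := by rw [hx]; positivity
      have r2 : ((n:ℝ)+1) ^ (-s) ≤ x ^ (-s) :=
        Real.rpow_le_rpow_of_nonpos r1 hxn1.le (by linarith)
      have r3 : x ^ (-s) = (1-t) ^ s := by
        rw [hx, one_div, Real.inv_rpow h1t.le, Real.rpow_neg h1t.le, inv_inv]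
      linarith
    have final : (μ (Set.Ico t 1)).toReal ≤ Real.exp 2 * C * ((1-t) ^ s) := by
      have f1 : (μ (Set.Ico t 1)).toReal = Real.exp 2 * (Real.exp (-2) * (μ (Set.Ico t 1)).toReal) := by
        rw [← mul_assoc, ← Real.exp_add]
        norm_num
      rw [f1, mul_assoc]
      apply mul_le_mul_of_nonneg_left _ (Real.exp_pos 2).le
      calc Real.exp (-2) * (μ (Set.Ico t 1)).toReal
          ≤ ∫ u in Set.Ico (0:ℝ) 1, u ^ n ∂μ := key.trans key2
        _ ≤ C * ((n:ℝ)+1) ^ (-s) := h n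
        _ ≤ C * (1-t) ^ s := mul_le_mul_of_nonneg_left hrpow hC.le
    nlinarith [mul_nonneg (by positivity : (0:ℝ) ≤ 4*(T+1)) hrs]

private lemma BtoC {s C : ℝ} (hs0 : 0 < s) (hs2 : s ≤ 2) (hC : 0 < C)
    (h : ∀ t ∈ Set.Ico (0:ℝ) 1, (μ (Set.Ico t 1)).toReal ≤ C * (1-t) ^ s) :
    ∃ C' > (0:ℝ), ∀ n : ℕ, (∫ t in Set.Ico (0:ℝ) 1, t ^ n ∂μ) ≤ C' * ((n:ℝ)+1) ^ (-s) := by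
  refine ⟨32 * Real.exp 1 * C + C, by positivity, ?_⟩
  intro n
  rcases Nat.eq_zero_or_pos n with hn0 | hn1
  · subst hn0
    have h0 := h 0 (by constructor <;> norm_num)
    have : (∫ t in Set.Ico (0:ℝ) 1, t ^ 0 ∂μ) = (μ (Set.Ico (0:ℝ) 1)).toReal := by
      simp [setIntegral_const, Measure.real]
    rw [this]
    have e1 : ((0:ℕ):ℝ) + 1 = 1 := by norm_num
    rw [e1, Real.one_rpow]
    have e2 : C * (1 - 0)^s = C := by norm_num
    nlinarith [h0, e2 ▸ h0, Real.exp_pos 1, hC]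
  · -- n ≥ 1
    have hnR : (0:ℝ) < (n:ℝ) := by exact_mod_cast hn1
    -- the slicing function
    set g : ℝ → ℝ := fun t => ∑ j ∈ Finset.Icc 1 n,
      Real.exp (1 - (j:ℝ)) * (Set.Ico (1 - (j:ℝ)/(n:ℝ)) 1).indicator (fun _ => (1:ℝ)) t with hg
    -- pointwise bound
    have hpt : ∀ t ∈ Set.Ico (0:ℝ) 1, t ^ n ≤ g t := by
      rintro t ⟨ht0, ht1⟩
      have hfl : ⌊(n:ℝ) * t⌋₊ < n := by
        rw [Nat.floor_lt (by positivity)]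
        nlinarith [hnR]
      set f : ℕ := ⌊(n:ℝ) * t⌋₊ with hf
      set j0 : ℕ := n - f with hj0
      have hj0mem : j0 ∈ Finset.Icc 1 n := by
        simp only [Finset.mem_Icc]
        omega
      have hcast : ((n - j0 : ℕ) : ℝ) = (f : ℝ) := by
        congr 1
        omega
      have hnj0 : ((n:ℝ) - (j0:ℝ)) = (f:ℝ) := by
        rw [← hcast]
        push_cast [show j0 ≤ n by omega]
        ring
      have hmem : t ∈ Set.Ico (1 - (j0:ℝ)/(n:ℝ)) 1 := by
        constructor
        · have h1 : (f:ℝ) ≤ (n:ℝ) * t := Nat.floor_le (by positivity)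
          have h2 : 1 - (j0:ℝ)/(n:ℝ) = ((n:ℝ) - (j0:ℝ))/(n:ℝ) := by field_simp
          rw [h2, hnj0, div_le_iff₀ hnR]
          nlinarith [h1]
        · exact ht1
      have hbound : t ^ n ≤ Real.exp (1 - (j0:ℝ)) := by
        have b1 : t ≤ Real.exp (t - 1) := by linarith [Real.add_one_le_exp (t-1)]
        have b2 : t ^ n ≤ Real.exp (t-1) ^ n := pow_le_pow_left₀ ht0 b1 n
        have b3 : Real.exp (t-1) ^ n = Real.exp ((n:ℝ)*(t-1)) := by
          rw [← Real.exp_nat_mul]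
        have b4 : (n:ℝ)*(t-1) ≤ 1 - (j0:ℝ) := by
          have h2 : (n:ℝ) * t < (f:ℝ) + 1 := Nat.lt_floor_add_one _
          nlinarith [hnj0]
        calc t ^ n ≤ Real.exp (t-1) ^ n := b2
          _ = Real.exp ((n:ℝ)*(t-1)) := b3
          _ ≤ Real.exp (1 - (j0:ℝ)) := Real.exp_le_exp.mpr b4
      calc t ^ n ≤ Real.exp (1 - (j0:ℝ)) := hbound
        _ = Real.exp (1 - (j0:ℝ)) * (Set.Ico (1 - (j0:ℝ)/(n:ℝ)) 1).indicator (fun _ => (1:ℝ)) t := by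
            rw [Set.indicator_of_mem hmem]
            norm_num
        _ ≤ g t := by
            simp only [hg]
            exact Finset.single_le_sum
              (f := fun j : ℕ => Real.exp (1 - (j:ℝ)) * (Set.Ico (1 - (j:ℝ)/(n:ℝ)) 1).indicator (fun _ => (1:ℝ)) t)
              (fun j _ => mul_nonneg (Real.exp_pos _).le
                (Set.indicator_nonneg (fun _ _ => zero_le_one) t)) hj0mem
    -- integrability of g
    have hgint : IntegrableOn g (Set.Ico (0:ℝ) 1) μ := by
      apply integrable_finset_sum
      intro j _
      apply Integrable.const_mul
      exact (integrable_const (1:ℝ)).indicator measurableSet_Ico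
    -- integrate
    have hint : (∫ t in Set.Ico (0:ℝ) 1, t ^ n ∂μ) ≤ ∫ t in Set.Ico (0:ℝ) 1, g t ∂μ :=
      setIntegral_mono_on (mInt μ n) hgint measurableSet_Ico hpt
    have hgeval : (∫ t in Set.Ico (0:ℝ) 1, g t ∂μ)
        = ∑ j ∈ Finset.Icc 1 n, Real.exp (1 - (j:ℝ)) * (μ (Set.Ico (1 - (j:ℝ)/(n:ℝ)) 1)).toReal := by
      rw [hg, integral_finset_sum]
      · apply Finset.sum_congr rfl
        intro j hj
        rw [integral_const_mul, setIntegral_indicator measurableSet_Ico]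
        have hj' : 1 ≤ j ∧ j ≤ n := by simpa using hj
        have hsub : Set.Ico (0:ℝ) 1 ∩ Set.Ico (1 - (j:ℝ)/(n:ℝ)) 1 = Set.Ico (1 - (j:ℝ)/(n:ℝ)) 1 := by
          apply Set.inter_eq_right.mpr
          apply Set.Ico_subset_Ico le_rfl le_rfl |>.trans
          intro u hu
          constructor
          · have : (j:ℝ)/(n:ℝ) ≤ 1 := by
              rw [div_le_one hnR]
              exact_mod_cast hj'.2
            linarith [hu.1]
          · exact hu.2
        rw [hsub, setIntegral_const]
        simp [smul_eq_mul, Measure.real]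
      · intro j _
        apply Integrable.const_mul
        exact (integrable_const (1:ℝ)).indicator measurableSet_Ico
    -- bound the sum
    have hsum : ∑ j ∈ Finset.Icc 1 n, Real.exp (1 - (j:ℝ)) * (μ (Set.Ico (1 - (j:ℝ)/(n:ℝ)) 1)).toReal
        ≤ 8 * Real.exp 1 * C * (n:ℝ) ^ (-s) := by
      have term : ∀ j ∈ Finset.Icc 1 n, Real.exp (1 - (j:ℝ)) * (μ (Set.Ico (1 - (j:ℝ)/(n:ℝ)) 1)).toReal
          ≤ Real.exp 1 * C * (n:ℝ) ^ (-s) * (Real.exp (-(j:ℝ)) * (j:ℝ)^(2:ℕ)) := by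
        intro j hj
        have hj' : 1 ≤ j ∧ j ≤ n := by simpa using hj
        have hj1 : (1:ℝ) ≤ (j:ℝ) := by exact_mod_cast hj'.1
        have hjn : (j:ℝ) ≤ (n:ℝ) := by exact_mod_cast hj'.2
        have ha0 : 0 ≤ 1 - (j:ℝ)/(n:ℝ) := by
          rw [sub_nonneg, div_le_one hnR]
          exact hjn
        have ha1 : 1 - (j:ℝ)/(n:ℝ) < 1 := by
          have : 0 < (j:ℝ)/(n:ℝ) := by positivity
          linarith
        have hmeas := h _ ⟨ha0, ha1⟩
        have heq : 1 - (1 - (j:ℝ)/(n:ℝ)) = (j:ℝ)/(n:ℝ) := by ring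
        rw [heq] at hmeas
        have hrj : ((j:ℝ)/(n:ℝ)) ^ s ≤ (j:ℝ)^(2:ℕ) * (n:ℝ) ^ (-s) := by
          have r1 : ((j:ℝ)/(n:ℝ)) ^ s = (j:ℝ)^s * (n:ℝ)^(-s) := by
            rw [Real.div_rpow (by positivity) hnR.le, Real.rpow_neg hnR.le, div_eq_mul_inv]
          have r2 : (j:ℝ)^s ≤ (j:ℝ)^(2:ℝ) := Real.rpow_le_rpow_of_exponent_le hj1 hs2
          have r3 : (j:ℝ)^(2:ℝ) = (j:ℝ)^(2:ℕ) := by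
            rw [show (2:ℝ) = ((2:ℕ):ℝ) by norm_num, Real.rpow_natCast]
          rw [r1]
          apply mul_le_mul_of_nonneg_right _ (Real.rpow_nonneg hnR.le _)
          rw [← r3]
          exact r2
        have hexp : Real.exp (1 - (j:ℝ)) = Real.exp 1 * Real.exp (-(j:ℝ)) := by
          rw [← Real.exp_add]
          ring_nf
        calc Real.exp (1 - (j:ℝ)) * (μ (Set.Ico (1 - (j:ℝ)/(n:ℝ)) 1)).toReal
            ≤ Real.exp (1 - (j:ℝ)) * (C * ((j:ℝ)/(n:ℝ)) ^ s) :=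
              mul_le_mul_of_nonneg_left hmeas (Real.exp_pos _).le
          _ ≤ Real.exp (1 - (j:ℝ)) * (C * ((j:ℝ)^(2:ℕ) * (n:ℝ) ^ (-s))) := by
              apply mul_le_mul_of_nonneg_left _ (Real.exp_pos _).le
              exact mul_le_mul_of_nonneg_left hrj hC.le
          _ = Real.exp 1 * C * (n:ℝ) ^ (-s) * (Real.exp (-(j:ℝ)) * (j:ℝ)^(2:ℕ)) := by
              rw [hexp]
              ring
      calc ∑ j ∈ Finset.Icc 1 n, Real.exp (1 - (j:ℝ)) * (μ (Set.Ico (1 - (j:ℝ)/(n:ℝ)) 1)).toReal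
          ≤ ∑ j ∈ Finset.Icc 1 n, Real.exp 1 * C * (n:ℝ) ^ (-s) * (Real.exp (-(j:ℝ)) * (j:ℝ)^(2:ℕ)) :=
            Finset.sum_le_sum term
        _ = Real.exp 1 * C * (n:ℝ) ^ (-s) * ∑ j ∈ Finset.Icc 1 n, (Real.exp (-(j:ℝ)) * (j:ℝ)^(2:ℕ)) := by
            rw [Finset.mul_sum]
        _ ≤ Real.exp 1 * C * (n:ℝ) ^ (-s) * 8 := by
            apply mul_le_mul_of_nonneg_left (geo_sum_bound n) (by positivity)
        _ = 8 * Real.exp 1 * C * (n:ℝ) ^ (-s) := by ring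
    -- n^{-s} ≤ 4 (n+1)^{-s}
    have hshift : (n:ℝ) ^ (-s) ≤ 4 * ((n:ℝ)+1) ^ (-s) := by
      have r1 : ((n:ℝ)+1)/2 ≤ (n:ℝ) := by
        have : (1:ℝ) ≤ (n:ℝ) := by exact_mod_cast hn1
        linarith
      have r2 : (n:ℝ) ^ (-s) ≤ (((n:ℝ)+1)/2) ^ (-s) :=
        Real.rpow_le_rpow_of_nonpos (by positivity) r1 (by linarith)
      have r3 : (((n:ℝ)+1)/2) ^ (-s) = ((n:ℝ)+1)^(-s) * (2:ℝ)^s := by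
        rw [Real.div_rpow (by positivity) (by norm_num), Real.rpow_neg (by norm_num : (0:ℝ) ≤ 2)]
        field_simp
      have r4 : (2:ℝ)^s ≤ 4 := by
        have : (2:ℝ)^s ≤ (2:ℝ)^(2:ℝ) := Real.rpow_le_rpow_of_exponent_le (by norm_num) hs2
        have h4 : (2:ℝ)^(2:ℝ) = 4 := by
          rw [show (2:ℝ) = ((2:ℕ):ℝ) by norm_num, Real.rpow_natCast]
          norm_num
        linarith
      have r5 : ((n:ℝ)+1)^(-s) * (2:ℝ)^s ≤ ((n:ℝ)+1)^(-s) * 4 :=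
        mul_le_mul_of_nonneg_left r4 (Real.rpow_nonneg (by positivity) _)
      calc (n:ℝ) ^ (-s) ≤ (((n:ℝ)+1)/2) ^ (-s) := r2
        _ = ((n:ℝ)+1)^(-s) * (2:ℝ)^s := r3
        _ ≤ ((n:ℝ)+1)^(-s) * 4 := r5
        _ = 4 * ((n:ℝ)+1)^(-s) := by ring
    -- combine
    have : (∫ t in Set.Ico (0:ℝ) 1, t ^ n ∂μ) ≤ 8 * Real.exp 1 * C * (4 * ((n:ℝ)+1) ^ (-s)) := by
      calc (∫ t in Set.Ico (0:ℝ) 1, t ^ n ∂μ) ≤ ∫ t in Set.Ico (0:ℝ) 1, g t ∂μ := hint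
        _ = _ := hgeval
        _ ≤ 8 * Real.exp 1 * C * (n:ℝ) ^ (-s) := hsum
        _ ≤ 8 * Real.exp 1 * C * (4 * ((n:ℝ)+1) ^ (-s)) :=
            mul_le_mul_of_nonneg_left hshift (by positivity)
    have hnn : (0:ℝ) ≤ ((n:ℝ)+1)^(-s) := Real.rpow_nonneg (by positivity) _
    nlinarith [this, hnn, hC]

private lemma CtoA {α β C : ℝ} (hα0 : 0 < α) (hα2 : α < 2) (hβ0 : 0 < β) (hβ2 : β < 2)
    (hC : 0 < C)
    (hc : ∀ n : ℕ, (∫ t in Set.Ico (0:ℝ) 1, t ^ n ∂μ) ≤ C * ((n : ℝ) + 1) ^ (-(1 + (α - β) / 2))) :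
    ∃ C' > (0 : ℝ), ∀ a : ℕ → ℂ,
        Summable (fun n : ℕ => ((n : ℝ) + 1) ^ (1 - α) * ‖a n‖ ^ 2) →
        Summable (fun n : ℕ => ((n : ℝ) + 1) ^ (1 - β) *
          (∫ t in Set.Ico (0 : ℝ) 1, t ^ n ∂μ) ^ 2 * ‖∑ k ∈ Finset.range (n + 1), a k‖ ^ 2) ∧
        ∑' n : ℕ, ((n : ℝ) + 1) ^ (1 - β) *
            (∫ t in Set.Ico (0 : ℝ) 1, t ^ n ∂μ) ^ 2 * ‖∑ k ∈ Finset.range (n + 1), a k‖ ^ 2 ≤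
          C' * ∑' n : ℕ, ((n : ℝ) + 1) ^ (1 - α) * ‖a n‖ ^ 2 := by
  refine ⟨8 * C^2 / α^2, by positivity, ?_⟩
  intro a hsum
  set m : ℕ → ℝ := fun n => ∫ t in Set.Ico (0:ℝ) 1, t ^ n ∂μ with hm
  set F : ℕ → ℝ := fun n => ((n : ℝ) + 1) ^ (1 - β) * (m n) ^ 2
      * ‖∑ k ∈ Finset.range (n + 1), a k‖ ^ 2 with hF
  set Y : ℕ → ℝ := fun n => ((n : ℝ) + 1) ^ (1 - α) * ‖a n‖ ^ 2 with hY
  set W : ℝ := ∑' n, Y n with hW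
  have hYnn : ∀ n, 0 ≤ Y n := fun n => by
    apply mul_nonneg (Real.rpow_nonneg (by positivity) _) (sq_nonneg _)
  have hWnn : 0 ≤ W := tsum_nonneg hYnn
  have hFnn : ∀ n, 0 ≤ F n := fun n => by
    apply mul_nonneg (mul_nonneg (Real.rpow_nonneg (by positivity) _) (sq_nonneg _)) (sq_nonneg _)
  -- pointwise bound on F
  set w : ℕ → ℝ := fun k => ((k:ℝ)+1) ^ (1 - α/2) * ‖a k‖^2 with hw
  set c : ℕ → ℝ := fun n => ((n:ℝ)+1) ^ (-1 - α/2) with hc'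
  have key : ∀ n : ℕ, F n ≤ (2*C^2/α) * (c n * ∑ k ∈ range (n+1), w k) := by
    intro n
    have hn1 : (0:ℝ) < (n:ℝ) + 1 := by positivity
    -- (i) m n ^ 2 bound
    have hi : (m n)^2 ≤ C^2 * ((n:ℝ)+1) ^ (-(2 + α - β)) := by
      have h1 : m n ≤ C * ((n:ℝ)+1) ^ (-(1 + (α - β)/2)) := hc n
      have h2 : (m n)^2 ≤ (C * ((n:ℝ)+1) ^ (-(1 + (α - β)/2)))^2 := by
        apply sq_le_sq' _ h1
        have := mNonneg μ n
        nlinarith [this, h1]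
      have h3 : (C * ((n:ℝ)+1) ^ (-(1 + (α - β)/2)))^2
          = C^2 * ((n:ℝ)+1) ^ (-(2 + α - β)) := by
        rw [mul_pow, sq (((n:ℝ)+1) ^ (-(1 + (α - β)/2))), ← Real.rpow_add hn1]
        congr 1
        ring
      linarith [h3 ▸ h2]
    -- (iii)+(iv) Cauchy-Schwarz
    have hcs : ‖∑ k ∈ Finset.range (n + 1), a k‖ ^ 2
        ≤ (2/α) * ((n:ℝ)+1) ^ (α/2) * ∑ k ∈ range (n+1), w k := by
      have c1 : ‖∑ k ∈ Finset.range (n + 1), a k‖ ≤ ∑ k ∈ range (n+1), ‖a k‖ :=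
        norm_sum_le _ _
      have c2 : ‖∑ k ∈ Finset.range (n + 1), a k‖^2 ≤ (∑ k ∈ range (n+1), ‖a k‖)^2 := by
        apply sq_le_sq' _ c1
        have : (0:ℝ) ≤ ∑ k ∈ range (n+1), ‖a k‖ :=
          Finset.sum_nonneg (fun k _ => norm_nonneg _)
        nlinarith [norm_nonneg (∑ k ∈ Finset.range (n + 1), a k)]
      have c3 : ∀ k, ‖a k‖ = ((k:ℝ)+1) ^ ((α/2-1)/2) * (((k:ℝ)+1) ^ ((1-α/2)/2) * ‖a k‖) := by
        intro k
        rw [← mul_assoc, ← Real.rpow_add (by positivity),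
          show (α/2-1)/2 + (1-α/2)/2 = 0 by ring, Real.rpow_zero, one_mul]
      have c4 : (∑ k ∈ range (n+1), ‖a k‖)^2
          ≤ (∑ k ∈ range (n+1), (((k:ℝ)+1) ^ ((α/2-1)/2))^2)
            * (∑ k ∈ range (n+1), (((k:ℝ)+1) ^ ((1-α/2)/2) * ‖a k‖)^2) := by
        have := Finset.sum_mul_sq_le_sq_mul_sq (range (n+1))
          (fun k => ((k:ℝ)+1) ^ ((α/2-1)/2)) (fun k => ((k:ℝ)+1) ^ ((1-α/2)/2) * ‖a k‖)
        calc (∑ k ∈ range (n+1), ‖a k‖)^2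
            = (∑ k ∈ range (n+1), ((k:ℝ)+1) ^ ((α/2-1)/2) * (((k:ℝ)+1) ^ ((1-α/2)/2) * ‖a k‖))^2 := by
              congr 1
              exact Finset.sum_congr rfl (fun k _ => c3 k)
          _ ≤ _ := this
      have c5 : ∀ k : ℕ, (((k:ℝ)+1) ^ ((α/2-1)/2))^2 = ((k:ℝ)+1) ^ (α/2-1) := by
        intro k
        rw [sq, ← Real.rpow_add (by positivity)]
        norm_num
      have c6 : ∀ k : ℕ, (((k:ℝ)+1) ^ ((1-α/2)/2) * ‖a k‖)^2 = w k := by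
        intro k
        rw [mul_pow, sq (((k:ℝ)+1) ^ ((1-α/2)/2)), ← Real.rpow_add (by positivity), hw]
        norm_num
      have c7 : ∑ k ∈ range (n+1), (((k:ℝ)+1) ^ ((α/2-1)/2))^2 ≤ (2/α) * ((n:ℝ)+1) ^ (α/2) := by
        have := sum_rpow_le (γ := α/2) (by positivity) (by linarith) (n+1)
        push_cast at this
        calc ∑ k ∈ range (n+1), (((k:ℝ)+1) ^ ((α/2-1)/2))^2
            = ∑ k ∈ range (n+1), ((k:ℝ)+1) ^ (α/2-1) :=
              Finset.sum_congr rfl (fun k _ => c5 k)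
          _ ≤ ((n:ℝ)+1) ^ (α/2) / (α/2) := this
          _ = (2/α) * ((n:ℝ)+1) ^ (α/2) := by field_simp
      have c8 : (0:ℝ) ≤ ∑ k ∈ range (n+1), w k :=
        Finset.sum_nonneg (fun k _ => mul_nonneg (Real.rpow_nonneg (by positivity) _) (sq_nonneg _))
      calc ‖∑ k ∈ Finset.range (n + 1), a k‖ ^ 2
          ≤ (∑ k ∈ range (n+1), (((k:ℝ)+1) ^ ((α/2-1)/2))^2)
            * (∑ k ∈ range (n+1), (((k:ℝ)+1) ^ ((1-α/2)/2) * ‖a k‖)^2) := le_trans c2 c4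
        _ = (∑ k ∈ range (n+1), (((k:ℝ)+1) ^ ((α/2-1)/2))^2) * ∑ k ∈ range (n+1), w k := by
            congr 1
            exact Finset.sum_congr rfl (fun k _ => c6 k)
        _ ≤ ((2/α) * ((n:ℝ)+1) ^ (α/2)) * ∑ k ∈ range (n+1), w k :=
            mul_le_mul_of_nonneg_right c7 c8
    -- combine
    have hrw : ((n:ℝ)+1) ^ (1-β) * (C^2 * ((n:ℝ)+1) ^ (-(2 + α - β))) * ((2/α) * ((n:ℝ)+1) ^ (α/2))
        = (2*C^2/α) * c n := by
      rw [hc']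
      simp only []
      rw [show ((n:ℝ)+1) ^ (1-β) * (C^2 * ((n:ℝ)+1) ^ (-(2 + α - β))) * ((2/α) * ((n:ℝ)+1) ^ (α/2))
        = (2*C^2/α) * (((n:ℝ)+1) ^ (1-β) * ((n:ℝ)+1) ^ (-(2 + α - β)) * ((n:ℝ)+1) ^ (α/2)) by ring]
      congr 1
      rw [← Real.rpow_add hn1, ← Real.rpow_add hn1]
      congr 1
      ring
    have hsq : (0:ℝ) ≤ ‖∑ k ∈ Finset.range (n + 1), a k‖ ^ 2 := sq_nonneg _
    have hnb : (0:ℝ) ≤ ((n:ℝ)+1) ^ (1-β) := Real.rpow_nonneg hn1.le _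
    have c8 : (0:ℝ) ≤ ∑ k ∈ range (n+1), w k :=
      Finset.sum_nonneg (fun k _ => mul_nonneg (Real.rpow_nonneg (by positivity) _) (sq_nonneg _))
    calc F n = ((n:ℝ)+1) ^ (1-β) * (m n)^2 * ‖∑ k ∈ Finset.range (n + 1), a k‖ ^ 2 := rfl
      _ ≤ ((n:ℝ)+1) ^ (1-β) * (C^2 * ((n:ℝ)+1) ^ (-(2 + α - β)))
            * ‖∑ k ∈ Finset.range (n + 1), a k‖ ^ 2 := by
          apply mul_le_mul_of_nonneg_right _ hsq
          exact mul_le_mul_of_nonneg_left hi hnb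
      _ ≤ ((n:ℝ)+1) ^ (1-β) * (C^2 * ((n:ℝ)+1) ^ (-(2 + α - β)))
            * ((2/α) * ((n:ℝ)+1) ^ (α/2) * ∑ k ∈ range (n+1), w k) := by
          apply mul_le_mul_of_nonneg_left hcs
          positivity
      _ = (2*C^2/α) * (c n * ∑ k ∈ range (n+1), w k) := by
          rw [← mul_assoc, hrw]
          ring
  -- partial sums bounded
  have partial_bound : ∀ M : ℕ, ∑ n ∈ range M, F n ≤ (8 * C^2 / α^2) * W := by
    intro M
    have p1 : ∑ n ∈ range M, F n ≤ (2*C^2/α) * ∑ n ∈ range M, (c n * ∑ k ∈ range (n+1), w k) := by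
      rw [Finset.mul_sum]
      exact Finset.sum_le_sum (fun n _ => key n)
    have p2 : ∑ n ∈ range M, (c n * ∑ k ∈ range (n+1), w k)
        = ∑ k ∈ range M, (w k * ∑ n ∈ Finset.Ico k M, c n) := swap_sum c w M
    have p3 : ∑ k ∈ range M, (w k * ∑ n ∈ Finset.Ico k M, c n)
        ≤ ∑ k ∈ range M, (w k * ((4/α) * ((k:ℝ)+1) ^ (-(α/2)))) := by
      apply Finset.sum_le_sum
      intro k _
      apply mul_le_mul_of_nonneg_left _ (mul_nonneg (Real.rpow_nonneg (by positivity) _) (sq_nonneg _))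
      have := tail_sum_le (ε := α/2) (by positivity) (by linarith) k M
      calc ∑ n ∈ Finset.Ico k M, c n
          = ∑ n ∈ Finset.Ico k M, ((n:ℝ)+1) ^ (-1 - α/2) := rfl
        _ ≤ (2/(α/2)) * ((k:ℝ)+1) ^ (-(α/2)) := this
        _ = (4/α) * ((k:ℝ)+1) ^ (-(α/2)) := by
            congr 1
            rw [div_div_eq_mul_div]
            norm_num
    have p4 : ∀ k : ℕ, w k * ((4/α) * ((k:ℝ)+1) ^ (-(α/2))) = (4/α) * Y k := by
      intro k
      rw [hw, hY]
      simp only []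
      rw [show ((k:ℝ)+1) ^ (1-α/2) * ‖a k‖^2 * ((4/α) * ((k:ℝ)+1) ^ (-(α/2)))
        = (4/α) * (((k:ℝ)+1) ^ (1-α/2) * ((k:ℝ)+1) ^ (-(α/2)) * ‖a k‖^2) by ring]
      congr 2
      rw [← Real.rpow_add (by positivity)]
      congr 1
      ring
    have p5 : ∑ k ∈ range M, (4/α) * Y k ≤ (4/α) * W := by
      rw [← Finset.mul_sum]
      apply mul_le_mul_of_nonneg_left _ (by positivity)
      exact hsum.sum_le_tsum (range M) (fun k _ => hYnn k)
    calc ∑ n ∈ range M, F n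
        ≤ (2*C^2/α) * ∑ n ∈ range M, (c n * ∑ k ∈ range (n+1), w k) := p1
      _ = (2*C^2/α) * ∑ k ∈ range M, (w k * ∑ n ∈ Finset.Ico k M, c n) := by rw [p2]
      _ ≤ (2*C^2/α) * ∑ k ∈ range M, (w k * ((4/α) * ((k:ℝ)+1) ^ (-(α/2)))) := by
          apply mul_le_mul_of_nonneg_left p3 (by positivity)
      _ = (2*C^2/α) * ∑ k ∈ range M, (4/α) * Y k := by
          congr 1
          exact Finset.sum_congr rfl (fun k _ => p4 k)
      _ ≤ (2*C^2/α) * ((4/α) * W) := by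
          apply mul_le_mul_of_nonneg_left p5 (by positivity)
      _ = (8 * C^2 / α^2) * W := by
          field_simp
          ring
  have hFsummable : Summable F := summable_of_sum_range_le hFnn partial_bound
  exact ⟨hFsummable, hFsummable.tsum_le_of_sum_range_le partial_bound⟩

private lemma AtoC {α β : ℝ} (hα0 : 0 < α) (hα2 : α < 2) (hβ0 : 0 < β) (hβ2 : β < 2)
    (hA : ∃ C > (0 : ℝ), ∀ a : ℕ → ℂ,
        Summable (fun n : ℕ => ((n : ℝ) + 1) ^ (1 - α) * ‖a n‖ ^ 2) →
        Summable (fun n : ℕ => ((n : ℝ) + 1) ^ (1 - β) *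
          (∫ t in Set.Ico (0 : ℝ) 1, t ^ n ∂μ) ^ 2 * ‖∑ k ∈ Finset.range (n + 1), a k‖ ^ 2) ∧
        ∑' n : ℕ, ((n : ℝ) + 1) ^ (1 - β) *
            (∫ t in Set.Ico (0 : ℝ) 1, t ^ n ∂μ) ^ 2 * ‖∑ k ∈ Finset.range (n + 1), a k‖ ^ 2 ≤
          C * ∑' n : ℕ, ((n : ℝ) + 1) ^ (1 - α) * ‖a n‖ ^ 2) :
    ∃ C' > (0 : ℝ), ∀ n : ℕ,
      (∫ t in Set.Ico (0:ℝ) 1, t ^ n ∂μ) ≤ C' * ((n : ℝ) + 1) ^ (-(1 + (α - β) / 2)) := by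
  obtain ⟨C, hC, hbound⟩ := hA
  refine ⟨Real.sqrt (432 * C / α), Real.sqrt_pos.mpr (by positivity), ?_⟩
  intro N
  set m : ℕ → ℝ := fun n => ∫ t in Set.Ico (0:ℝ) 1, t ^ n ∂μ with hm
  set P : ℝ := (N : ℝ) + 1 with hP
  have hP0 : (0:ℝ) < P := by positivity
  -- test sequence
  set a : ℕ → ℂ := fun k => if k ≤ N then (((((k:ℝ)+1) ^ (α-1) : ℝ)) : ℂ) else 0 with ha
  have hYsupp : ∀ n ∉ range (N+1), ((n : ℝ) + 1) ^ (1 - α) * ‖a n‖ ^ 2 = 0 := by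
    intro n hn
    have : ¬ (n ≤ N) := by simpa [Nat.lt_succ_iff] using hn
    simp [ha, this]
  have hsumY : Summable (fun n : ℕ => ((n : ℝ) + 1) ^ (1 - α) * ‖a n‖ ^ 2) :=
    summable_of_ne_finset_zero hYsupp
  obtain ⟨hFs, hineq⟩ := hbound a hsumY
  -- upper bound for tsum Y
  have hYval : ∀ n ∈ range (N+1), ((n : ℝ) + 1) ^ (1 - α) * ‖a n‖ ^ 2
      = ((n:ℝ)+1) ^ (α - 1) := by
    intro n hn
    have hnN : n ≤ N := Nat.lt_succ_iff.mp (mem_range.mp hn)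
    have hpos : (0:ℝ) < (n:ℝ)+1 := by positivity
    have h1 : ‖a n‖ = ((n:ℝ)+1) ^ (α-1) := by
      rw [ha]
      simp only [hnN, if_true]
      rw [Complex.norm_real, Real.norm_eq_abs, abs_of_nonneg (Real.rpow_nonneg hpos.le _)]
    rw [h1, sq, ← Real.rpow_add hpos, ← Real.rpow_add hpos]
    congr 1
    ring
  have hYsum : ∑' n : ℕ, ((n : ℝ) + 1) ^ (1 - α) * ‖a n‖ ^ 2 ≤ (2/α) * P ^ α := by
    rw [tsum_eq_sum hYsupp, Finset.sum_congr rfl hYval]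
    have step : ∀ k ∈ range (N+1), ((k:ℝ)+1) ^ (α - 1) ≤ ((k:ℝ)+1) ^ (α/2 - 1) * P ^ (α/2) := by
      intro k hk
      have hkN : k ≤ N := Nat.lt_succ_iff.mp (mem_range.mp hk)
      have hpos : (0:ℝ) < (k:ℝ)+1 := by positivity
      have h1 : ((k:ℝ)+1) ^ (α-1) = ((k:ℝ)+1) ^ (α/2-1) * ((k:ℝ)+1) ^ (α/2) := by
        rw [← Real.rpow_add hpos]
        congr 1
        ring
      rw [h1]
      apply mul_le_mul_of_nonneg_left _ (Real.rpow_nonneg hpos.le _)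
      apply Real.rpow_le_rpow hpos.le _ (by positivity)
      rw [hP]
      have : ((k:ℝ)) ≤ (N:ℝ) := by exact_mod_cast hkN
      linarith
    calc ∑ k ∈ range (N+1), ((k:ℝ)+1) ^ (α - 1)
        ≤ ∑ k ∈ range (N+1), ((k:ℝ)+1) ^ (α/2 - 1) * P ^ (α/2) := Finset.sum_le_sum step
      _ = (∑ k ∈ range (N+1), ((k:ℝ)+1) ^ (α/2 - 1)) * P ^ (α/2) := by
          rw [Finset.sum_mul]
      _ ≤ (((N+1:ℕ):ℝ) ^ (α/2) / (α/2)) * P ^ (α/2) := by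
          apply mul_le_mul_of_nonneg_right (sum_rpow_le (by positivity) (by linarith) (N+1))
            (Real.rpow_nonneg hP0.le _)
      _ = (2/α) * P ^ α := by
          have hc : ((N+1:ℕ):ℝ) = P := by rw [hP]; push_cast; ring
          rw [hc, div_mul_eq_mul_div, ← Real.rpow_add hP0]
          rw [show α/2 + α/2 = α by ring]
          field_simp
  -- lower bound for tsum F
  set F : ℕ → ℝ := fun n => ((n : ℝ) + 1) ^ (1 - β) * (m n) ^ 2
      * ‖∑ k ∈ Finset.range (n + 1), a k‖ ^ 2 with hF
  have hFnn : ∀ n, 0 ≤ F n := fun n =>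
    mul_nonneg (mul_nonneg (Real.rpow_nonneg (by positivity) _) (sq_nonneg _)) (sq_nonneg _)
  have hAn : ∀ n ∈ range (N+1), ((n:ℝ)+1) ^ α / 6 ≤ ‖∑ k ∈ Finset.range (n + 1), a k‖ := by
    intro n hn
    have hnN : n ≤ N := Nat.lt_succ_iff.mp (mem_range.mp hn)
    have hsum_eq : ∑ k ∈ Finset.range (n + 1), a k
        = (((∑ k ∈ range (n+1), ((k:ℝ)+1) ^ (α-1)) : ℝ) : ℂ) := by
      rw [Complex.ofReal_sum]
      apply Finset.sum_congr rfl
      intro k hk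
      have hkN : k ≤ N := le_trans (Nat.lt_succ_iff.mp (mem_range.mp hk)) hnN
      rw [ha]
      simp [hkN]
    have hnonneg : (0:ℝ) ≤ ∑ k ∈ range (n+1), ((k:ℝ)+1) ^ (α-1) :=
      Finset.sum_nonneg (fun k _ => Real.rpow_nonneg (by positivity) _)
    rw [hsum_eq, Complex.norm_real, Real.norm_eq_abs, abs_of_nonneg hnonneg]
    have := sum_rpow_ge (c := α - 1) (by linarith) n
    rw [show α - 1 + 1 = α by ring] at this
    exact this
  have hFlow : ∀ n ∈ range (N+1), (m N)^2/36 * ((n:ℝ)+1)^(1+2*α-β) ≤ F n := by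
    intro n hn
    have hnN : n ≤ N := Nat.lt_succ_iff.mp (mem_range.mp hn)
    have hpos : (0:ℝ) < (n:ℝ)+1 := by positivity
    have hmn : (m N)^2 ≤ (m n)^2 := by
      have h1 := mAnti μ hnN
      have h2 := mNonneg μ N
      rw [hm]
      nlinarith [h1, h2]
    have hnorm : (((n:ℝ)+1) ^ α / 6)^2 ≤ ‖∑ k ∈ Finset.range (n + 1), a k‖ ^ 2 := by
      apply pow_le_pow_left₀ (by positivity) (hAn n hn)
    have hsq : (((n:ℝ)+1) ^ α / 6)^2 = ((n:ℝ)+1) ^ (2*α) / 36 := by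
      rw [div_pow, sq (((n:ℝ)+1) ^ α), ← Real.rpow_add hpos]
      norm_num
      congr 1
      ring
    have hexp : ((n:ℝ)+1) ^ (1-β) * (((n:ℝ)+1) ^ (2*α) / 36) = ((n:ℝ)+1)^(1+2*α-β) / 36 := by
      rw [mul_div_assoc', ← Real.rpow_add hpos]
      congr 2
      ring
    calc (m N)^2/36 * ((n:ℝ)+1)^(1+2*α-β)
        = ((n:ℝ)+1) ^ (1-β) * (m N)^2 * (((n:ℝ)+1) ^ (2*α) / 36) := by
          rw [show ((n:ℝ)+1) ^ (1-β) * (m N)^2 * (((n:ℝ)+1) ^ (2*α) / 36)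
            = (m N)^2 * (((n:ℝ)+1) ^ (1-β) * (((n:ℝ)+1) ^ (2*α) / 36)) by ring, hexp]
          ring
      _ ≤ ((n:ℝ)+1) ^ (1-β) * (m n)^2 * (((n:ℝ)+1) ^ α / 6)^2 := by
          rw [hsq]
          apply mul_le_mul_of_nonneg_right _ (by positivity)
          exact mul_le_mul_of_nonneg_left hmn (Real.rpow_nonneg hpos.le _)
      _ ≤ ((n:ℝ)+1) ^ (1-β) * (m n)^2 * ‖∑ k ∈ Finset.range (n + 1), a k‖ ^ 2 := by
          apply mul_le_mul_of_nonneg_left hnorm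
          exact mul_nonneg (Real.rpow_nonneg hpos.le _) (sq_nonneg _)
      _ = F n := rfl
  -- sum the lower bounds
  have hlowsum : (m N)^2/36 * (P^(2+2*α-β)/6) ≤ ∑' n, F n := by
    have s1 : ∑ n ∈ range (N+1), (m N)^2/36 * ((n:ℝ)+1)^(1+2*α-β)
        ≤ ∑ n ∈ range (N+1), F n := Finset.sum_le_sum hFlow
    have s2 : ∑ n ∈ range (N+1), F n ≤ ∑' n, F n :=
      hFs.sum_le_tsum _ (fun n _ => hFnn n)
    have s3 : (m N)^2/36 * (P^(2+2*α-β)/6)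
        ≤ ∑ n ∈ range (N+1), (m N)^2/36 * ((n:ℝ)+1)^(1+2*α-β) := by
      rw [← Finset.mul_sum]
      apply mul_le_mul_of_nonneg_left _ (by positivity)
      have := sum_rpow_ge (c := 1+2*α-β) (by linarith) N
      rw [show 1+2*α-β+1 = 2+2*α-β by ring] at this
      rw [hP]
      exact this
    linarith
  -- combine
  have hfin : (m N)^2 * P^(2+2*α-β) ≤ 216 * (C * ((2/α) * P ^ α)) := by
    have h1 : ∑' n, F n ≤ C * ((2/α) * P ^ α) := by
      calc ∑' n, F n ≤ C * ∑' n : ℕ, ((n : ℝ) + 1) ^ (1 - α) * ‖a n‖ ^ 2 := hineq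
        _ ≤ C * ((2/α) * P ^ α) := mul_le_mul_of_nonneg_left hYsum hC.le
    nlinarith [hlowsum, h1]
  set e : ℝ := -(1 + (α - β) / 2) with he
  have hQ : P ^ (α - (2+2*α-β)) = (P ^ e)^2 := by
    rw [sq, ← Real.rpow_add hP0, he]
    congr 1
    ring
  have hsq2 : (m N)^2 ≤ (432*C/α) * (P ^ e)^2 := by
    have h2 := mul_le_mul_of_nonneg_right hfin (Real.rpow_nonneg hP0.le (-(2+2*α-β)))
    have h3 : (m N)^2 * P^(2+2*α-β) * P ^ (-(2+2*α-β)) = (m N)^2 := by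
      rw [mul_assoc, ← Real.rpow_add hP0]
      simp
    have h4 : 216 * (C * ((2/α) * P ^ α)) * P ^ (-(2+2*α-β))
        = (432*C/α) * P ^ (α - (2+2*α-β)) := by
      rw [show 216 * (C * ((2/α) * P ^ α)) * P ^ (-(2+2*α-β))
        = (432*C/α) * (P ^ α * P ^ (-(2+2*α-β))) by ring, ← Real.rpow_add hP0]
      congr 2
      try ring
    rw [h3, h4, hQ] at h2
    exact h2
  -- conclude
  have hmN : m N ≤ Real.sqrt (432*C/α) * P ^ e := by
    have g1 : m N = Real.sqrt ((m N)^2) := (Real.sqrt_sq (mNonneg μ N)).symm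
    rw [g1]
    calc Real.sqrt ((m N)^2) ≤ Real.sqrt ((432*C/α) * (P ^ e)^2) := Real.sqrt_le_sqrt hsq2
      _ = Real.sqrt (432*C/α) * P ^ e := by
          rw [Real.sqrt_mul (by positivity), Real.sqrt_sq (Real.rpow_nonneg hP0.le e)]
  exact hmN

end CesaroAux

/-- For `0 < α, β < 2` and a finite positive Borel measure `μ` on `[0,1)`, the following are
equivalent: (1) the generalized Cesàro operator `C_μ` is bounded from `D_α` to `D_β`;
(2) `μ` is a `[1+(α-β)/2]`-Carleson measure on `[0,1)`;
(3) `μ[n] ≤ C (n+1)^{-1-(α-β)/2}` for all `n ≥ 0` and some `C > 0`. -/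
theorem generalized_cesaro_bounded_iff (α β : ℝ) (hα0 : 0 < α) (hα2 : α < 2)
    (hβ0 : 0 < β) (hβ2 : β < 2)
    (μ : Measure ℝ) [IsFiniteMeasure μ] (hμsupp : μ (Set.Ico (0 : ℝ) 1)ᶜ = 0) :
    ((∃ C > (0 : ℝ), ∀ a : ℕ → ℂ,
        Summable (fun n : ℕ => ((n : ℝ) + 1) ^ (1 - α) * ‖a n‖ ^ 2) →
        Summable (fun n : ℕ => ((n : ℝ) + 1) ^ (1 - β) *
          (∫ t in Set.Ico (0 : ℝ) 1, t ^ n ∂μ) ^ 2 * ‖∑ k ∈ Finset.range (n + 1), a k‖ ^ 2) ∧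
        ∑' n : ℕ, ((n : ℝ) + 1) ^ (1 - β) *
            (∫ t in Set.Ico (0 : ℝ) 1, t ^ n ∂μ) ^ 2 * ‖∑ k ∈ Finset.range (n + 1), a k‖ ^ 2 ≤
          C * ∑' n : ℕ, ((n : ℝ) + 1) ^ (1 - α) * ‖a n‖ ^ 2)
      ↔
      (∃ C > (0 : ℝ), ∀ t ∈ Set.Ico (0 : ℝ) 1,
        (μ (Set.Ico t 1)).toReal ≤ C * (1 - t) ^ (1 + (α - β) / 2)))
    ∧
    ((∃ C > (0 : ℝ), ∀ t ∈ Set.Ico (0 : ℝ) 1,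
        (μ (Set.Ico t 1)).toReal ≤ C * (1 - t) ^ (1 + (α - β) / 2))
      ↔
      (∃ C > (0 : ℝ), ∀ n : ℕ,
        (∫ t in Set.Ico (0 : ℝ) 1, t ^ n ∂μ) ≤ C * ((n : ℝ) + 1) ^ (-(1 + (α - β) / 2)))) := by
  have hs0 : (0:ℝ) < 1 + (α - β) / 2 := by linarith
  have hs2 : (1:ℝ) + (α - β) / 2 ≤ 2 := by linarith
  constructor
  · constructor
    · intro hA
      obtain ⟨C, hC, hmom⟩ := AtoC μ hα0 hα2 hβ0 hβ2 hA
      obtain ⟨C2, hC2, hcar⟩ := CtoB μ hs0 hs2 hC hmom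
      exact ⟨C2, hC2, hcar⟩
    · intro hB
      obtain ⟨C, hC, hcar⟩ := hB
      obtain ⟨C2, hC2, hmom⟩ := BtoC μ hs0 hs2 hC hcar
      exact CtoA μ hα0 hα2 hβ0 hβ2 hC2 hmom
  · constructor
    · intro hB
      obtain ⟨C, hC, hcar⟩ := hB
      exact BtoC μ hs0 hs2 hC hcar
    · intro hC3
      obtain ⟨C, hC, hmom⟩ := hC3
      exact CtoB μ hs0 hs2 hC hmom
end

section
/- Let 0 < α < 2, 0 < β < 2, and let μ be a positive (finite) Borel measure on [0,1). Suppose there exists a constant C₅ > 0 such that μ[n] ≤ C₅ (n+1)^{-1-(α-β)/2} for all integers n ≥ 0. Then for every complex sequence (a_n)_{n≥0} with ∑_{n≥0} (n+1)^{1-α} |a_n|² < ∞, one has (∑_{n≥0} (n+1)^{1-β} (μ[n])² |∑_{k=0}^{n} a_k|²)^{1/2} ≤ C₅ (√(2(2+α))/α) (∑_{n≥0} (n+1)^{1-α} |a_n|²)^{1/2}; in particular C_μ is bounded from D_α into D_β. -/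
open MeasureTheory Finset

private lemma aux_rpow_mvt {q : ℝ} (hq : 0 < q) (hq1 : q ≤ 1) (k : ℕ) :
    q * ((k : ℝ) + 1) ^ (q - 1) ≤ ((k : ℝ) + 1) ^ q - (k : ℝ) ^ q := by
  have hk : (0 : ℝ) ≤ k := Nat.cast_nonneg k
  have hlt : (k : ℝ) < (k : ℝ) + 1 := by linarith
  have hcont : ContinuousOn (fun x : ℝ => x ^ q) (Set.Icc (k : ℝ) ((k : ℝ) + 1)) :=
    fun x _ => (Real.continuousAt_rpow_const x q (Or.inr hq.le)).continuousWithinAt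
  have hderiv : ∀ x ∈ Set.Ioo (k : ℝ) ((k : ℝ) + 1),
      HasDerivAt (fun x : ℝ => x ^ q) (q * x ^ (q - 1)) x := by
    intro x hx
    have hx0 : x ≠ 0 := by have := hx.1; nlinarith
    exact Real.hasDerivAt_rpow_const (Or.inl hx0)
  obtain ⟨c, hc, hceq⟩ :=
    exists_hasDerivAt_eq_slope (fun x : ℝ => x ^ q) _ hlt hcont hderiv
  have hc0 : 0 < c := lt_of_le_of_lt hk hc.1
  have hmono : ((k : ℝ) + 1) ^ (q - 1) ≤ c ^ (q - 1) :=
    Real.rpow_le_rpow_of_nonpos hc0 hc.2.le (by linarith)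
  have : q * c ^ (q - 1) = ((k : ℝ) + 1) ^ q - (k : ℝ) ^ q := by
    rw [hceq]; simp
  calc q * ((k : ℝ) + 1) ^ (q - 1) ≤ q * c ^ (q - 1) := by
        exact mul_le_mul_of_nonneg_left hmono hq.le
    _ = _ := this

private lemma aux_rpow_mvt_neg {q : ℝ} (hq : 0 < q) {n : ℕ} (hn : 1 ≤ n) :
    q * ((n : ℝ) + 1) ^ (-q - 1) ≤ (n : ℝ) ^ (-q) - ((n : ℝ) + 1) ^ (-q) := by
  have hn1 : (1 : ℝ) ≤ n := by exact_mod_cast hn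
  have hlt : (n : ℝ) < (n : ℝ) + 1 := by linarith
  have hcont : ContinuousOn (fun x : ℝ => x ^ (-q)) (Set.Icc (n : ℝ) ((n : ℝ) + 1)) := by
    intro x hx
    have hx0 : x ≠ 0 := by have := hx.1; intro h; rw [h] at this; linarith
    exact (Real.continuousAt_rpow_const x (-q) (Or.inl hx0)).continuousWithinAt
  have hderiv : ∀ x ∈ Set.Ioo (n : ℝ) ((n : ℝ) + 1),
      HasDerivAt (fun x : ℝ => x ^ (-q)) ((-q) * x ^ (-q - 1)) x := by
    intro x hx
    have hx0 : x ≠ 0 := by have := hx.1; intro h; rw [h] at this; linarith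
    exact Real.hasDerivAt_rpow_const (Or.inl hx0)
  obtain ⟨c, hc, hceq⟩ :=
    exists_hasDerivAt_eq_slope (fun x : ℝ => x ^ (-q)) _ hlt hcont hderiv
  have hc0 : 0 < c := by have := hc.1; linarith
  have hmono : ((n : ℝ) + 1) ^ (-q - 1) ≤ c ^ (-q - 1) :=
    Real.rpow_le_rpow_of_nonpos hc0 hc.2.le (by linarith)
  have heq : (-q) * c ^ (-q - 1) = ((n : ℝ) + 1) ^ (-q) - (n : ℝ) ^ (-q) := by
    rw [hceq]; simp
  nlinarith [mul_le_mul_of_nonneg_left hmono hq.le]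

private lemma aux_Asum {q : ℝ} (hq : 0 < q) (hq1 : q ≤ 1) (n : ℕ) :
    ∑ k ∈ range (n + 1), ((k : ℝ) + 1) ^ (q - 1) ≤ (1 / q) * ((n : ℝ) + 1) ^ q := by
  have tele : ∑ k ∈ range (n + 1),
      (((k + 1 : ℕ) : ℝ) ^ q - ((k : ℕ) : ℝ) ^ q)
      = ((n + 1 : ℕ) : ℝ) ^ q - ((0 : ℕ) : ℝ) ^ q :=
    Finset.sum_range_sub (fun i => ((i : ℕ) : ℝ) ^ q) (n + 1)
  have h1 : ∑ k ∈ range (n + 1), ((k : ℝ) + 1) ^ (q - 1)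
      ≤ ∑ k ∈ range (n + 1), (1 / q) * (((k : ℝ) + 1) ^ q - (k : ℝ) ^ q) := by
    refine Finset.sum_le_sum fun k _ => ?_
    have h := aux_rpow_mvt hq hq1 k
    have heq : ((k : ℝ) + 1) ^ (q - 1) = (1 / q) * (q * ((k : ℝ) + 1) ^ (q - 1)) := by
      field_simp
    rw [heq]
    exact mul_le_mul_of_nonneg_left h (by positivity)
  refine h1.trans ?_
  rw [← Finset.mul_sum]
  have : ∑ k ∈ range (n + 1), (((k : ℝ) + 1) ^ q - (k : ℝ) ^ q)
      = ((n : ℝ) + 1) ^ q := by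
    have := tele
    push_cast at this
    rw [this, Real.zero_rpow hq.ne', sub_zero]
  rw [this]

private lemma aux_tail {q : ℝ} (hq : 0 < q) (k N : ℕ) :
    ∑ n ∈ Finset.Ico k N, ((n : ℝ) + 1) ^ (-1 - q)
      ≤ (1 + 1 / q) * ((k : ℝ) + 1) ^ (-q) := by
  rcases le_or_gt N k with hNk | hkN
  · rw [Finset.Ico_eq_empty (by omega), Finset.sum_empty]
    positivity
  · rw [Finset.sum_eq_sum_Ico_succ_bot hkN]
    have hbase : (1 : ℝ) ≤ (k : ℝ) + 1 := by
      have : (0 : ℝ) ≤ k := Nat.cast_nonneg k; linarith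
    have h1 : ((k : ℝ) + 1) ^ (-1 - q) ≤ ((k : ℝ) + 1) ^ (-q) :=
      Real.rpow_le_rpow_of_exponent_le hbase (by linarith)
    have h2 : ∑ n ∈ Finset.Ico (k + 1) N, ((n : ℝ) + 1) ^ (-1 - q)
        ≤ (1 / q) * ((k : ℝ) + 1) ^ (-q) := by
      rw [Finset.sum_Ico_eq_sum_range]
      have hterm : ∀ i ∈ range (N - (k + 1)),
          (((k + 1 + i : ℕ) : ℝ) + 1) ^ (-1 - q)
          ≤ (1 / q) * (((k + 1 + i : ℕ) : ℝ) ^ (-q) - (((k + 1 + (i + 1) : ℕ) : ℝ)) ^ (-q)) := by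
        intro i _
        have h := aux_rpow_mvt_neg hq (n := k + 1 + i) (by omega)
        have hc : ((k + 1 + (i + 1) : ℕ) : ℝ) = ((k + 1 + i : ℕ) : ℝ) + 1 := by
          push_cast; ring
        have he : (-1 - q : ℝ) = -q - 1 := by ring
        rw [hc, he]
        have heq : (((k + 1 + i : ℕ) : ℝ) + 1) ^ (-q - 1)
            = (1 / q) * (q * (((k + 1 + i : ℕ) : ℝ) + 1) ^ (-q - 1)) := by field_simp
        rw [heq]
        exact mul_le_mul_of_nonneg_left h (by positivity)
      refine (Finset.sum_le_sum hterm).trans ?_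
      rw [← Finset.mul_sum]
      have tele : ∑ i ∈ range (N - (k + 1)),
          (((k + 1 + i : ℕ) : ℝ) ^ (-q) - ((k + 1 + (i + 1) : ℕ) : ℝ) ^ (-q))
          = ((k + 1 + 0 : ℕ) : ℝ) ^ (-q) - ((k + 1 + (N - (k + 1)) : ℕ) : ℝ) ^ (-q) :=
        Finset.sum_range_sub' (fun i => ((k + 1 + i : ℕ) : ℝ) ^ (-q)) (N - (k + 1))
      rw [tele]
      have hnn : (0 : ℝ) ≤ ((k + 1 + (N - (k + 1)) : ℕ) : ℝ) ^ (-q) :=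
        Real.rpow_nonneg (Nat.cast_nonneg _) _
      have hcast : ((k + 1 + 0 : ℕ) : ℝ) = (k : ℝ) + 1 := by push_cast; ring
      rw [hcast]
      have hq' : 0 < 1 / q := by positivity
      nlinarith [Real.rpow_nonneg (show (0:ℝ) ≤ (k:ℝ)+1 by linarith) (-q)]
    push_cast
    nlinarith [h1, h2]

private lemma aux_cs {q : ℝ} (hq : 0 < q) (a : ℕ → ℂ) (n : ℕ) :
    ‖∑ k ∈ range (n + 1), a k‖ ^ 2
      ≤ (∑ k ∈ range (n + 1), ((k : ℝ) + 1) ^ (q - 1)) *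
        (∑ k ∈ range (n + 1), ((k : ℝ) + 1) ^ (1 - q) * ‖a k‖ ^ 2) := by
  have h1 : ‖∑ k ∈ range (n + 1), a k‖ ≤ ∑ k ∈ range (n + 1), ‖a k‖ := norm_sum_le _ _
  have h2 := Finset.sum_mul_sq_le_sq_mul_sq (range (n + 1))
    (fun k => ((k : ℝ) + 1) ^ ((q - 1) / 2))
    (fun k => ((k : ℝ) + 1) ^ ((1 - q) / 2) * ‖a k‖)
  have hpos : ∀ k : ℕ, (0 : ℝ) < (k : ℝ) + 1 := fun k => by positivity
  have hfg : ∀ k : ℕ, ((k : ℝ) + 1) ^ ((q - 1) / 2) * (((k : ℝ) + 1) ^ ((1 - q) / 2) * ‖a k‖)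
      = ‖a k‖ := by
    intro k
    rw [← mul_assoc, ← Real.rpow_add (hpos k),
      show (q - 1) / 2 + (1 - q) / 2 = 0 by ring, Real.rpow_zero, one_mul]
  have hf2 : ∀ k : ℕ, (((k : ℝ) + 1) ^ ((q - 1) / 2)) ^ 2 = ((k : ℝ) + 1) ^ (q - 1) := by
    intro k
    rw [← Real.rpow_natCast (((k : ℝ) + 1) ^ ((q - 1) / 2)) 2,
      ← Real.rpow_mul (hpos k).le]
    norm_num
  have hg2 : ∀ k : ℕ, (((k : ℝ) + 1) ^ ((1 - q) / 2) * ‖a k‖) ^ 2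
      = ((k : ℝ) + 1) ^ (1 - q) * ‖a k‖ ^ 2 := by
    intro k
    rw [mul_pow, ← Real.rpow_natCast (((k : ℝ) + 1) ^ ((1 - q) / 2)) 2,
      ← Real.rpow_mul (hpos k).le]
    norm_num
  calc ‖∑ k ∈ range (n + 1), a k‖ ^ 2 ≤ (∑ k ∈ range (n + 1), ‖a k‖) ^ 2 :=
        pow_le_pow_left₀ (norm_nonneg _) h1 2
    _ = (∑ k ∈ range (n + 1), ((k : ℝ) + 1) ^ ((q - 1) / 2) *
          (((k : ℝ) + 1) ^ ((1 - q) / 2) * ‖a k‖)) ^ 2 := by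
        congr 1; exact (Finset.sum_congr rfl fun k _ => (hfg k)).symm
    _ ≤ (∑ k ∈ range (n + 1), (((k : ℝ) + 1) ^ ((q - 1) / 2)) ^ 2) *
          (∑ k ∈ range (n + 1), (((k : ℝ) + 1) ^ ((1 - q) / 2) * ‖a k‖) ^ 2) := h2
    _ = _ := by
        congr 1
        · exact Finset.sum_congr rfl fun k _ => hf2 k
        · exact Finset.sum_congr rfl fun k _ => hg2 k

/-- If `0 < α, β < 2` and the moments of `μ` satisfy `μ[n] ≤ C₅ (n+1)^{-1-(α-β)/2}`, then
`C_μ` is bounded from `D_α` into `D_β` with norm at most `C₅ √(2(2+α))/α`. -/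
theorem moment_decay_implies_bounded (α β : ℝ) (hα0 : 0 < α) (hα2 : α < 2)
    (hβ0 : 0 < β) (hβ2 : β < 2)
    (μ : Measure ℝ) [IsFiniteMeasure μ] (hμsupp : μ (Set.Ico (0 : ℝ) 1)ᶜ = 0)
    (C₅ : ℝ) (hC₅ : 0 < C₅)
    (hmom : ∀ n : ℕ,
      (∫ t in Set.Ico (0 : ℝ) 1, t ^ n ∂μ) ≤ C₅ * ((n : ℝ) + 1) ^ (-(1 + (α - β) / 2)))
    (a : ℕ → ℂ)
    (ha : Summable fun n : ℕ => ((n : ℝ) + 1) ^ (1 - α) * ‖a n‖ ^ 2) :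
    Summable (fun n : ℕ => ((n : ℝ) + 1) ^ (1 - β) *
      (∫ t in Set.Ico (0 : ℝ) 1, t ^ n ∂μ) ^ 2 * ‖∑ k ∈ Finset.range (n + 1), a k‖ ^ 2) ∧
    (∑' n : ℕ, ((n : ℝ) + 1) ^ (1 - β) *
        (∫ t in Set.Ico (0 : ℝ) 1, t ^ n ∂μ) ^ 2 *
        ‖∑ k ∈ Finset.range (n + 1), a k‖ ^ 2) ^ ((1 : ℝ) / 2) ≤
      C₅ * (Real.sqrt (2 * (2 + α)) / α) *
        (∑' n : ℕ, ((n : ℝ) + 1) ^ (1 - α) * ‖a n‖ ^ 2) ^ ((1 : ℝ) / 2) := by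
  set q : ℝ := α / 2 with hq_def
  have hq : 0 < q := by rw [hq_def]; linarith
  have hq1 : q ≤ 1 := by rw [hq_def]; linarith
  set S : ℕ → ℂ := fun n => ∑ k ∈ range (n + 1), a k with hS_def
  set m : ℕ → ℝ := fun n => ∫ t in Set.Ico (0 : ℝ) 1, t ^ n ∂μ with hm_def
  set W : ℝ := ∑' n : ℕ, ((n : ℝ) + 1) ^ (1 - α) * ‖a n‖ ^ 2 with hW_def
  set K : ℝ := 2 * (2 + α) / α ^ 2 with hK_def
  have hW0 : 0 ≤ W := tsum_nonneg fun n => by positivity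
  have hmnn : ∀ n : ℕ, 0 ≤ m n := fun n =>
    setIntegral_nonneg measurableSet_Ico fun t ht => pow_nonneg ht.1 n
  have hnpos : ∀ n : ℕ, (0 : ℝ) < (n : ℝ) + 1 := fun n => by positivity
  -- pointwise bound via the moment decay
  have hpt : ∀ n : ℕ, ((n : ℝ) + 1) ^ (1 - β) * (m n) ^ 2 * ‖S n‖ ^ 2
      ≤ C₅ ^ 2 * (((n : ℝ) + 1) ^ (-1 - α) * ‖S n‖ ^ 2) := by
    intro n
    have h1 : (m n) ^ 2 ≤ (C₅ * ((n : ℝ) + 1) ^ (-(1 + (α - β) / 2))) ^ 2 :=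
      pow_le_pow_left₀ (hmnn n) (hmom n) 2
    have h2 : (C₅ * ((n : ℝ) + 1) ^ (-(1 + (α - β) / 2))) ^ 2
        = C₅ ^ 2 * ((n : ℝ) + 1) ^ (-(2 + (α - β))) := by
      rw [mul_pow, ← Real.rpow_natCast (((n : ℝ) + 1) ^ (-(1 + (α - β) / 2))) 2,
        ← Real.rpow_mul (hnpos n).le]
      congr 2
      push_cast
      ring
    calc ((n : ℝ) + 1) ^ (1 - β) * (m n) ^ 2 * ‖S n‖ ^ 2
        ≤ ((n : ℝ) + 1) ^ (1 - β) * (C₅ ^ 2 * ((n : ℝ) + 1) ^ (-(2 + (α - β)))) * ‖S n‖ ^ 2 := by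
          refine mul_le_mul_of_nonneg_right
            (mul_le_mul_of_nonneg_left (h1.trans_eq h2) (by positivity)) (by positivity)
      _ = C₅ ^ 2 * (((n : ℝ) + 1) ^ (-1 - α) * ‖S n‖ ^ 2) := by
          rw [show ((n : ℝ) + 1) ^ (1 - β) * (C₅ ^ 2 * ((n : ℝ) + 1) ^ (-(2 + (α - β))))
              = C₅ ^ 2 * (((n : ℝ) + 1) ^ (1 - β) * ((n : ℝ) + 1) ^ (-(2 + (α - β)))) by ring,
            ← Real.rpow_add (hnpos n),
            show (1 - β) + -(2 + (α - β)) = -1 - α by ring]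
          ring
  -- Hardy-type inequality for the partial sums
  have hhardy : ∀ N, ∑ n ∈ range N, ((n : ℝ) + 1) ^ (-1 - α) * ‖S n‖ ^ 2 ≤ K * W := by
    intro N
    have step1 : ∀ n : ℕ, ((n : ℝ) + 1) ^ (-1 - α) * ‖S n‖ ^ 2
        ≤ (1 / q) * ∑ k ∈ range (n + 1),
            ((n : ℝ) + 1) ^ (-1 - q) * (((k : ℝ) + 1) ^ (1 - q) * ‖a k‖ ^ 2) := by
      intro n
      have hcs := aux_cs hq a n
      have hA := aux_Asum hq hq1 n
      have hB0 : (0 : ℝ) ≤ ∑ k ∈ range (n + 1), ((k : ℝ) + 1) ^ (1 - q) * ‖a k‖ ^ 2 :=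
        Finset.sum_nonneg fun k _ => by positivity
      have hmain : ‖S n‖ ^ 2 ≤ ((1 / q) * ((n : ℝ) + 1) ^ q) *
          (∑ k ∈ range (n + 1), ((k : ℝ) + 1) ^ (1 - q) * ‖a k‖ ^ 2) :=
        hcs.trans (mul_le_mul_of_nonneg_right hA hB0)
      calc ((n : ℝ) + 1) ^ (-1 - α) * ‖S n‖ ^ 2
          ≤ ((n : ℝ) + 1) ^ (-1 - α) * (((1 / q) * ((n : ℝ) + 1) ^ q) *
            (∑ k ∈ range (n + 1), ((k : ℝ) + 1) ^ (1 - q) * ‖a k‖ ^ 2)) :=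
            mul_le_mul_of_nonneg_left hmain (by positivity)
        _ = (1 / q) * ∑ k ∈ range (n + 1),
              ((n : ℝ) + 1) ^ (-1 - q) * (((k : ℝ) + 1) ^ (1 - q) * ‖a k‖ ^ 2) := by
            rw [Finset.mul_sum, Finset.mul_sum, Finset.mul_sum]
            refine Finset.sum_congr rfl fun k _ => ?_
            rw [show ((n : ℝ) + 1) ^ (-1 - α) * ((1 / q) * ((n : ℝ) + 1) ^ q *
                (((k : ℝ) + 1) ^ (1 - q) * ‖a k‖ ^ 2))
              = (1 / q) * ((((n : ℝ) + 1) ^ (-1 - α) * ((n : ℝ) + 1) ^ q) *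
                (((k : ℝ) + 1) ^ (1 - q) * ‖a k‖ ^ 2)) by ring,
              ← Real.rpow_add (hnpos n),
              show (-1 - α) + q = -1 - q by rw [hq_def]; ring]
    have swap : ∑ n ∈ range N, ∑ k ∈ range (n + 1),
        ((n : ℝ) + 1) ^ (-1 - q) * (((k : ℝ) + 1) ^ (1 - q) * ‖a k‖ ^ 2)
        = ∑ k ∈ range N, ∑ n ∈ Finset.Ico k N,
        ((n : ℝ) + 1) ^ (-1 - q) * (((k : ℝ) + 1) ^ (1 - q) * ‖a k‖ ^ 2) := by
      refine Finset.sum_comm' ?_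
      intro x y
      simp only [Finset.mem_range, Finset.mem_Ico]
      omega
    have inner_bound : ∀ k ∈ range N,
        ∑ n ∈ Finset.Ico k N, ((n : ℝ) + 1) ^ (-1 - q) * (((k : ℝ) + 1) ^ (1 - q) * ‖a k‖ ^ 2)
        ≤ (1 + 1 / q) * (((k : ℝ) + 1) ^ (1 - α) * ‖a k‖ ^ 2) := by
      intro k _
      rw [← Finset.sum_mul]
      have hck : (0 : ℝ) ≤ ((k : ℝ) + 1) ^ (1 - q) * ‖a k‖ ^ 2 := by positivity
      calc (∑ n ∈ Finset.Ico k N, ((n : ℝ) + 1) ^ (-1 - q)) *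
            (((k : ℝ) + 1) ^ (1 - q) * ‖a k‖ ^ 2)
          ≤ ((1 + 1 / q) * ((k : ℝ) + 1) ^ (-q)) * (((k : ℝ) + 1) ^ (1 - q) * ‖a k‖ ^ 2) :=
            mul_le_mul_of_nonneg_right (aux_tail hq k N) hck
        _ = (1 + 1 / q) * (((k : ℝ) + 1) ^ (1 - α) * ‖a k‖ ^ 2) := by
            rw [show ((1 + 1 / q) * ((k : ℝ) + 1) ^ (-q)) * (((k : ℝ) + 1) ^ (1 - q) * ‖a k‖ ^ 2)
              = (1 + 1 / q) * ((((k : ℝ) + 1) ^ (-q) * ((k : ℝ) + 1) ^ (1 - q)) * ‖a k‖ ^ 2) by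
                ring,
              ← Real.rpow_add (hnpos k),
              show (-q) + (1 - q) = 1 - α by rw [hq_def]; ring]
    have hWpart : ∑ k ∈ range N, ((k : ℝ) + 1) ^ (1 - α) * ‖a k‖ ^ 2 ≤ W :=
      Summable.sum_le_tsum (range N) (fun k _ => by positivity) ha
    calc ∑ n ∈ range N, ((n : ℝ) + 1) ^ (-1 - α) * ‖S n‖ ^ 2
        ≤ ∑ n ∈ range N, (1 / q) * ∑ k ∈ range (n + 1),
            ((n : ℝ) + 1) ^ (-1 - q) * (((k : ℝ) + 1) ^ (1 - q) * ‖a k‖ ^ 2) :=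
          Finset.sum_le_sum fun n _ => step1 n
      _ = (1 / q) * ∑ k ∈ range N, ∑ n ∈ Finset.Ico k N,
            ((n : ℝ) + 1) ^ (-1 - q) * (((k : ℝ) + 1) ^ (1 - q) * ‖a k‖ ^ 2) := by
          rw [← Finset.mul_sum, swap]
      _ ≤ (1 / q) * ∑ k ∈ range N, (1 + 1 / q) * (((k : ℝ) + 1) ^ (1 - α) * ‖a k‖ ^ 2) := by
          refine mul_le_mul_of_nonneg_left (Finset.sum_le_sum inner_bound) (by positivity)
      _ = ((1 / q) * (1 + 1 / q)) * ∑ k ∈ range N, ((k : ℝ) + 1) ^ (1 - α) * ‖a k‖ ^ 2 := by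
          rw [← Finset.mul_sum]; ring
      _ ≤ ((1 / q) * (1 + 1 / q)) * W := by
          refine mul_le_mul_of_nonneg_left hWpart (by positivity)
      _ = K * W := by
          rw [hK_def, hq_def]
          field_simp
          ring
  -- combine
  have hnn : ∀ n : ℕ, 0 ≤ ((n : ℝ) + 1) ^ (1 - β) * (m n) ^ 2 * ‖S n‖ ^ 2 := by
    intro n; positivity
  have hbound : ∀ N, ∑ n ∈ range N, ((n : ℝ) + 1) ^ (1 - β) * (m n) ^ 2 * ‖S n‖ ^ 2
      ≤ C₅ ^ 2 * (K * W) := by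
    intro N
    calc ∑ n ∈ range N, ((n : ℝ) + 1) ^ (1 - β) * (m n) ^ 2 * ‖S n‖ ^ 2
        ≤ ∑ n ∈ range N, C₅ ^ 2 * (((n : ℝ) + 1) ^ (-1 - α) * ‖S n‖ ^ 2) :=
          Finset.sum_le_sum fun n _ => hpt n
      _ = C₅ ^ 2 * ∑ n ∈ range N, ((n : ℝ) + 1) ^ (-1 - α) * ‖S n‖ ^ 2 := by
          rw [Finset.mul_sum]
      _ ≤ C₅ ^ 2 * (K * W) := mul_le_mul_of_nonneg_left (hhardy N) (by positivity)
  have hsummable : Summable (fun n : ℕ =>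
      ((n : ℝ) + 1) ^ (1 - β) * (m n) ^ 2 * ‖S n‖ ^ 2) :=
    summable_of_sum_range_le hnn hbound
  refine ⟨hsummable, ?_⟩
  have htsum : (∑' n : ℕ, ((n : ℝ) + 1) ^ (1 - β) * (m n) ^ 2 * ‖S n‖ ^ 2)
      ≤ C₅ ^ 2 * (K * W) := Real.tsum_le_of_sum_range_le hnn hbound
  have hfin := Real.rpow_le_rpow (tsum_nonneg hnn) htsum (by norm_num : (0:ℝ) ≤ 1/2)
  refine hfin.trans_eq ?_
  rw [← Real.sqrt_eq_rpow, ← Real.sqrt_eq_rpow]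
  rw [show C₅ ^ 2 * (K * W) = (C₅ ^ 2 * K) * W by ring,
    Real.sqrt_mul (by positivity) W]
  have : C₅ ^ 2 * K = (C₅ / α) ^ 2 * (2 * (2 + α)) := by
    rw [hK_def]; field_simp
  rw [this, Real.sqrt_mul (sq_nonneg _), Real.sqrt_sq (by positivity)]
  ring
end

section
/- Let 0 < α < 2, 0 < β < 2, and let μ be a positive (finite) Borel measure on [0,1). Suppose there exists a constant C > 0 such that ∑_{n≥0} (n+1)^{1-β} (μ[n])² |∑_{k=0}^{n} a_k|² ≤ C ∑_{n≥0} (n+1)^{1-α} |a_n|² for every complex sequence (a_n)_{n≥0} with ∑_{n≥0} (n+1)^{1-α} |a_n|² < ∞ (i.e., C_μ : D_α → D_β is bounded). Then μ is a [1 + (α-β)/2]-Carleson measure on [0,1), i.e., there is a constant C' > 0 with μ([b,1)) ≤ C' (1-b)^{1+(α-β)/2} for all b ∈ [0,1). -/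
open MeasureTheory

private lemma sum_rpow_aux {p : ℝ} (hp0 : 0 < p) (hp1 : p ≤ 1) (N : ℕ) :
    ∑ n ∈ Finset.range N, ((n : ℝ) + 1) ^ (p - 1) ≤ (N : ℝ) ^ p / p := by
  induction N with
  | zero => simp [Real.zero_rpow hp0.ne']
  | succ N ih =>
    have hM : (0:ℝ) < (N:ℝ) + 1 := by positivity
    have hb : (1 + (-(1/((N:ℝ)+1))))^p ≤ 1 + p * (-(1/((N:ℝ)+1))) := by
      apply rpow_one_add_le_one_add_mul_self _ hp0.le hp1
      have h1 : 1/((N:ℝ)+1) ≤ 1 := by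
        rw [div_le_one hM]; linarith
      linarith
    have heq : 1 + (-(1/((N:ℝ)+1))) = (N:ℝ)/((N:ℝ)+1) := by field_simp; ring
    rw [heq] at hb
    have hdiv : ((N:ℝ)/((N:ℝ)+1))^p = (N:ℝ)^p / ((N:ℝ)+1)^p :=
      Real.div_rpow (Nat.cast_nonneg N) hM.le p
    rw [hdiv] at hb
    have hMp : (0:ℝ) < ((N:ℝ)+1)^p := Real.rpow_pos_of_pos hM p
    have key : (N:ℝ)^p ≤ ((N:ℝ)+1)^p - p * ((N:ℝ)+1)^(p-1) := by
      have h2 := mul_le_mul_of_nonneg_right hb hMp.le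
      rw [div_mul_cancel₀ _ hMp.ne'] at h2
      have h3 : ((N:ℝ)+1)^(p-1) = ((N:ℝ)+1)^p / ((N:ℝ)+1) :=
        Real.rpow_sub_one hM.ne' p
      have h4 : (1 + p * (-(1 / ((N:ℝ) + 1)))) * ((N:ℝ)+1) ^ p
          = ((N:ℝ)+1)^p - p * (((N:ℝ)+1)^p / ((N:ℝ)+1)) := by
        field_simp
        ring
      rw [h4] at h2
      rw [h3]
      exact h2
    rw [Finset.sum_range_succ]
    push_cast
    rw [le_div_iff₀ hp0]
    have ih' : (∑ n ∈ Finset.range N, ((n : ℝ) + 1) ^ (p - 1)) * p ≤ (N:ℝ)^p := by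
      rw [← le_div_iff₀ hp0]; exact ih
    nlinarith [key, ih']

private lemma sum_one_sub_le {α : ℝ} (hα0 : 0 < α) (hα2 : α < 2) (N : ℕ) (hN : 1 ≤ N) :
    ∑ n ∈ Finset.range N, ((n : ℝ) + 1) ^ (1 - α) ≤ 2/(2-α) * (N : ℝ) ^ (2-α) := by
  have h2α : (0:ℝ) < 2 - α := by linarith
  have hNpos : (0:ℝ) < N := by exact_mod_cast hN
  have hNr : (0:ℝ) ≤ (N:ℝ)^(2-α) := Real.rpow_nonneg hNpos.le _
  rcases le_or_gt (1:ℝ) α with h1 | h1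
  · have h := sum_rpow_aux (p := 2-α) h2α (by linarith) N
    have h12 : (2:ℝ) - α - 1 = 1 - α := by ring
    rw [h12] at h
    have : (N:ℝ)^(2-α)/(2-α) ≤ 2/(2-α) * (N:ℝ)^(2-α) := by
      rw [div_eq_mul_inv, div_eq_mul_inv]
      nlinarith [inv_nonneg.mpr h2α.le]
    linarith
  · have hterm : ∀ n ∈ Finset.range N, ((n:ℝ)+1)^(1-α) ≤ (N:ℝ)^(1-α) := by
      intro n hn
      have hnN : (n:ℝ)+1 ≤ N := by
        exact_mod_cast Nat.succ_le_of_lt (Finset.mem_range.mp hn)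
      exact Real.rpow_le_rpow (by positivity) hnN (by linarith)
    have hsum := Finset.sum_le_card_nsmul (Finset.range N) _ _ hterm
    rw [Finset.card_range, nsmul_eq_mul] at hsum
    have heq : (N:ℝ) * (N:ℝ)^(1-α) = (N:ℝ)^(2-α) := by
      nth_rewrite 1 [← Real.rpow_one (N:ℝ)]
      rw [← Real.rpow_add hNpos]
      congr 1; ring
    rw [heq] at hsum
    have h21 : (1:ℝ) ≤ 2/(2-α) := by
      rw [le_div_iff₀ h2α]; linarith
    nlinarith

set_option maxHeartbeats 1600000 in
/-- If `0 < α, β < 2` and the generalized Cesàro operator `C_μ` is bounded from `D_α` into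
`D_β`, then `μ` is a `[1+(α-β)/2]`-Carleson measure on `[0,1)`. -/
theorem bounded_implies_carleson (α β : ℝ) (hα0 : 0 < α) (hα2 : α < 2)
    (hβ0 : 0 < β) (hβ2 : β < 2)
    (μ : Measure ℝ) [IsFiniteMeasure μ] (hμsupp : μ (Set.Ico (0 : ℝ) 1)ᶜ = 0)
    (hbd : ∃ C > (0 : ℝ), ∀ a : ℕ → ℂ,
      Summable (fun n : ℕ => ((n : ℝ) + 1) ^ (1 - α) * ‖a n‖ ^ 2) →
      Summable (fun n : ℕ => ((n : ℝ) + 1) ^ (1 - β) *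
        (∫ t in Set.Ico (0 : ℝ) 1, t ^ n ∂μ) ^ 2 * ‖∑ k ∈ Finset.range (n + 1), a k‖ ^ 2) ∧
      ∑' n : ℕ, ((n : ℝ) + 1) ^ (1 - β) *
          (∫ t in Set.Ico (0 : ℝ) 1, t ^ n ∂μ) ^ 2 * ‖∑ k ∈ Finset.range (n + 1), a k‖ ^ 2 ≤
        C * ∑' n : ℕ, ((n : ℝ) + 1) ^ (1 - α) * ‖a n‖ ^ 2) :
    ∃ C' > (0 : ℝ), ∀ b ∈ Set.Ico (0 : ℝ) 1,
      (μ (Set.Ico b 1)).toReal ≤ C' * (1 - b) ^ (1 + (α - β) / 2) := by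
  obtain ⟨C, hC, hop⟩ := hbd
  have h2α : (0:ℝ) < 2 - α := by linarith
  set M := (μ Set.univ).toReal with hMdef
  have hM0 : 0 ≤ M := ENNReal.toReal_nonneg
  set K := 4*C*Real.exp 8/(2-α) with hKdef
  have hKpos : 0 < K := by
    apply div_pos _ h2α
    positivity
  have hsK : 0 ≤ Real.sqrt K := Real.sqrt_nonneg K
  refine ⟨4*Real.sqrt K + 4*M + 1, by linarith, ?_⟩
  rintro b ⟨hb0, hb1⟩
  have h1b : (0:ℝ) < 1 - b := by linarith
  set m := (μ (Set.Ico b 1)).toReal with hmdef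
  have hm0 : 0 ≤ m := ENNReal.toReal_nonneg
  have hmM : m ≤ M :=
    (ENNReal.toReal_le_toReal (measure_ne_top μ _) (measure_ne_top μ _)).mpr
      (measure_mono (Set.subset_univ _))
  rcases lt_or_ge b (1/2 : ℝ) with hbhalf | hbhalf
  · -- easy case : b < 1/2
    have hpow : (1/4:ℝ) ≤ (1-b)^(1+(α-β)/2) := by
      have h₁ : ((1:ℝ)/2)^(2:ℝ) ≤ ((1:ℝ)/2)^(1+(α-β)/2) :=
        Real.rpow_le_rpow_of_exponent_ge (by norm_num) (by norm_num) (by linarith)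
      have h₂ : ((1:ℝ)/2)^(1+(α-β)/2) ≤ (1-b)^(1+(α-β)/2) :=
        Real.rpow_le_rpow (by norm_num) (by linarith) (by linarith)
      have h₃ : ((1:ℝ)/2)^(2:ℝ) = 1/4 := by
        rw [show (2:ℝ) = ((2:ℕ):ℝ) by norm_num, Real.rpow_natCast]; norm_num
      linarith
    have h4 : m ≤ (4*Real.sqrt K + 4*M + 1) * (1/4) := by nlinarith
    calc m ≤ (4*Real.sqrt K + 4*M + 1) * (1/4) := h4
    _ ≤ (4*Real.sqrt K + 4*M + 1) * (1-b)^(1+(α-β)/2) := by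
        apply mul_le_mul_of_nonneg_left hpow (by linarith)
  · -- main case : 1/2 ≤ b
    have hb0' : (0:ℝ) < b := by linarith
    set N := ⌊1/(1-b)⌋₊ with hNdef
    have hinv2 : (2:ℝ) ≤ 1/(1-b) := by
      rw [le_div_iff₀ h1b]; linarith
    have hN2 : 2 ≤ N := Nat.le_floor (by exact_mod_cast hinv2)
    have hNle : (N:ℝ) ≤ 1/(1-b) := Nat.floor_le (by positivity)
    have hNpos : (0:ℝ) < N := by exact_mod_cast (by omega : 0 < N)
    have hN1r : (1:ℝ) ≤ N := by exact_mod_cast (by omega : 1 ≤ N)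
    have hinvN : 1/(1-b) ≤ 2*(N:ℝ) := by
      have h := Nat.lt_floor_add_one (1/(1-b))
      rw [← hNdef] at h
      linarith
    have hN1b : (N:ℝ)*(1-b) ≤ 1 := by
      rw [← le_div_iff₀ h1b]; exact hNle
    have hNinv : (N:ℝ)⁻¹ ≤ 2*(1-b) := by
      rw [inv_le_iff_one_le_mul₀ hNpos]
      rw [div_le_iff₀ h1b] at hinvN
      linarith
    -- test sequence
    set a : ℕ → ℂ := fun k => if k < N then 1 else 0 with ha
    have hsA : Summable (fun n : ℕ => ((n : ℝ) + 1) ^ (1 - α) * ‖a n‖ ^ 2) := by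
      apply summable_of_ne_finset_zero (s := Finset.range N)
      intro n hn
      have hnN : ¬ n < N := by simpa using hn
      simp [ha, hnN]
    obtain ⟨hsumL, hineq⟩ := hop a hsA
    have htsumR : ∑' n : ℕ, ((n : ℝ) + 1) ^ (1 - α) * ‖a n‖ ^ 2
        = ∑ n ∈ Finset.range N, ((n : ℝ) + 1) ^ (1 - α) := by
      rw [tsum_eq_sum (s := Finset.range N)
        (fun n hn => by
          have hnN : ¬ n < N := by simpa using hn
          simp [ha, hnN])]
      apply Finset.sum_congr rfl
      intro n hn
      have hnN : n < N := Finset.mem_range.mp hn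
      simp [ha, hnN]
    -- partial sums of the test sequence
    have hS : ∀ n ∈ Finset.Ico N (2*N),
        ‖∑ k ∈ Finset.range (n + 1), a k‖^2 = (N:ℝ)^2 := by
      intro n hn
      obtain ⟨hn1, hn2⟩ := Finset.mem_Ico.mp hn
      have hsum : ∑ k ∈ Finset.range (n + 1), a k = (N:ℂ) := by
        rw [ha]
        simp only []
        rw [← Finset.sum_filter]
        have hfil : (Finset.range (n+1)).filter (fun k => k < N) = Finset.range N := by
          ext k
          simp only [Finset.mem_filter, Finset.mem_range]
          omega
        rw [hfil]
        simp
      rw [hsum]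
      simp
    -- lower bound for the moments
    have hIn : ∀ n : ℕ, b^n * m ≤ ∫ t in Set.Ico (0:ℝ) 1, t^n ∂μ := by
      intro n
      have hint : IntegrableOn (fun t : ℝ => t^n) (Set.Ico (0:ℝ) 1) μ := by
        apply Integrable.mono' (integrable_const (1:ℝ))
          ((continuous_pow n).aestronglyMeasurable)
        filter_upwards [ae_restrict_mem measurableSet_Ico] with t ht
        rw [Real.norm_eq_abs, abs_pow, abs_of_nonneg ht.1]
        exact pow_le_one₀ ht.1 ht.2.le
      have hsub : Set.Ico b 1 ⊆ Set.Ico (0:ℝ) 1 := Set.Ico_subset_Ico_left hb0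
      have h1 : ∫ t in Set.Ico b 1, t^n ∂μ ≤ ∫ t in Set.Ico (0:ℝ) 1, t^n ∂μ := by
        apply setIntegral_mono_set hint
        · filter_upwards [ae_restrict_mem measurableSet_Ico] with t ht
          exact pow_nonneg ht.1 n
        · exact HasSubset.Subset.eventuallyLE hsub
      refine le_trans ?_ h1
      have := setIntegral_ge_of_const_le measurableSet_Ico (measure_ne_top μ _)
        (fun x hx => pow_le_pow_left₀ hb0 hx.1 n) (hint.mono_set hsub)
      rw [smul_eq_mul, mul_comm] at this
      exact this
    -- per-term lower bound on the n-th term, N ≤ n < 2N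
    have hterm : ∀ n ∈ Finset.Ico N (2*N),
        (N:ℝ)^(1-β)/2 * (Real.exp (-8) * m^2) * (N:ℝ)^2
          ≤ ((n : ℝ) + 1) ^ (1 - β) *
            (∫ t in Set.Ico (0:ℝ) 1, t^n ∂μ) ^ 2 * ‖∑ k ∈ Finset.range (n + 1), a k‖ ^ 2 := by
      intro n hn
      obtain ⟨hn1, hn2⟩ := Finset.mem_Ico.mp hn
      rw [hS n hn]
      have hNβ0 : (0:ℝ) ≤ (N:ℝ)^(1-β) := Real.rpow_nonneg hNpos.le _
      have hA1 : (N:ℝ)^(1-β)/2 ≤ ((n:ℝ)+1)^(1-β) := by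
        rcases le_or_gt β 1 with hβ1 | hβ1
        · have hNn : (N:ℝ) ≤ (n:ℝ)+1 := by
            have : (N:ℝ) ≤ n := by exact_mod_cast hn1
            linarith
          have h := Real.rpow_le_rpow (z := 1-β) hNpos.le hNn (by linarith)
          linarith
        · have hle : (n:ℝ)+1 ≤ 2*(N:ℝ) := by
            have h2n : (n:ℕ) + 1 ≤ 2*N := by omega
            exact_mod_cast h2n
          have h2N : (2*(N:ℝ))^(1-β) ≤ ((n:ℝ)+1)^(1-β) :=
            Real.rpow_le_rpow_of_nonpos (by positivity) hle (by linarith)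
          have hmulr : (2*(N:ℝ))^(1-β) = 2^(1-β) * (N:ℝ)^(1-β) :=
            Real.mul_rpow (by norm_num) hNpos.le
          have h2pow : (1/2:ℝ) ≤ 2^(1-β) := by
            have hh : (2:ℝ)^(-1:ℝ) ≤ 2^(1-β) :=
              Real.rpow_le_rpow_of_exponent_le (by norm_num) (by linarith)
            rw [Real.rpow_neg_one] at hh
            norm_num at hh
            linarith
          nlinarith
      have hA2 : Real.exp (-8) * m^2 ≤ (∫ t in Set.Ico (0:ℝ) 1, t^n ∂μ)^2 := by
        have hbn := hIn n
        have h0 : (0:ℝ) ≤ b^n * m := by positivity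
        have hsq : (b^n*m)^2 ≤ (∫ t in Set.Ico (0:ℝ) 1, t^n ∂μ)^2 :=
          pow_le_pow_left₀ h0 hbn 2
        have hbe : Real.exp (-8) ≤ (b^n)^2 := by
          have h2n4N : (b:ℝ)^(4*N) ≤ (b^n)^2 := by
            rw [← pow_mul]
            exact pow_le_pow_of_le_one hb0 hb1.le (by omega)
          have hexp : Real.exp (-8) ≤ b^(4*N) := by
            have hlog : 1 - 1/b ≤ Real.log b := by
              have h := Real.log_le_sub_one_of_pos (x := 1/b) (by positivity)
              rw [Real.log_div one_ne_zero hb0'.ne', Real.log_one] at h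
              linarith
            have hlog2 : -(2*(1-b)) ≤ Real.log b := by
              have hkey : (1:ℝ) ≤ b*(3-2*b) := by nlinarith
              have hinvb : 1/b ≤ 3-2*b := by
                rw [div_le_iff₀ hb0']; linarith
              linarith
            have hexp2 : (-8:ℝ) ≤ ((4*N : ℕ):ℝ) * Real.log b := by
              have h4N : (0:ℝ) ≤ ((4*N : ℕ):ℝ) := by positivity
              have := mul_le_mul_of_nonneg_left hlog2 h4N
              have hcast : ((4*N : ℕ):ℝ) = 4*(N:ℝ) := by push_cast; ring
              rw [hcast] at this ⊢
              nlinarith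
            calc Real.exp (-8) ≤ Real.exp (((4*N : ℕ):ℝ) * Real.log b) :=
                  Real.exp_le_exp.mpr hexp2
            _ = (Real.exp (Real.log b))^(4*N) := Real.exp_nat_mul _ _
            _ = b^(4*N) := by rw [Real.exp_log hb0']
          linarith
        calc Real.exp (-8) * m^2 ≤ (b^n)^2 * m^2 :=
              mul_le_mul_of_nonneg_right hbe (sq_nonneg m)
        _ = (b^n*m)^2 := by ring
        _ ≤ _ := hsq
      have h2 : (0:ℝ) ≤ Real.exp (-8) * m^2 := by positivity
      have h3 : (0:ℝ) ≤ (N:ℝ)^2 := by positivity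
      apply mul_le_mul_of_nonneg_right _ h3
      exact mul_le_mul hA1 hA2 h2 (by positivity)
    -- lower bound for the left tsum
    have hsumlow : (N:ℝ) * ((N:ℝ)^(1-β)/2 * (Real.exp (-8) * m^2) * (N:ℝ)^2)
        ≤ ∑' n : ℕ, ((n : ℝ) + 1) ^ (1 - β) *
            (∫ t in Set.Ico (0:ℝ) 1, t^n ∂μ) ^ 2 * ‖∑ k ∈ Finset.range (n + 1), a k‖ ^ 2 := by
      have hcard : (Finset.Ico N (2*N)).card = N := by
        rw [Nat.card_Ico]; omega
      have h1 : (N:ℝ) * ((N:ℝ)^(1-β)/2 * (Real.exp (-8) * m^2) * (N:ℝ)^2)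
          = ∑ _n ∈ Finset.Ico N (2*N),
              ((N:ℝ)^(1-β)/2 * (Real.exp (-8) * m^2) * (N:ℝ)^2) := by
        rw [Finset.sum_const, hcard, nsmul_eq_mul]
      rw [h1]
      refine le_trans (Finset.sum_le_sum hterm) ?_
      apply Summable.sum_le_tsum _ _ hsumL
      intro n _
      positivity
    -- combine with the boundedness hypothesis
    have hchain : (N:ℝ) * ((N:ℝ)^(1-β)/2 * (Real.exp (-8) * m^2) * (N:ℝ)^2)
        ≤ C * (2/(2-α) * (N:ℝ)^(2-α)) := by
      refine le_trans hsumlow (le_trans hineq ?_)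
      rw [htsumR]
      exact mul_le_mul_of_nonneg_left (sum_one_sub_le hα0 hα2 N (by omega)) hC.le
    -- extract the bound on m²
    have hNβ : (N:ℝ)^(1-β) * (N:ℝ)^2 * (N:ℝ) = (N:ℝ)^(4-β) := by
      rw [← Real.rpow_natCast (N:ℝ) 2, ← Real.rpow_add hNpos,
        ← Real.rpow_add_one hNpos.ne']
      congr 1; ring
    have hm2 : m^2 ≤ K * (N:ℝ)^(β-α-2) := by
      have hsplit : (N:ℝ)^(2-α) = (N:ℝ)^(4-β) * (N:ℝ)^(β-α-2) := by
        rw [← Real.rpow_add hNpos]; congr 1; ring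
      have h4β : (0:ℝ) < (N:ℝ)^(4-β) := Real.rpow_pos_of_pos hNpos _
      have hL : (Real.exp (-8)/2 * m^2) * (N:ℝ)^(4-β)
          = (N:ℝ) * ((N:ℝ)^(1-β)/2 * (Real.exp (-8) * m^2) * (N:ℝ)^2) := by
        rw [← hNβ]; ring
      have hR : C * (2/(2-α) * ((N:ℝ)^(4-β) * (N:ℝ)^(β-α-2)))
          = (2*C/(2-α) * (N:ℝ)^(β-α-2)) * (N:ℝ)^(4-β) := by ring
      have h := hchain
      rw [← hL, hsplit, hR] at h
      have hstep : Real.exp (-8)/2 * m^2 ≤ 2*C/(2-α) * (N:ℝ)^(β-α-2) :=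
        le_of_mul_le_mul_right h h4β
      have hE : Real.exp (-8) * Real.exp 8 = 1 := by
        rw [← Real.exp_add]; norm_num
      have hmeq : m^2 = (Real.exp (-8)/2 * m^2) * (2*Real.exp 8) := by
        have : (Real.exp (-8)/2 * m^2) * (2*Real.exp 8)
            = m^2 * (Real.exp (-8) * Real.exp 8) := by ring
        rw [this, hE, mul_one]
      rw [hmeq, hKdef]
      have := mul_le_mul_of_nonneg_right hstep (by positivity : (0:ℝ) ≤ 2*Real.exp 8)
      calc (Real.exp (-8)/2 * m^2) * (2*Real.exp 8)
          ≤ (2*C/(2-α) * (N:ℝ)^(β-α-2)) * (2*Real.exp 8) := this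
      _ = 4*C*Real.exp 8/(2-α) * (N:ℝ)^(β-α-2) := by ring
    -- bound the power of N in terms of 1 - b
    have hNneg : (N:ℝ)^(β-α-2) ≤ (2*(1-b))^(2+α-β) := by
      have h1 : (N:ℝ)^(β-α-2) = ((N:ℝ)⁻¹)^(2+α-β) := by
        rw [Real.inv_rpow hNpos.le, ← Real.rpow_neg hNpos.le]
        congr 1; ring
      rw [h1]
      exact Real.rpow_le_rpow (by positivity) hNinv (by linarith)
    have h2pow : (2*(1-b))^(2+α-β) = 2^(2+α-β) * (1-b)^(2+α-β) :=
      Real.mul_rpow (by norm_num) h1b.le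
    have h16 : (2:ℝ)^(2+α-β) ≤ 16 := by
      have hh : (2:ℝ)^(2+α-β) ≤ 2^(4:ℝ) :=
        Real.rpow_le_rpow_of_exponent_le (by norm_num) (by linarith)
      have h4 : (2:ℝ)^(4:ℝ) = 16 := by
        rw [show (4:ℝ) = ((4:ℕ):ℝ) by norm_num, Real.rpow_natCast]; norm_num
      linarith
    have h0γ : 0 ≤ (1-b)^(2+α-β) := Real.rpow_nonneg h1b.le _
    have hfinal2 : m^2 ≤ 16*K * (1-b)^(2+α-β) := by
      calc m^2 ≤ K * (N:ℝ)^(β-α-2) := hm2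
      _ ≤ K * ((2*(1-b))^(2+α-β)) := mul_le_mul_of_nonneg_left hNneg hKpos.le
      _ = K * (2^(2+α-β) * (1-b)^(2+α-β)) := by rw [h2pow]
      _ ≤ K * (16 * (1-b)^(2+α-β)) := by
          apply mul_le_mul_of_nonneg_left _ hKpos.le
          exact mul_le_mul_of_nonneg_right h16 h0γ
      _ = 16*K*(1-b)^(2+α-β) := by ring
    -- conclude
    have hγγ : (1-b)^(1+(α-β)/2) * (1-b)^(1+(α-β)/2) = (1-b)^(2+α-β) := by
      rw [← Real.rpow_add h1b]; congr 1; ring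
    have hsq16 : 16*K ≤ (4*Real.sqrt K + 4*M + 1)^2 := by
      nlinarith [Real.sq_sqrt hKpos.le]
    have hC'sq : m^2 ≤ ((4*Real.sqrt K + 4*M + 1) * (1-b)^(1+(α-β)/2))^2 := by
      calc m^2 ≤ 16*K * (1-b)^(2+α-β) := hfinal2
      _ ≤ (4*Real.sqrt K + 4*M + 1)^2 * (1-b)^(2+α-β) :=
          mul_le_mul_of_nonneg_right hsq16 h0γ
      _ = ((4*Real.sqrt K + 4*M + 1) * (1-b)^(1+(α-β)/2))^2 := by
          rw [mul_pow, pow_two ((1-b)^(1+(α-β)/2)), hγγ]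
    have hrhs0 : 0 ≤ (4*Real.sqrt K + 4*M + 1) * (1-b)^(1+(α-β)/2) :=
      mul_nonneg (by linarith) (Real.rpow_nonneg h1b.le _)
    have hsqrt := Real.sqrt_le_sqrt hC'sq
    rw [Real.sqrt_sq hm0, Real.sqrt_sq hrhs0] at hsqrt
    exact hsqrt
end

section
/- Let 0 < α < 2, 0 < β < 2, and let μ be a positive (finite) Borel measure on [0,1). If μ is a vanishing [1 + (α-β)/2]-Carleson measure on [0,1), then μ[n] = o((n+1)^{-1-(α-β)/2}) as n → ∞; that is, (n+1)^{1+(α-β)/2} μ[n] → 0 as n → ∞. -/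
open MeasureTheory Filter

section AuxLemmas
open Real Set


lemma aux_one_sub_rpow_le (s : ℝ) (hs0 : 0 < s) (hs2 : s ≤ 2) {n : ℕ} (hn : 1 ≤ n)
    {u : ℝ} (hu0 : 0 < u) (hu1 : u < 1) :
    (1 - u ^ ((n : ℝ)⁻¹)) ^ s ≤ (1 + 16 * u ^ (-(2⁻¹ : ℝ))) / (n : ℝ) ^ s := by
  have hn0 : (0:ℝ) < n := by exact_mod_cast hn
  have hv0 : 0 < u ^ ((n : ℝ)⁻¹) := Real.rpow_pos_of_pos hu0 _
  have hv1 : u ^ ((n : ℝ)⁻¹) < 1 := Real.rpow_lt_one hu0.le hu1 (by positivity)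
  set y : ℝ := -Real.log u with hy
  clear_value y
  have hy0 : 0 < y := by
    simp only [hy, neg_pos]
    exact Real.log_neg hu0 hu1
  have h1 : 1 - u ^ ((n : ℝ)⁻¹) ≤ y / n := by
    have hlog : Real.log (u ^ ((n : ℝ)⁻¹)) = (n : ℝ)⁻¹ * Real.log u :=
      Real.log_rpow hu0 _
    have := Real.log_le_sub_one_of_pos hv0
    rw [hlog] at this
    have : 1 - u ^ ((n : ℝ)⁻¹) ≤ -((n : ℝ)⁻¹ * Real.log u) := by linarith
    calc 1 - u ^ ((n : ℝ)⁻¹) ≤ -((n : ℝ)⁻¹ * Real.log u) := this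
      _ = y / n := by rw [hy]; ring
  have h2 : (1 - u ^ ((n : ℝ)⁻¹)) ^ s ≤ (y / n) ^ s :=
    Real.rpow_le_rpow (by linarith) h1 hs0.le
  have h3 : (y / n) ^ s = y ^ s / (n : ℝ) ^ s := Real.div_rpow hy0.le hn0.le s
  have hy4 : y ≤ 4 * u ^ (-(4⁻¹ : ℝ)) := by
    have hlog : Real.log (u ^ (-(4⁻¹ : ℝ))) = -(4⁻¹ : ℝ) * Real.log u :=
      Real.log_rpow hu0 _
    have h5 := Real.log_le_sub_one_of_pos (Real.rpow_pos_of_pos hu0 (-(4⁻¹ : ℝ)))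
    rw [hlog] at h5
    have : -(4⁻¹:ℝ) * Real.log u ≤ u ^ (-(4⁻¹ : ℝ)) := by linarith
    calc y = 4 * (-(4⁻¹:ℝ) * Real.log u) := by rw [hy]; ring
      _ ≤ 4 * u ^ (-(4⁻¹ : ℝ)) := by linarith
  have hup : (0:ℝ) < u ^ (-(4⁻¹ : ℝ)) := Real.rpow_pos_of_pos hu0 _
  have hsq : (u ^ (-(4⁻¹ : ℝ)))^2 = u ^ (-(2⁻¹ : ℝ)) := by
    rw [sq, ← Real.rpow_add hu0]
    norm_num
  have h6 : y ^ s ≤ 1 + 16 * u ^ (-(2⁻¹ : ℝ)) := by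
    rcases le_or_gt y 1 with hy1 | hy1
    · have : y ^ s ≤ 1 := Real.rpow_le_one hy0.le hy1 hs0.le
      nlinarith [Real.rpow_pos_of_pos hu0 (-(2⁻¹ : ℝ))]
    · have h7 : y ^ s ≤ y ^ (2:ℝ) := Real.rpow_le_rpow_of_exponent_le hy1.le hs2
      have h8 : y ^ (2:ℝ) = y ^ (2:ℕ) := by
        rw [← Real.rpow_natCast y 2]; norm_num
      rw [h8] at h7
      have h9 : y ^ (2:ℕ) ≤ (4 * u ^ (-(4⁻¹ : ℝ)))^(2:ℕ) := by nlinarith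
      have h10 : (4 * u ^ (-(4⁻¹ : ℝ)))^(2:ℕ) = 16 * u ^ (-(2⁻¹ : ℝ)) := by
        rw [mul_pow, hsq]; norm_num
      linarith
  calc (1 - u ^ ((n : ℝ)⁻¹)) ^ s ≤ y ^ s / (n : ℝ) ^ s := by rw [← h3]; exact h2
    _ ≤ (1 + 16 * u ^ (-(2⁻¹ : ℝ))) / (n : ℝ) ^ s := by
        have hns : (0:ℝ) < (n : ℝ) ^ s := Real.rpow_pos_of_pos hn0 s
        exact (div_le_div_iff_of_pos_right hns).mpr h6



lemma key_bound (s : ℝ) (hs0 : 0 < s) (hs2 : s ≤ 2)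
    (μ : Measure ℝ) [IsFiniteMeasure μ] {t0 ε' : ℝ} (ht00 : 0 ≤ t0) (ht01 : t0 < 1)
    (hε' : 0 < ε')
    (h : ∀ t ∈ Set.Ico t0 1, (μ (Set.Ico t 1)).toReal ≤ ε' * (1 - t) ^ s)
    (n : ℕ) (hn : 1 ≤ n)
    (haux : ∀ u : ℝ, 0 < u → u < 1 →
      (1 - u ^ ((n : ℝ)⁻¹)) ^ s ≤ (1 + 16 * u ^ (-(2⁻¹ : ℝ))) / (n : ℝ) ^ s) :
    ∫ t in Set.Ico (0:ℝ) 1, t ^ n ∂μ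
      ≤ t0 ^ n * (μ Set.univ).toReal + 33 * ε' / (n : ℝ) ^ s := by
  have hn0 : n ≠ 0 := by omega
  have hnR : (0:ℝ) < n := by exact_mod_cast hn
  have hns : (0:ℝ) < (n:ℝ) ^ s := Real.rpow_pos_of_pos hnR s
  set c : ℝ := ε' / (n:ℝ) ^ s with hc
  have hc0 : 0 < c := div_pos hε' hns
  set t0n : ℝ := t0 ^ n with ht0n
  have ht0n0 : 0 ≤ t0n := pow_nonneg ht00 n
  have ht0n1 : t0n < 1 := pow_lt_one₀ ht00 ht01 hn0
  -- Bochner integral to lintegral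
  have hnnae : 0 ≤ᵐ[μ.restrict (Set.Ico (0:ℝ) 1)] fun t : ℝ => t ^ n :=
    (ae_restrict_iff' measurableSet_Ico).2 (ae_of_all _ fun x hx => pow_nonneg hx.1 n)
  rw [MeasureTheory.integral_eq_lintegral_of_nonneg_ae hnnae
    ((continuous_pow n).aestronglyMeasurable)]
  -- layer cake
  have lc := lintegral_eq_lintegral_meas_le (μ.restrict (Set.Ico (0:ℝ) 1)) hnnae
    ((continuous_pow n).aemeasurable)
  rw [lc]
  have hres : ∀ u : ℝ, (μ.restrict (Set.Ico (0:ℝ) 1)) {a : ℝ | u ≤ a ^ n}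
      = μ ({a : ℝ | u ≤ a ^ n} ∩ Set.Ico 0 1) := fun u =>
    Measure.restrict_apply (measurableSet_le measurable_const (measurable_id.pow_const n))
  -- pointwise facts
  have fact1 : ∀ u ∈ Set.Ioo t0n 1,
      μ ({a : ℝ | u ≤ a ^ n} ∩ Set.Ico 0 1) ≤ ENNReal.ofReal (c * (1 + 16 * u ^ (-(2⁻¹:ℝ)))) := by
    rintro u ⟨hu1, hu2⟩
    have hu0 : 0 < u := lt_of_le_of_lt ht0n0 hu1
    set v : ℝ := u ^ ((n : ℝ)⁻¹) with hv
    have hv0 : 0 ≤ v := Real.rpow_nonneg hu0.le _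
    have hv1 : v < 1 := Real.rpow_lt_one hu0.le hu2 (by positivity)
    have hset : {a : ℝ | u ≤ a ^ n} ∩ Set.Ico 0 1 = Set.Ico v 1 := by
      ext a
      simp only [Set.mem_inter_iff, Set.mem_setOf_eq, Set.mem_Ico]
      constructor
      · rintro ⟨hua, ha0, ha1⟩
        refine ⟨?_, ha1⟩
        calc v ≤ (a ^ n) ^ ((n:ℝ)⁻¹) := Real.rpow_le_rpow hu0.le hua (by positivity)
          _ = a := Real.pow_rpow_inv_natCast ha0 hn0
      · rintro ⟨hva, ha1⟩
        have ha0 : 0 ≤ a := le_trans hv0 hva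
        refine ⟨?_, ha0, ha1⟩
        calc u = v ^ n := (Real.rpow_inv_natCast_pow hu0.le hn0).symm
          _ ≤ a ^ n := pow_le_pow_left₀ hv0 hva n
    have hvt0 : t0 ≤ v := by
      calc t0 = (t0 ^ n) ^ ((n:ℝ)⁻¹) := (Real.pow_rpow_inv_natCast ht00 hn0).symm
        _ ≤ v := Real.rpow_le_rpow ht0n0 hu1.le (by positivity)
    have hμv := h v ⟨hvt0, hv1⟩
    rw [hset]
    have hfin : μ (Set.Ico v 1) ≠ ⊤ := measure_ne_top μ _
    rw [← ENNReal.ofReal_toReal hfin]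
    apply ENNReal.ofReal_le_ofReal
    calc (μ (Set.Ico v 1)).toReal ≤ ε' * (1 - v) ^ s := hμv
      _ ≤ ε' * ((1 + 16 * u ^ (-(2⁻¹:ℝ))) / (n : ℝ) ^ s) := by
          apply mul_le_mul_of_nonneg_left (haux u hu0 hu2) hε'.le
      _ = c * (1 + 16 * u ^ (-(2⁻¹:ℝ))) := by rw [hc]; ring
  have fact2 : ∀ u : ℝ, u ∈ Set.Ici (1:ℝ) →
      μ ({a : ℝ | u ≤ a ^ n} ∩ Set.Ico 0 1) = 0 := by
    intro u hu
    have hemp : {a : ℝ | u ≤ a ^ n} ∩ Set.Ico 0 1 = ∅ := by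
      ext a
      simp only [Set.mem_inter_iff, Set.mem_setOf_eq, Set.mem_Ico, Set.mem_empty_iff_false,
        iff_false, not_and]
      rintro hua ha0 ha1
      exact absurd hua (not_le.2 (lt_of_lt_of_le (pow_lt_one₀ ha0 ha1 hn0) hu))
    rw [hemp]
    exact measure_empty
  -- split the domain
  have hsplit1 : Set.Ioi (0:ℝ) = Set.Ioc 0 t0n ∪ Set.Ioi t0n := (Set.Ioc_union_Ioi_eq_Ioi ht0n0).symm
  have hsplit2 : Set.Ioi t0n = Set.Ioo t0n 1 ∪ Set.Ici 1 := (Set.Ioo_union_Ici_eq_Ioi ht0n1).symm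
  simp only [hres]
  rw [hsplit1, lintegral_union measurableSet_Ioi (Set.Ioc_disjoint_Ioi le_rfl),
    hsplit2, lintegral_union measurableSet_Ici ((Set.Iio_disjoint_Ici le_rfl).mono_left Set.Ioo_subset_Iio_self)]
  have partA : ∫⁻ u in Set.Ioc (0:ℝ) t0n, μ ({a : ℝ | u ≤ a ^ n} ∩ Set.Ico 0 1)
      ≤ μ Set.univ * ENNReal.ofReal t0n := by
    calc ∫⁻ u in Set.Ioc (0:ℝ) t0n, μ ({a : ℝ | u ≤ a ^ n} ∩ Set.Ico 0 1)
        ≤ ∫⁻ _ in Set.Ioc (0:ℝ) t0n, μ Set.univ :=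
          lintegral_mono fun u => measure_mono (Set.subset_univ _)
      _ = μ Set.univ * ENNReal.ofReal t0n := by
          rw [setLIntegral_const, Real.volume_Ioc, sub_zero]
  have partC : ∫⁻ u in Set.Ici (1:ℝ), μ ({a : ℝ | u ≤ a ^ n} ∩ Set.Ico 0 1) = 0 := by
    rw [setLIntegral_congr_fun measurableSet_Ici fact2, lintegral_zero]
  have partB : ∫⁻ u in Set.Ioo t0n 1, μ ({a : ℝ | u ≤ a ^ n} ∩ Set.Ico 0 1)
      ≤ ENNReal.ofReal (c * 33) := by
    calc ∫⁻ u in Set.Ioo t0n 1, μ ({a : ℝ | u ≤ a ^ n} ∩ Set.Ico 0 1)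
        ≤ ∫⁻ u in Set.Ioo t0n 1, ENNReal.ofReal (c * (1 + 16 * u ^ (-(2⁻¹:ℝ)))) :=
          setLIntegral_mono' measurableSet_Ioo fact1
      _ ≤ ∫⁻ u in Set.Ioo (0:ℝ) 1, ENNReal.ofReal (c * (1 + 16 * u ^ (-(2⁻¹:ℝ)))) :=
          lintegral_mono_set (Set.Ioo_subset_Ioo_left ht0n0)
      _ = ENNReal.ofReal (∫ u in Set.Ioo (0:ℝ) 1, c * (1 + 16 * u ^ (-(2⁻¹:ℝ)))) := by
          rw [ofReal_integral_eq_lintegral_ofReal]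
          · -- integrability
            have hIr : IntegrableOn (fun u : ℝ => u ^ (-(2⁻¹:ℝ))) (Set.Ioo 0 1) := by
              have h1 : IntervalIntegrable (fun u : ℝ => u ^ (-(2⁻¹:ℝ))) volume 0 1 :=
                intervalIntegral.intervalIntegrable_rpow' (by norm_num)
              exact ((intervalIntegrable_iff_integrableOn_Ioc_of_le zero_le_one).1 h1).mono_set
                Set.Ioo_subset_Ioc_self
            have : IntegrableOn (fun u : ℝ => c * (1 + 16 * u ^ (-(2⁻¹:ℝ)))) (Set.Ioo 0 1) := by
              apply Integrable.const_mul
              apply Integrable.add (integrableOn_const measure_Ioo_lt_top.ne)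
              exact hIr.const_mul 16
            exact this
          · apply (ae_restrict_iff' measurableSet_Ioo).2
            apply ae_of_all
            intro u hu
            have : (0:ℝ) ≤ u ^ (-(2⁻¹:ℝ)) := Real.rpow_nonneg hu.1.le _
            positivity
      _ = ENNReal.ofReal (c * 33) := by
          congr 1
          have hIr : IntegrableOn (fun u : ℝ => u ^ (-(2⁻¹:ℝ))) (Set.Ioo 0 1) := by
            have h1 : IntervalIntegrable (fun u : ℝ => u ^ (-(2⁻¹:ℝ))) volume 0 1 :=
              intervalIntegral.intervalIntegrable_rpow' (by norm_num)
            exact ((intervalIntegrable_iff_integrableOn_Ioc_of_le zero_le_one).1 h1).mono_set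
              Set.Ioo_subset_Ioc_self
          have hval : ∫ u in Set.Ioo (0:ℝ) 1, u ^ (-(2⁻¹:ℝ)) = 2 := by
            rw [← integral_Ioc_eq_integral_Ioo,
              ← intervalIntegral.integral_of_le zero_le_one,
              integral_rpow (Or.inl (by norm_num))]
            rw [Real.one_rpow, Real.zero_rpow (by norm_num)]
            norm_num
          rw [integral_const_mul]
          rw [integral_add (f := fun _ : ℝ => (1:ℝ)) (g := fun a : ℝ => 16 * a ^ (-(2⁻¹:ℝ))) (integrableOn_const measure_Ioo_lt_top.ne) (hIr.const_mul 16)]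
          rw [integral_const_mul, hval]
          simp [Real.volume_Ioo]
          exact Or.inl (by norm_num)
  -- assemble
  have hsum : (∫⁻ u in Set.Ioc (0:ℝ) t0n, μ ({a : ℝ | u ≤ a ^ n} ∩ Set.Ico 0 1))
      + ((∫⁻ u in Set.Ioo t0n 1, μ ({a : ℝ | u ≤ a ^ n} ∩ Set.Ico 0 1))
        + (∫⁻ u in Set.Ici (1:ℝ), μ ({a : ℝ | u ≤ a ^ n} ∩ Set.Ico 0 1)))
      ≤ μ Set.univ * ENNReal.ofReal t0n + ENNReal.ofReal (c * 33) := by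
    rw [partC, add_zero]
    exact add_le_add partA partB
  refine le_trans (ENNReal.toReal_mono ?_ hsum) ?_
  · exact ENNReal.add_ne_top.2 ⟨ENNReal.mul_ne_top (measure_ne_top μ _) ENNReal.ofReal_ne_top,
      ENNReal.ofReal_ne_top⟩
  · rw [ENNReal.toReal_add (ENNReal.mul_ne_top (measure_ne_top μ _) ENNReal.ofReal_ne_top)
      ENNReal.ofReal_ne_top, ENNReal.toReal_mul, ENNReal.toReal_ofReal ht0n0,
      ENNReal.toReal_ofReal (by positivity)]
    rw [hc]
    ring_nf
    apply le_of_eq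
    ring

end AuxLemmas

/-- If `0 < α, β < 2` and `μ` is a vanishing `[1+(α-β)/2]`-Carleson measure on `[0,1)`, then
`μ[n] = o((n+1)^{-1-(α-β)/2})` as `n → ∞`, i.e. `(n+1)^{1+(α-β)/2} μ[n] → 0`. -/


theorem vanishing_carleson_implies_moment_little_o (α β : ℝ) (hα0 : 0 < α) (hα2 : α < 2)
    (hβ0 : 0 < β) (hβ2 : β < 2)
    (μ : Measure ℝ) [IsFiniteMeasure μ] (hμsupp : μ (Set.Ico (0 : ℝ) 1)ᶜ = 0)
    (hcar : ∃ C > (0 : ℝ), ∀ t ∈ Set.Ico (0 : ℝ) 1,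
      (μ (Set.Ico t 1)).toReal ≤ C * (1 - t) ^ (1 + (α - β) / 2))
    (hvan : Tendsto (fun t : ℝ => (μ (Set.Ico t 1)).toReal / (1 - t) ^ (1 + (α - β) / 2))
      (nhdsWithin 1 (Set.Iio 1)) (nhds 0)) :
    Tendsto (fun n : ℕ =>
        ((n : ℝ) + 1) ^ (1 + (α - β) / 2) * ∫ t in Set.Ico (0 : ℝ) 1, t ^ n ∂μ)
      atTop (nhds 0) := by
  have hs0 : (0:ℝ) < 1 + (α - β) / 2 := by linarith
  have hs2 : 1 + (α - β) / 2 ≤ 2 := by linarith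
  rw [Metric.tendsto_atTop]
  intro ε hε
  set ε' : ℝ := ε / 528 with hε'def
  have hε'0 : 0 < ε' := by positivity
  rw [Metric.tendsto_nhdsWithin_nhds] at hvan
  obtain ⟨δ, hδ0, hδ⟩ := hvan ε' hε'0
  set t0 : ℝ := max (1 - δ / 2) 0 with ht0def
  have ht00 : 0 ≤ t0 := le_max_right _ _
  have ht01 : t0 < 1 := by
    apply max_lt ?_ one_pos
    linarith
  have hband : ∀ t ∈ Set.Ico t0 1,
      (μ (Set.Ico t 1)).toReal ≤ ε' * (1 - t) ^ (1 + (α - β) / 2) := by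
    rintro t ⟨ht1, ht2⟩
    have h1t : 0 < 1 - t := by linarith
    have hpow : 0 < (1 - t) ^ (1 + (α - β)/2) := Real.rpow_pos_of_pos h1t _
    have hd : dist t 1 < δ := by
      rw [Real.dist_eq, abs_of_nonpos (by linarith)]
      have h5 : 1 - δ/2 ≤ t0 := le_max_left _ _
      have := le_trans h5 ht1
      linarith
    have h6 := hδ ht2 hd
    rw [Real.dist_eq, sub_zero] at h6
    have hlt : (μ (Set.Ico t 1)).toReal / (1 - t) ^ (1 + (α - β)/2) < ε' :=
      lt_of_abs_lt h6
    calc (μ (Set.Ico t 1)).toReal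
        = ((μ (Set.Ico t 1)).toReal / (1-t)^(1+(α-β)/2)) * (1-t)^(1+(α-β)/2) := by
          field_simp
      _ ≤ ε' * (1-t)^(1+(α-β)/2) := mul_le_mul_of_nonneg_right hlt.le hpow.le
  have htends : Tendsto (fun n : ℕ => (4 * (μ Set.univ).toReal) * ((n:ℝ)^2 * t0 ^ n))
      atTop (nhds 0) := by
    have h1 : Tendsto (fun n : ℕ => (n:ℝ)^2 * t0 ^ n) atTop (nhds 0) := by
      have h2 : ‖t0‖ < 1 := by rw [Real.norm_eq_abs, abs_of_nonneg ht00]; exact ht01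
      exact (summable_pow_mul_geometric_of_norm_lt_one 2 h2).tendsto_atTop_zero
    simpa using h1.const_mul (4 * (μ Set.univ).toReal)
  obtain ⟨N1, hN1⟩ := (Metric.tendsto_atTop.1 htends) (ε/4) (by positivity)
  refine ⟨max N1 1, fun n hn => ?_⟩
  have hn1 : 1 ≤ n := le_trans (le_max_right _ _) hn
  have hnN1 : N1 ≤ n := le_trans (le_max_left _ _) hn
  have hnR : (1:ℝ) ≤ (n:ℝ) := by exact_mod_cast hn1
  have hkey := key_bound (1 + (α - β)/2) hs0 hs2 μ ht00 ht01 hε'0 hband n hn1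
    (fun u hu0 hu1 => aux_one_sub_rpow_le _ hs0 hs2 hn1 hu0 hu1)
  have hI0 : 0 ≤ ∫ t in Set.Ico (0:ℝ) 1, t ^ n ∂μ :=
    setIntegral_nonneg measurableSet_Ico (fun x hx => pow_nonneg hx.1 n)
  have hnp : (0:ℝ) < (n:ℝ) + 1 := by positivity
  have hnps : 0 ≤ ((n:ℝ)+1) ^ (1 + (α-β)/2) := (Real.rpow_pos_of_pos hnp _).le
  rw [Real.dist_eq, sub_zero, abs_of_nonneg (mul_nonneg hnps hI0)]
  have hns : (0:ℝ) < (n:ℝ) ^ (1 + (α-β)/2) := Real.rpow_pos_of_pos (by linarith) _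
  -- bound (n+1)^s ≤ 4 n^2
  have hb1 : ((n:ℝ)+1) ^ (1+(α-β)/2) ≤ 4 * (n:ℝ)^2 := by
    have e1 : ((n:ℝ)+1) ^ (1+(α-β)/2) ≤ ((n:ℝ)+1) ^ (2:ℝ) :=
      Real.rpow_le_rpow_of_exponent_le (by linarith) hs2
    have e2 : ((n:ℝ)+1) ^ (2:ℝ) = ((n:ℝ)+1)^(2:ℕ) := by
      rw [← Real.rpow_natCast ((n:ℝ)+1) 2]; norm_num
    have e3 : ((n:ℝ)+1)^(2:ℕ) ≤ (2*(n:ℝ))^(2:ℕ) :=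
      pow_le_pow_left₀ (by linarith) (by linarith) 2
    have e4 : (2*(n:ℝ))^(2:ℕ) = 4 * (n:ℝ)^2 := by ring
    calc ((n:ℝ)+1) ^ (1+(α-β)/2) ≤ ((n:ℝ)+1) ^ (2:ℝ) := e1
      _ = ((n:ℝ)+1)^(2:ℕ) := e2
      _ ≤ (2*(n:ℝ))^(2:ℕ) := e3
      _ = 4 * (n:ℝ)^2 := e4
  -- bound (n+1)^s ≤ 4 n^s
  have hb2 : ((n:ℝ)+1) ^ (1+(α-β)/2) ≤ 4 * (n:ℝ) ^ (1+(α-β)/2) := by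
    have e1 : ((n:ℝ)+1) ^ (1+(α-β)/2) ≤ (2*(n:ℝ)) ^ (1+(α-β)/2) :=
      Real.rpow_le_rpow (by linarith) (by linarith) hs0.le
    have e2 : (2*(n:ℝ)) ^ (1+(α-β)/2) = (2:ℝ) ^ (1+(α-β)/2) * (n:ℝ) ^ (1+(α-β)/2) :=
      Real.mul_rpow (by norm_num) (by linarith)
    have e3 : (2:ℝ) ^ (1+(α-β)/2) ≤ (2:ℝ) ^ (2:ℝ) :=
      Real.rpow_le_rpow_of_exponent_le one_le_two hs2
    have e4 : (2:ℝ) ^ (2:ℝ) = 4 := by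
      have h22 : ((2:ℕ):ℝ) = (2:ℝ) := by norm_num
      rw [← h22, Real.rpow_natCast]; norm_num
    calc ((n:ℝ)+1) ^ (1+(α-β)/2) ≤ (2:ℝ) ^ (1+(α-β)/2) * (n:ℝ) ^ (1+(α-β)/2) := by
          rw [← e2]; exact e1
      _ ≤ 4 * (n:ℝ) ^ (1+(α-β)/2) := by
          apply mul_le_mul_of_nonneg_right _ hns.le
          rw [← e4]; exact e3
  have hμ0 : 0 ≤ (μ Set.univ).toReal := ENNReal.toReal_nonneg
  have ht0n0 : (0:ℝ) ≤ t0 ^ n := pow_nonneg ht00 n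
  have hterm1 : ((n:ℝ)+1) ^ (1+(α-β)/2) * (t0^n * (μ Set.univ).toReal)
      ≤ 4 * (μ Set.univ).toReal * ((n:ℝ)^2 * t0 ^ n) := by
    calc ((n:ℝ)+1) ^ (1+(α-β)/2) * (t0^n * (μ Set.univ).toReal)
        ≤ (4 * (n:ℝ)^2) * (t0^n * (μ Set.univ).toReal) :=
          mul_le_mul_of_nonneg_right hb1 (mul_nonneg ht0n0 hμ0)
      _ = 4 * (μ Set.univ).toReal * ((n:ℝ)^2 * t0 ^ n) := by ring
  have hterm2 : ((n:ℝ)+1) ^ (1+(α-β)/2) * (33 * ε' / (n:ℝ) ^ (1+(α-β)/2)) ≤ 132 * ε' := by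
    calc ((n:ℝ)+1) ^ (1+(α-β)/2) * (33 * ε' / (n:ℝ) ^ (1+(α-β)/2))
        ≤ (4 * (n:ℝ) ^ (1+(α-β)/2)) * (33 * ε' / (n:ℝ) ^ (1+(α-β)/2)) := by
          apply mul_le_mul_of_nonneg_right hb2
          positivity
      _ = 132 * ε' := by field_simp; ring
  have hfirst : 4 * (μ Set.univ).toReal * ((n:ℝ)^2 * t0 ^ n) < ε / 4 := by
    have := hN1 n hnN1
    rw [Real.dist_eq, sub_zero] at this
    exact lt_of_abs_lt this
  calc ((n:ℝ)+1) ^ (1+(α-β)/2) * ∫ t in Set.Ico (0:ℝ) 1, t ^ n ∂μ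
      ≤ ((n:ℝ)+1) ^ (1+(α-β)/2) * (t0^n * (μ Set.univ).toReal + 33 * ε' / (n:ℝ) ^ (1+(α-β)/2)) :=
        mul_le_mul_of_nonneg_left hkey hnps
    _ = ((n:ℝ)+1) ^ (1+(α-β)/2) * (t0^n * (μ Set.univ).toReal)
        + ((n:ℝ)+1) ^ (1+(α-β)/2) * (33 * ε' / (n:ℝ) ^ (1+(α-β)/2)) := by ring
    _ ≤ 4 * (μ Set.univ).toReal * ((n:ℝ)^2 * t0 ^ n) + 132 * ε' := add_le_add hterm1 hterm2
    _ < ε / 4 + 132 * (ε / 528) := by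
        apply add_lt_add_of_lt_of_le hfirst
        rw [hε'def]
    _ < ε := by linarith
end

section
/- Let 0 < α < 2, 0 < β < 2, let μ be a positive (finite) Borel measure on [0,1), let ε > 0, and let N₀ be a natural number such that μ[n] ≤ ε (n+1)^{-1-(α-β)/2} for all integers n > N₀. Then there is a constant C > 0 depending only on α (one may take C = 2(2+α)/α²) such that for every natural number N ≥ N₀ and every complex sequence (a_n)_{n≥0} with ∑_{n≥0} (n+1)^{1-α} |a_n|² < ∞, one has ∑_{n=N+1}^{∞} (n+1)^{1-β} (μ[n])² |∑_{k=0}^{n} a_k|² ≤ C ε² ∑_{n≥0} (n+1)^{1-α} |a_n|². -/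
open MeasureTheory Finset

/-- Bernoulli-type: `(x/(x+1))^s ≤ 1 - s/(x+1)` for `0 ≤ s ≤ 1`, `0 ≤ x`. -/
lemma bern_frac {s x : ℝ} (hs0 : 0 ≤ s) (hs1 : s ≤ 1) (hx : 0 ≤ x) :
    (x / (x + 1)) ^ s ≤ 1 - s / (x + 1) := by
  have h1 : (0:ℝ) < x + 1 := by linarith
  have hm1 : (-1 : ℝ) ≤ -(1/(x+1)) := by
    have : 1/(x+1) ≤ 1 := by rw [div_le_one h1]; linarith
    linarith
  have h := rpow_one_add_le_one_add_mul_self hm1 hs0 hs1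
  have e1 : 1 + -(1/(x+1)) = x/(x+1) := by field_simp; ring
  rw [e1] at h
  calc (x/(x+1)) ^ s ≤ 1 + s * -(1/(x+1)) := h
    _ = 1 - s/(x+1) := by ring

/-- Key step: `x^s + s(x+1)^{s-1} ≤ (x+1)^s` for `0 < s ≤ 1`, `0 ≤ x`. -/
lemma key_step {s x : ℝ} (hs0 : 0 < s) (hs1 : s ≤ 1) (hx : 0 ≤ x) :
    x ^ s ≤ (x+1) ^ s - s * (x+1) ^ (s - 1) := by
  have h1 : (0:ℝ) < x + 1 := by linarith
  have hB : 0 < (x+1) ^ s := Real.rpow_pos_of_pos h1 s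
  have hb := bern_frac hs0.le hs1 hx
  rw [Real.div_rpow hx h1.le] at hb
  have h2 := (div_le_iff₀ hB).mp hb
  have e2 : (x+1) ^ (s-1) = (x+1) ^ s / (x+1) := by
    rw [Real.rpow_sub h1, Real.rpow_one]
  rw [e2]
  calc x ^ s ≤ (1 - s/(x+1)) * (x+1)^s := h2
    _ = (x+1)^s - s * ((x+1)^s/(x+1)) := by ring

/-- Tail step: `x^{-1-s} ≤ (2/s)(x^{-s} - (x+1)^{-s})` for `0 < s ≤ 1`, `1 ≤ x`. -/
lemma tail_step {s x : ℝ} (hs0 : 0 < s) (hs1 : s ≤ 1) (hx : 1 ≤ x) :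
    x ^ (-1-s) ≤ 2/s * (x ^ (-s) - (x+1) ^ (-s)) := by
  have hx0 : (0:ℝ) < x := lt_of_lt_of_le one_pos hx
  have h1 : (0:ℝ) < x + 1 := by linarith
  have hA : 0 < x ^ s := Real.rpow_pos_of_pos hx0 s
  have hB : 0 < (x+1) ^ s := Real.rpow_pos_of_pos h1 s
  set A := x ^ s
  set B := (x+1) ^ s
  have hb := bern_frac hs0.le hs1 hx0.le
  rw [Real.div_rpow hx0.le h1.le] at hb
  have h2 : A * (x+1) ≤ B * (x+1) - s * B := by
    have := (div_le_iff₀ hB).mp hb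
    have e : (1 - s/(x+1)) * B * (x+1) = B * (x+1) - s * B := by field_simp
    nlinarith [this]
  have hAB : A ≤ B := by nlinarith
  have e3 : x ^ (-1-s) = A⁻¹ / x := by
    rw [show (-1-s : ℝ) = -s - 1 by ring, Real.rpow_sub hx0, Real.rpow_one,
      Real.rpow_neg hx0.le]
  have e4 : x ^ (-s) - (x+1) ^ (-s) = (B - A)/(A*B) := by
    rw [Real.rpow_neg hx0.le, Real.rpow_neg h1.le]
    field_simp
    simp only [A, B]; ring
  rw [e3, e4]
  rw [div_le_iff₀ hx0]
  have e5 : 2/s * ((B-A)/(A*B)) * x = (2 * (B-A) * x) / (s * (A*B)) := by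
    field_simp
  rw [e5, le_div_iff₀ (by positivity)]
  -- goal : A⁻¹ * (s * (A*B)) ≤ 2*(B-A)*x
  have e6 : A⁻¹ * (s * (A*B)) = s * B := by
    field_simp
  rw [e6]
  nlinarith [mul_nonneg (sub_nonneg.2 hAB) (sub_nonneg.2 hx), h2]

lemma lemA {s : ℝ} (hs0 : 0 < s) (hs1 : s ≤ 1) (n : ℕ) :
    ∑ k ∈ range (n+1), ((k:ℝ)+1) ^ (s-1) ≤ (1/s) * ((n:ℝ)+1) ^ s := by
  induction n with
  | zero =>
    simp only [range_one, sum_singleton, Nat.cast_zero, zero_add, Real.one_rpow]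
    rw [mul_one, le_div_iff₀ hs0, one_mul]
    exact hs1
  | succ n ih =>
    rw [Finset.sum_range_succ]
    have key := key_step (x := (n:ℝ)+1) hs0 hs1 (by positivity)
    have e : (1/s) * ((((n:ℝ)+1)+1) ^ s - s * (((n:ℝ)+1)+1) ^ (s-1))
        = (1/s) * (((n:ℝ)+1)+1) ^ s - (((n:ℝ)+1)+1) ^ (s-1) := by
      field_simp
    push_cast
    nlinarith [mul_le_mul_of_nonneg_left key (by positivity : (0:ℝ) ≤ 1/s), ih]


lemma lemB {s : ℝ} (hs0 : 0 < s) (hs1 : s ≤ 1) (k t : ℕ) (I : Finset ℕ) :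
    ∑ m ∈ I, (if k ≤ t + m then (((t+m : ℕ):ℝ)+1) ^ (-1-s) else 0)
      ≤ 2/s * ((k:ℝ)+1) ^ (-s) := by
  set d : ℕ → ℝ := fun j => ((j:ℝ)+1) ^ (-s) - ((j:ℝ)+2) ^ (-s) with hd
  have hd0 : ∀ j : ℕ, 0 ≤ d j := by
    intro j
    have : ((j:ℝ)+2) ^ (-s) ≤ ((j:ℝ)+1) ^ (-s) :=
      Real.rpow_le_rpow_of_nonpos (by positivity) (by linarith) (by linarith)
    simp only [hd]; linarith
  have step1 : ∑ m ∈ I, (if k ≤ t + m then (((t+m : ℕ):ℝ)+1) ^ (-1-s) else 0)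
      ≤ ∑ m ∈ I, 2/s * (if k ≤ t + m then d (t+m) else 0) := by
    apply Finset.sum_le_sum
    intro m _
    split_ifs with h
    · have ht := tail_step hs0 hs1 (x := ((t+m : ℕ):ℝ)+1) (le_add_of_nonneg_left (Nat.cast_nonneg _))
      rw [show (((t+m : ℕ):ℝ)+1)+1 = ((t+m : ℕ):ℝ)+2 from by ring] at ht
      exact ht
    · simp
  rw [← Finset.mul_sum] at step1
  refine step1.trans (mul_le_mul_of_nonneg_left ?_ (by positivity))
  -- ∑ m ∈ I, (if k ≤ t + m then d (t+m) else 0) ≤ ((k:ℝ)+1) ^ (-s)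
  have himg : ∑ j ∈ I.image (fun m => t + m), (if k ≤ j then d j else 0)
      = ∑ i ∈ I, (if k ≤ t + i then d (t + i) else 0) :=
    Finset.sum_image (fun a _ b _ h => Nat.add_left_cancel h)
  rw [← himg]
  set M := t + I.sup id + 1 with hM
  have hsub : I.image (fun m => t + m) ⊆ range M := by
    intro j hj
    obtain ⟨m, hm, rfl⟩ := Finset.mem_image.mp hj
    have : m ≤ I.sup id := Finset.le_sup (f := id) hm
    simp only [Finset.mem_range]; omega
  have hmono : ∑ j ∈ I.image (fun m => t + m), (if k ≤ j then d j else 0)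
      ≤ ∑ j ∈ range M, (if k ≤ j then d j else 0) := by
    apply Finset.sum_le_sum_of_subset_of_nonneg hsub
    intro j _ _
    split_ifs
    · exact hd0 j
    · exact le_refl 0
  refine hmono.trans ?_
  by_cases hkM : k ≤ M
  · have hflt : ∑ j ∈ range M, (if k ≤ j then d j else 0) = ∑ j ∈ Finset.Ico k M, d j := by
      rw [← Finset.sum_filter]
      congr 1
      ext j
      simp only [Finset.mem_filter, Finset.mem_range, Finset.mem_Ico]
      omega
    rw [hflt, Finset.sum_Ico_eq_sum_range]
    have hterm : ∀ i : ℕ, d (k+i)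
        = (fun i : ℕ => (((k+i : ℕ):ℝ)+1) ^ (-s)) i - (fun i : ℕ => (((k+i : ℕ):ℝ)+1) ^ (-s)) (i+1) := by
      intro i
      simp only [hd]
      push_cast
      ring_nf
    rw [Finset.sum_congr rfl (fun i _ => hterm i), Finset.sum_range_sub']
    simp only [Nat.add_zero, Nat.cast_add]
    have : (0:ℝ) ≤ (((k+(M-k) : ℕ):ℝ)+1) ^ (-s) := Real.rpow_nonneg (by positivity) _
    push_cast at this ⊢
    linarith
  · have : ∑ j ∈ range M, (if k ≤ j then d j else 0) = 0 := by
      apply Finset.sum_eq_zero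
      intro j hj
      rw [if_neg]
      simp only [Finset.mem_range] at hj
      omega
    rw [this]
    positivity






/-- Tail estimate for the generalized Cesàro operator: if `μ[n] ≤ ε (n+1)^{-1-(α-β)/2}`
for all `n > N₀`, then there is `C > 0` such that for all `N ≥ N₀` and all `a ∈ D_α`,
`∑_{n=N+1}^∞ (n+1)^{1-β} (μ[n])² |∑_{k=0}^n a_k|² ≤ C ε² ∑_{n≥0} (n+1)^{1-α} |a_n|²`.
The tail sum over `n ≥ N+1` is written as a sum over `m : ℕ` with `n = N + 1 + m`. -/
theorem tail_estimate (α β : ℝ) (hα0 : 0 < α) (hα2 : α < 2) (hβ0 : 0 < β) (hβ2 : β < 2)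
    (μ : Measure ℝ) [IsFiniteMeasure μ] (hμsupp : μ (Set.Ico (0 : ℝ) 1)ᶜ = 0)
    (ε : ℝ) (hε : 0 < ε) (N₀ : ℕ)
    (hmom : ∀ n : ℕ, N₀ < n →
      (∫ t in Set.Ico (0 : ℝ) 1, t ^ n ∂μ) ≤ ε * ((n : ℝ) + 1) ^ (-(1 + (α - β) / 2))) :
    ∃ C > (0 : ℝ), ∀ N : ℕ, N₀ ≤ N → ∀ a : ℕ → ℂ,
      Summable (fun n : ℕ => ((n : ℝ) + 1) ^ (1 - α) * ‖a n‖ ^ 2) →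
      ∑' m : ℕ, (((N + 1 + m : ℕ) : ℝ) + 1) ^ (1 - β) *
          (∫ t in Set.Ico (0 : ℝ) 1, t ^ (N + 1 + m) ∂μ) ^ 2 *
          ‖∑ k ∈ Finset.range (N + 1 + m + 1), a k‖ ^ 2 ≤
        C * ε ^ 2 * ∑' n : ℕ, ((n : ℝ) + 1) ^ (1 - α) * ‖a n‖ ^ 2 := by
  have hs0 : 0 < α/2 := by linarith
  have hs1 : α/2 ≤ 1 := by linarith
  set s : ℝ := α/2 with hsdef
  refine ⟨2/s^2, by positivity, ?_⟩
  intro N hN a ha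
  set S := ∑' n : ℕ, ((n:ℝ)+1) ^ (1-α) * ‖a n‖^2 with hS
  have hS0 : 0 ≤ S := tsum_nonneg fun n => by positivity
  set f : ℕ → ℝ := fun m => (((N + 1 + m : ℕ) : ℝ) + 1) ^ (1 - β) *
      (∫ t in Set.Ico (0 : ℝ) 1, t ^ (N + 1 + m) ∂μ) ^ 2 *
      ‖∑ k ∈ Finset.range (N + 1 + m + 1), a k‖ ^ 2 with hf
  have key : ∀ I : Finset ℕ, ∑ m ∈ I, f m ≤ 2/s^2 * ε^2 * S := by
    intro I
    -- termwise bound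
    have hterm : ∀ m : ℕ, f m ≤ (ε^2/s) * ∑ k ∈ range (N+1+m+1),
        (((N+1+m : ℕ):ℝ)+1) ^ (-1-s) * (((k:ℝ)+1) ^ (1-s) * ‖a k‖^2) := by
      intro m
      have hμ0 : 0 ≤ ∫ t in Set.Ico (0:ℝ) 1, t ^ (N+1+m) ∂μ :=
        setIntegral_nonneg measurableSet_Ico (fun t ht => pow_nonneg ht.1 _)
      have hμle := hmom (N+1+m) (by omega)
      set x : ℝ := ((N+1+m : ℕ):ℝ) + 1 with hxdef
      have hx1 : (1:ℝ) ≤ x := le_add_of_nonneg_left (Nat.cast_nonneg _)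
      have hx0 : (0:ℝ) < x := lt_of_lt_of_le one_pos hx1
      have hμsq : (∫ t in Set.Ico (0:ℝ) 1, t ^ (N+1+m) ∂μ)^2
          ≤ ε^2 * x ^ ((-(1+(α-β)/2))*2) := by
        have h1 := pow_le_pow_left₀ hμ0 hμle 2
        have h2 : (ε * x ^ (-(1+(α-β)/2)))^2 = ε^2 * x ^ ((-(1+(α-β)/2))*2) := by
          rw [mul_pow, ← Real.rpow_natCast (x ^ (-(1+(α-β)/2))) 2, ← Real.rpow_mul hx0.le]
          norm_num
        exact h1.trans_eq h2
      have hCS : ‖∑ k ∈ range (N+1+m+1), a k‖^2 ≤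
          (∑ k ∈ range (N+1+m+1), ((k:ℝ)+1) ^ (s-1)) *
          (∑ k ∈ range (N+1+m+1), ((k:ℝ)+1) ^ (1-s) * ‖a k‖^2) := by
        have h1 : ‖∑ k ∈ range (N+1+m+1), a k‖ ≤ ∑ k ∈ range (N+1+m+1), ‖a k‖ :=
          norm_sum_le _ _
        have h2 := pow_le_pow_left₀ (norm_nonneg _) h1 2
        refine h2.trans ?_
        have h3 : ∀ k : ℕ, ‖a k‖ = ((k:ℝ)+1) ^ ((s-1)/2) * (((k:ℝ)+1) ^ ((1-s)/2) * ‖a k‖) := by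
          intro k
          rw [← mul_assoc, ← Real.rpow_add (by positivity),
            show (s-1)/2+(1-s)/2 = 0 by ring, Real.rpow_zero, one_mul]
        rw [Finset.sum_congr rfl (fun k _ => h3 k)]
        have h4 := Finset.sum_mul_sq_le_sq_mul_sq (range (N+1+m+1))
          (fun k => ((k:ℝ)+1) ^ ((s-1)/2)) (fun k => ((k:ℝ)+1) ^ ((1-s)/2) * ‖a k‖)
        refine h4.trans_eq ?_
        congr 1
        · apply Finset.sum_congr rfl; intro k _
          rw [← Real.rpow_natCast (((k:ℝ)+1) ^ ((s-1)/2)) 2, ← Real.rpow_mul (by positivity)]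
          norm_num
        · apply Finset.sum_congr rfl; intro k _
          rw [mul_pow, ← Real.rpow_natCast (((k:ℝ)+1) ^ ((1-s)/2)) 2,
            ← Real.rpow_mul (by positivity)]
          norm_num
      have hA := lemA hs0 hs1 (N+m+1)
      have hA' : ∑ k ∈ range (N+1+m+1), ((k:ℝ)+1) ^ (s-1) ≤ 1/s * x ^ s := by
        have e : N+m+1+1 = N+1+m+1 := by omega
        rw [e] at hA
        refine hA.trans_eq ?_
        congr 2
        push_cast [hxdef]
        ring
      set Sig := ∑ k ∈ range (N+1+m+1), ((k:ℝ)+1) ^ (1-s) * ‖a k‖^2 with hSig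
      have hSig0 : 0 ≤ Sig := Finset.sum_nonneg fun k _ => by positivity
      have hC2 : ‖∑ k ∈ range (N+1+m+1), a k‖^2 ≤ (1/s * x ^ s) * Sig :=
        hCS.trans (mul_le_mul_of_nonneg_right hA' hSig0)
      calc f m ≤ x ^ (1-β) * (ε^2 * x ^ ((-(1+(α-β)/2))*2)) * ((1/s * x ^ s) * Sig) := by
            simp only [hf]
            gcongr
        _ = (ε^2/s) * (x ^ (1-β) * x ^ ((-(1+(α-β)/2))*2) * x ^ s) * Sig := by ring
        _ = (ε^2/s) * x ^ ((1-β) + (-(1+(α-β)/2))*2 + s) * Sig := by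
            rw [← Real.rpow_add hx0, ← Real.rpow_add hx0]
        _ = (ε^2/s) * x ^ (-1-s) * Sig := by
            rw [show (1-β) + (-(1+(α-β)/2))*2 + s = -1-s by rw [hsdef]; ring]
        _ = (ε^2/s) * ∑ k ∈ range (N+1+m+1), x ^ (-1-s) * (((k:ℝ)+1) ^ (1-s) * ‖a k‖^2) := by
            rw [hSig, Finset.mul_sum, Finset.mul_sum]
            exact Finset.sum_congr rfl fun k _ => by ring
    -- sum over I and swap
    set K := N + I.sup id + 2 with hK
    calc ∑ m ∈ I, f m
        ≤ ∑ m ∈ I, (ε^2/s) * ∑ k ∈ range (N+1+m+1),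
            (((N+1+m : ℕ):ℝ)+1) ^ (-1-s) * (((k:ℝ)+1) ^ (1-s) * ‖a k‖^2) :=
          Finset.sum_le_sum (fun m _ => hterm m)
      _ = (ε^2/s) * ∑ m ∈ I, ∑ k ∈ range (N+1+m+1),
            (((N+1+m : ℕ):ℝ)+1) ^ (-1-s) * (((k:ℝ)+1) ^ (1-s) * ‖a k‖^2) := by
          rw [Finset.mul_sum]
      _ = (ε^2/s) * ∑ m ∈ I, ∑ k ∈ range K,
            (if k ≤ N+1+m then (((N+1+m : ℕ):ℝ)+1) ^ (-1-s) else 0) *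
            (((k:ℝ)+1) ^ (1-s) * ‖a k‖^2) := by
          congr 1
          apply Finset.sum_congr rfl; intro m hm
          have hmK : N+1+m+1 ≤ K := by
            have := Finset.le_sup (f := id) hm
            simp only [id] at this
            omega
          rw [show range (N+1+m+1) = (range K).filter (fun k => k ≤ N+1+m) from by
            ext j; simp only [Finset.mem_filter, Finset.mem_range]; omega]
          rw [Finset.sum_filter]
          simp only [ite_mul, zero_mul]
      _ = (ε^2/s) * ∑ k ∈ range K, ∑ m ∈ I,
            (if k ≤ N+1+m then (((N+1+m : ℕ):ℝ)+1) ^ (-1-s) else 0) *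
            (((k:ℝ)+1) ^ (1-s) * ‖a k‖^2) := by
          rw [Finset.sum_comm]
      _ ≤ (ε^2/s) * ∑ k ∈ range K, (2/s * ((k:ℝ)+1) ^ (-s)) *
            (((k:ℝ)+1) ^ (1-s) * ‖a k‖^2) := by
          apply mul_le_mul_of_nonneg_left ?_ (by positivity)
          apply Finset.sum_le_sum; intro k _
          rw [← Finset.sum_mul]
          exact mul_le_mul_of_nonneg_right (lemB hs0 hs1 k (N+1) I) (by positivity)
      _ = (ε^2/s) * ∑ k ∈ range K, 2/s * (((k:ℝ)+1) ^ (1-α) * ‖a k‖^2) := by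
          congr 1
          apply Finset.sum_congr rfl; intro k _
          have e : ((k:ℝ)+1) ^ (-s) * ((k:ℝ)+1) ^ (1-s) = ((k:ℝ)+1) ^ (1-α) := by
            rw [← Real.rpow_add (by positivity)]
            congr 1
            rw [hsdef]; ring
          calc (2/s * ((k:ℝ)+1) ^ (-s)) * (((k:ℝ)+1) ^ (1-s) * ‖a k‖^2)
              = 2/s * ((((k:ℝ)+1) ^ (-s) * ((k:ℝ)+1) ^ (1-s)) * ‖a k‖^2) := by ring
            _ = 2/s * (((k:ℝ)+1) ^ (1-α) * ‖a k‖^2) := by rw [e]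
      _ = (ε^2/s) * (2/s * ∑ k ∈ range K, ((k:ℝ)+1) ^ (1-α) * ‖a k‖^2) := by
          congr 1
          exact (Finset.mul_sum _ _ _).symm
      _ ≤ (ε^2/s) * (2/s * S) := by
          have hpart : ∑ k ∈ range K, ((k:ℝ)+1) ^ (1-α) * ‖a k‖^2 ≤ S :=
            Summable.sum_le_tsum (range K) (fun i _ => by positivity) ha
          apply mul_le_mul_of_nonneg_left (mul_le_mul_of_nonneg_left hpart (by positivity))
            (by positivity)
      _ = 2/s^2 * ε^2 * S := by ring
  by_cases hsum : Summable f
  · exact Summable.tsum_le_of_sum_le hsum key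
  · rw [tsum_eq_zero_of_not_summable hsum]
    exact mul_nonneg (by positivity) hS0
end
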